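/- arXiv:2304.02864 — 12 statements merged into one kernel-verified Lean document; each statement's English description precedes it below -/
import Mathlib

section
/- Let A and B be vertices of X = J(v,k,i) and let x = |A ∩ B|. Then A and B have a common neighbor in X if and only if x ≥ max{k − Δ, 2i − k}. -/
/-- The generalized Johnson graph `J(v,k,i)`: vertices are the `k`-element subsets of a
`v`-element set, two vertices adjacent iff their intersection has exactly `i` elements. -/
def genJohnsonGraph (v k i : ℕ) :
    SimpleGraph {A : Finset (Fin v) // A.card = k} where
  Adj A B := A ≠ B ∧ (A.1 ∩ B.1).card = i
  symm := by
    constructor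
    rintro A B ⟨hne, hcard⟩
    exact ⟨hne.symm, by rwa [Finset.inter_comm]⟩
  loopless := by constructor; rintro A ⟨hne, -⟩; exact hne rfl

/-- Common Neighbor Condition: vertices `A` and `B` of `J(v,k,i)` have a common neighbor
iff `|A ∩ B| ≥ max {k - Δ, 2i - k}`, where `Δ = v - 2k + 2i`. -/
theorem commonNeighbor_iff (v k i : ℕ) (hik : i < k) (hkv : k < v)
    (h2k : 2 * k ≤ v) (hexc : ¬(v = 2 * k ∧ i = 0))
    (A B : {A : Finset (Fin v) // A.card = k}) :
    (∃ C, (genJohnsonGraph v k i).Adj A C ∧ (genJohnsonGraph v k i).Adj B C) ↔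
      max (k - (v - 2 * k + 2 * i)) (2 * i - k) ≤ (A.1 ∩ B.1).card := by
  have hxk : (A.1 ∩ B.1).card ≤ k := by
    calc (A.1 ∩ B.1).card ≤ A.1.card := Finset.card_le_card Finset.inter_subset_left
    _ = k := A.2
  constructor
  · rintro ⟨C, ⟨hneA, hA⟩, ⟨hneB, hB⟩⟩
    -- hA : (A.1 ∩ C.1).card = i, hB : (B.1 ∩ C.1).card = i
    have h1 : ((A.1 ∩ C.1) ∪ (B.1 ∩ C.1)).card + ((A.1 ∩ C.1) ∩ (B.1 ∩ C.1)).card = i + i := by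
      rw [Finset.card_union_add_card_inter, hA, hB]
    have h2 : ((A.1 ∩ C.1) ∪ (B.1 ∩ C.1)).card ≤ k := by
      calc ((A.1 ∩ C.1) ∪ (B.1 ∩ C.1)).card ≤ C.1.card :=
        Finset.card_le_card (Finset.union_subset Finset.inter_subset_right
          Finset.inter_subset_right)
      _ = k := C.2
    have h3 : ((A.1 ∩ C.1) ∩ (B.1 ∩ C.1)).card ≤ (A.1 ∩ B.1).card := by
      apply Finset.card_le_card
      intro a ha
      simp only [Finset.mem_inter] at ha ⊢
      tauto
    have h4 : (C.1 ∪ (A.1 ∪ B.1)).card ≤ v := by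
      calc (C.1 ∪ (A.1 ∪ B.1)).card ≤ Fintype.card (Fin v) := Finset.card_le_univ _
      _ = v := Fintype.card_fin v
    have h5 : (A.1 ∪ B.1).card + (A.1 ∩ B.1).card = k + k := by
      rw [Finset.card_union_add_card_inter, A.2, B.2]
    have h6 : (C.1 \ (A.1 ∪ B.1)).card + (A.1 ∪ B.1).card = (C.1 ∪ (A.1 ∪ B.1)).card :=
      Finset.card_sdiff_add_card _ _
    have h7 : (C.1 ∩ (A.1 ∪ B.1)).card + (C.1 \ (A.1 ∪ B.1)).card = k := by
      rw [Finset.card_inter_add_card_sdiff, C.2]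
    have h8 : (C.1 ∩ (A.1 ∪ B.1)).card ≤ i + i := by
      have hdist : C.1 ∩ (A.1 ∪ B.1) = (C.1 ∩ A.1) ∪ (C.1 ∩ B.1) :=
        Finset.inter_union_distrib_left _ _ _
      have hca : (C.1 ∩ A.1).card = i := by rw [Finset.inter_comm]; exact hA
      have hcb : (C.1 ∩ B.1).card = i := by rw [Finset.inter_comm]; exact hB
      calc (C.1 ∩ (A.1 ∪ B.1)).card = ((C.1 ∩ A.1) ∪ (C.1 ∩ B.1)).card := by rw [hdist]
      _ ≤ (C.1 ∩ A.1).card + (C.1 ∩ B.1).card := Finset.card_union_le _ _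
      _ = i + i := by rw [hca, hcb]
    simp only [max_le_iff]
    omega
  · intro hx
    rw [max_le_iff] at hx
    obtain ⟨hx1, hx2⟩ := hx
    set x := (A.1 ∩ B.1).card with hxdef
    -- choose the pattern sizes
    obtain ⟨t, ht1, ht2, hti, htx, htd⟩ :
        ∃ t, 2 * i - k ≤ t ∧ i - (k - x) ≤ t ∧ t ≤ i ∧ t ≤ x ∧
          k - (2 * i - t) ≤ v - (2 * k - x) := by
      rcases le_total (2 * i - k) (i - (k - x)) with h | h
      · exact ⟨i - (k - x), by omega, by omega, by omega, by omega, by omega⟩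
      · exact ⟨2 * i - k, by omega, by omega, by omega, by omega, by omega⟩
    have hAB : (A.1 \ B.1).card = k - x := by
      have := Finset.card_inter_add_card_sdiff A.1 B.1
      rw [A.2] at this; omega
    have hBA : (B.1 \ A.1).card = k - x := by
      have := Finset.card_inter_add_card_sdiff B.1 A.1
      rw [B.2, Finset.inter_comm] at this; omega
    have hcompl : ((A.1 ∪ B.1)ᶜ).card = v - (2 * k - x) := by
      have h5 : (A.1 ∪ B.1).card + x = k + k := by
        rw [hxdef, Finset.card_union_add_card_inter, A.2, B.2]
      rw [Finset.card_compl, Fintype.card_fin]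
      omega
    obtain ⟨S1, hS1sub, hS1card⟩ := Finset.exists_subset_card_eq (show t ≤ (A.1 ∩ B.1).card from htx)
    obtain ⟨S2, hS2sub, hS2card⟩ := Finset.exists_subset_card_eq
      (show i - t ≤ (A.1 \ B.1).card by omega)
    obtain ⟨S3, hS3sub, hS3card⟩ := Finset.exists_subset_card_eq
      (show i - t ≤ (B.1 \ A.1).card by omega)
    obtain ⟨S4, hS4sub, hS4card⟩ := Finset.exists_subset_card_eq
      (show k - (2 * i - t) ≤ ((A.1 ∪ B.1)ᶜ).card by omega)
    set C := S1 ∪ S2 ∪ S3 ∪ S4 with hCdef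
    -- membership facts
    have mS1 : ∀ a ∈ S1, a ∈ A.1 ∧ a ∈ B.1 := fun a ha => Finset.mem_inter.1 (hS1sub ha)
    have mS2 : ∀ a ∈ S2, a ∈ A.1 ∧ a ∉ B.1 := fun a ha => Finset.mem_sdiff.1 (hS2sub ha)
    have mS3 : ∀ a ∈ S3, a ∈ B.1 ∧ a ∉ A.1 := fun a ha => Finset.mem_sdiff.1 (hS3sub ha)
    have mS4 : ∀ a ∈ S4, a ∉ A.1 ∧ a ∉ B.1 := by
      intro a ha
      have := hS4sub ha
      rw [Finset.mem_compl, Finset.mem_union] at this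
      tauto
    have d12 : Disjoint S1 S2 := by
      rw [Finset.disjoint_left]; intro a h1 h2; exact (mS2 a h2).2 (mS1 a h1).2
    have d13 : Disjoint S1 S3 := by
      rw [Finset.disjoint_left]; intro a h1 h2; exact (mS3 a h2).2 (mS1 a h1).1
    have d23 : Disjoint S2 S3 := by
      rw [Finset.disjoint_left]; intro a h1 h2; exact (mS3 a h2).2 (mS2 a h1).1
    have d14 : Disjoint S1 S4 := by
      rw [Finset.disjoint_left]; intro a h1 h2; exact (mS4 a h2).1 (mS1 a h1).1
    have d24 : Disjoint S2 S4 := by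
      rw [Finset.disjoint_left]; intro a h1 h2; exact (mS4 a h2).1 (mS2 a h1).1
    have d34 : Disjoint S3 S4 := by
      rw [Finset.disjoint_left]; intro a h1 h2; exact (mS4 a h2).2 (mS3 a h1).1
    have hCcard : C.card = k := by
      rw [hCdef, Finset.card_union_of_disjoint (by
            rw [Finset.disjoint_union_left, Finset.disjoint_union_left]
            exact ⟨⟨d14, d24⟩, d34⟩),
          Finset.card_union_of_disjoint (by
            rw [Finset.disjoint_union_left]
            exact ⟨d13, d23⟩),
          Finset.card_union_of_disjoint d12, hS1card, hS2card, hS3card, hS4card]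
      omega
    have hAC : A.1 ∩ C = S1 ∪ S2 := by
      apply Finset.Subset.antisymm
      · intro a ha
        rw [Finset.mem_inter, hCdef] at ha
        obtain ⟨haA, haC⟩ := ha
        simp only [Finset.mem_union] at haC ⊢
        rcases haC with ((h | h) | h) | h
        · exact Or.inl h
        · exact Or.inr h
        · exact absurd haA (mS3 a h).2
        · exact absurd haA (mS4 a h).1
      · intro a ha
        rw [Finset.mem_union] at ha
        rw [Finset.mem_inter, hCdef]
        simp only [Finset.mem_union]
        rcases ha with h | h
        · exact ⟨(mS1 a h).1, Or.inl (Or.inl (Or.inl h))⟩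
        · exact ⟨(mS2 a h).1, Or.inl (Or.inl (Or.inr h))⟩
    have hBC : B.1 ∩ C = S1 ∪ S3 := by
      apply Finset.Subset.antisymm
      · intro a ha
        rw [Finset.mem_inter, hCdef] at ha
        obtain ⟨haB, haC⟩ := ha
        simp only [Finset.mem_union] at haC ⊢
        rcases haC with ((h | h) | h) | h
        · exact Or.inl h
        · exact absurd haB (mS2 a h).2
        · exact Or.inr h
        · exact absurd haB (mS4 a h).2
      · intro a ha
        rw [Finset.mem_union] at ha
        rw [Finset.mem_inter, hCdef]
        simp only [Finset.mem_union]
        rcases ha with h | h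
        · exact ⟨(mS1 a h).2, Or.inl (Or.inl (Or.inl h))⟩
        · exact ⟨(mS3 a h).1, Or.inl (Or.inr h)⟩
    have hACi : (A.1 ∩ C).card = i := by
      rw [hAC, Finset.card_union_of_disjoint d12, hS1card, hS2card]; omega
    have hBCi : (B.1 ∩ C).card = i := by
      rw [hBC, Finset.card_union_of_disjoint d13, hS1card, hS3card]; omega
    refine ⟨⟨C, hCcard⟩, ⟨?_, hACi⟩, ⟨?_, hBCi⟩⟩
    · intro h
      have hA1 : A.1 = C := congrArg Subtype.val h
      rw [← hA1, Finset.inter_self, A.2] at hACi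
      omega
    · intro h
      have hB1 : B.1 = C := congrArg Subtype.val h
      rw [← hB1, Finset.inter_self, B.2] at hBCi
      omega
end

section
/- The girth of X = J(v,k,i) (the length of a shortest cycle in X) equals 3 if and only if v ≥ 3(k − i). -/
open Finset SimpleGraph

/-- Counting argument: a triangle in `J(v,k,i)` forces `3(k-i) ≤ v`. -/
lemma genJohnson_tri_count {v k i : ℕ} (A B C : Finset (Fin v)) (hA : A.card = k)
    (hB : B.card = k) (hC : C.card = k) (hAB : (A ∩ B).card = i) (hBC : (B ∩ C).card = i)
    (hCA : (C ∩ A).card = i) : 3 * (k - i) ≤ v := by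
  have h1 := Finset.card_union_add_card_inter A B
  have h2 := Finset.card_union_add_card_inter (A ∪ B) C
  have hd : (A ∪ B) ∩ C = (A ∩ C) ∪ (B ∩ C) := Finset.union_inter_distrib_right ..
  have h3 : ((A ∪ B) ∩ C).card ≤ (A ∩ C).card + (B ∩ C).card := by
    rw [hd]; exact Finset.card_union_le _ _
  have hAC : (A ∩ C).card = i := by rwa [Finset.inter_comm]
  have h4 : (A ∪ B ∪ C).card ≤ v := by
    have := Finset.card_le_univ (A ∪ B ∪ C)
    simpa using this
  have hi : i ≤ k := by
    have := Finset.card_le_card (Finset.inter_subset_left : A ∩ B ⊆ A)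
    omega
  omega

/-- Explicit construction of three subsets of `ℕ` with prescribed sizes and intersections. -/
lemma genJohnson_tri_core (x p q : ℕ) :
    ∃ A B C : Finset ℕ,
      (∀ m ∈ A, m < x + 3*p + 3*q) ∧ (∀ m ∈ B, m < x + 3*p + 3*q) ∧
      (∀ m ∈ C, m < x + 3*p + 3*q) ∧
      A.card = x + 2*p + q ∧ B.card = x + 2*p + q ∧ C.card = x + 2*p + q ∧
      (A ∩ B).card = x + p ∧ (B ∩ C).card = x + p ∧ (C ∩ A).card = x + p := by
  refine ⟨Ico 0 (x+p) ∪ Ico (x+2*p) (x+3*p+q),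
         Ico 0 (x+2*p) ∪ Ico (x+3*p+q) (x+3*p+2*q),
         Ico 0 x ∪ Ico (x+p) (x+3*p) ∪ Ico (x+3*p+2*q) (x+3*p+3*q), ?_, ?_, ?_, ?_, ?_, ?_, ?_, ?_, ?_⟩
  · intro m hm; simp [Finset.mem_union, Finset.mem_Ico] at hm; omega
  · intro m hm; simp [Finset.mem_union, Finset.mem_Ico] at hm; omega
  · intro m hm; simp [Finset.mem_union, Finset.mem_Ico] at hm; omega
  · rw [Finset.card_union_of_disjoint (by rw [Finset.disjoint_left]; intro m hm hm'; simp [Finset.mem_Ico] at hm hm'; omega)]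
    simp [Nat.card_Ico]; omega
  · rw [Finset.card_union_of_disjoint (by rw [Finset.disjoint_left]; intro m hm hm'; simp [Finset.mem_Ico] at hm hm'; omega)]
    simp [Nat.card_Ico]; omega
  · rw [Finset.card_union_of_disjoint (by rw [Finset.disjoint_left]; intro m hm hm'; simp [Finset.mem_union, Finset.mem_Ico] at hm hm'; omega),
      Finset.card_union_of_disjoint (by rw [Finset.disjoint_left]; intro m hm hm'; simp [Finset.mem_Ico] at hm hm'; omega)]
    simp [Nat.card_Ico]; omega
  · have : (Ico 0 (x+p) ∪ Ico (x+2*p) (x+3*p+q)) ∩ (Ico 0 (x+2*p) ∪ Ico (x+3*p+q) (x+3*p+2*q)) = Ico 0 (x+p) := by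
      ext n; simp [Finset.mem_union, Finset.mem_inter, Finset.mem_Ico]; omega
    rw [this]; simp [Nat.card_Ico]
  · have : (Ico 0 (x+2*p) ∪ Ico (x+3*p+q) (x+3*p+2*q)) ∩ (Ico 0 x ∪ Ico (x+p) (x+3*p) ∪ Ico (x+3*p+2*q) (x+3*p+3*q)) = Ico 0 x ∪ Ico (x+p) (x+2*p) := by
      ext n; simp [Finset.mem_union, Finset.mem_inter, Finset.mem_Ico]; omega
    rw [this, Finset.card_union_of_disjoint (by rw [Finset.disjoint_left]; intro m hm hm'; simp [Finset.mem_Ico] at hm hm'; omega)]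
    simp [Nat.card_Ico]; omega
  · have : (Ico 0 x ∪ Ico (x+p) (x+3*p) ∪ Ico (x+3*p+2*q) (x+3*p+3*q)) ∩ (Ico 0 (x+p) ∪ Ico (x+2*p) (x+3*p+q)) = Ico 0 x ∪ Ico (x+2*p) (x+3*p) := by
      ext n; simp [Finset.mem_union, Finset.mem_inter, Finset.mem_Ico]; omega
    rw [this, Finset.card_union_of_disjoint (by rw [Finset.disjoint_left]; intro m hm hm'; simp [Finset.mem_Ico] at hm hm'; omega)]
    simp [Nat.card_Ico]; omega

/-- A triangle in `J(v,k,i)` gives girth exactly 3. -/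
lemma genJohnson_girth_of_triangle (v k i : ℕ)
    (a b c : {A : Finset (Fin v) // A.card = k})
    (hab : (genJohnsonGraph v k i).Adj a b) (hbc : (genJohnsonGraph v k i).Adj b c)
    (hca : (genJohnsonGraph v k i).Adj c a) : (genJohnsonGraph v k i).girth = 3 := by
  have hnab : a ≠ b := hab.ne
  have hnbc : b ≠ c := hbc.ne
  have hnca : c ≠ a := hca.ne
  let w : (genJohnsonGraph v k i).Walk a a :=
    Walk.cons hab (Walk.cons hbc (Walk.cons hca Walk.nil))
  have ht : w.IsTrail := by
    rw [Walk.isTrail_def]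
    simp only [w, Walk.edges_cons, Walk.edges_nil, List.nodup_cons, List.mem_cons,
      List.not_mem_nil, or_false, List.mem_singleton, List.nodup_nil, and_true, Sym2.eq_iff]
    tauto
  have hcyc : w.IsCycle := by
    constructor
    · exact ⟨ht, by simp [w]⟩
    · simp only [w, Walk.support_cons, Walk.support_nil, List.tail_cons, List.nodup_cons,
        List.mem_cons, List.not_mem_nil, or_false, List.mem_singleton, List.nodup_nil, and_true]
      tauto
  have hle : (genJohnsonGraph v k i).egirth ≤ (w.length : ℕ∞) := by
    rw [egirth]
    exact iInf₂_le_of_le a w (iInf_le _ hcyc)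
  have heq : (genJohnsonGraph v k i).egirth = 3 := by
    refine le_antisymm ?_ three_le_egirth
    simpa [w] using hle
  simp [girth, heq]

/-- The girth of `J(v,k,i)` equals 3 iff `v ≥ 3(k - i)`. -/
theorem girth_eq_three_iff (v k i : ℕ) (hik : i < k) (hkv : k < v)
    (h2k : 2 * k ≤ v) (hexc : ¬(v = 2 * k ∧ i = 0)) :
    (genJohnsonGraph v k i).girth = 3 ↔ 3 * (k - i) ≤ v := by
  constructor
  · intro hg
    have hna : ¬(genJohnsonGraph v k i).IsAcyclic := by
      intro h
      rw [← girth_eq_zero] at h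
      omega
    obtain ⟨a, w, hw, hlen⟩ := exists_girth_eq_length.mpr hna
    have hlen3 : w.length = 3 := by omega
    have h1 : (genJohnsonGraph v k i).Adj a (w.getVert 1) := by
      have := w.adj_getVert_succ (i := 0) (by omega)
      simpa using this
    have h2 : (genJohnsonGraph v k i).Adj (w.getVert 1) (w.getVert 2) :=
      w.adj_getVert_succ (i := 1) (by omega)
    have h3 : (genJohnsonGraph v k i).Adj (w.getVert 2) a := by
      have := w.adj_getVert_succ (i := 2) (by omega)
      have h3' : w.getVert 3 = a := by
        have := w.getVert_length
        rwa [hlen3] at this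
      rwa [h3'] at this
    exact genJohnson_tri_count a.1 (w.getVert 1).1 (w.getVert 2).1 a.2 (w.getVert 1).2
      (w.getVert 2).2 h1.2 h2.2 h3.2
  · intro h3
    obtain ⟨x, p, q, hx1, hx2, hx3⟩ :
        ∃ x p q : ℕ, x + p = i ∧ x + 2*p + q = k ∧ x + 3*p + 3*q ≤ v := by
      rcases le_total (2*i) k with h | h
      · exact ⟨0, i, k - 2*i, by omega, by omega, by omega⟩
      · exact ⟨2*i - k, k - i, 0, by omega, by omega, by omega⟩
    obtain ⟨A₀, B₀, C₀, hAv, hBv, hCv, hAc, hBc, hCc, hABc, hBCc, hCAc⟩ :=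
      genJohnson_tri_core x p q
    have hbound : ∀ (S : Finset ℕ), (∀ m ∈ S, m < x + 3*p + 3*q) → ∀ m ∈ S, m < v :=
      fun S hS m hm => lt_of_lt_of_le (hS m hm) hx3
    set A : Finset (Fin v) := A₀.attachFin (hbound A₀ hAv) with hAdef
    set B : Finset (Fin v) := B₀.attachFin (hbound B₀ hBv) with hBdef
    set C : Finset (Fin v) := C₀.attachFin (hbound C₀ hCv) with hCdef
    have hinter : ∀ (S T : Finset ℕ) (hS : ∀ m ∈ S, m < v) (hT : ∀ m ∈ T, m < v),
        S.attachFin hS ∩ T.attachFin hT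
          = (S ∩ T).attachFin (fun m hm => hS m (Finset.mem_of_mem_inter_left hm)) := by
      intro S T hS hT
      ext a
      simp [Finset.mem_attachFin, Finset.mem_inter]
    have hA : A.card = k := by rw [hAdef, Finset.card_attachFin]; omega
    have hB : B.card = k := by rw [hBdef, Finset.card_attachFin]; omega
    have hC : C.card = k := by rw [hCdef, Finset.card_attachFin]; omega
    have hAB : (A ∩ B).card = i := by
      rw [hAdef, hBdef, hinter, Finset.card_attachFin]; omega
    have hBC : (B ∩ C).card = i := by
      rw [hBdef, hCdef, hinter, Finset.card_attachFin]; omega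
    have hCA : (C ∩ A).card = i := by
      rw [hCdef, hAdef, hinter, Finset.card_attachFin]; omega
    have hne : ∀ (S T : Finset (Fin v)), S.card = k → (S ∩ T).card = i → S ≠ T := by
      intro S T hS hST hEq
      rw [hEq, Finset.inter_self] at hST
      rw [hEq] at hS
      omega
    exact genJohnson_girth_of_triangle v k i ⟨A, hA⟩ ⟨B, hB⟩ ⟨C, hC⟩
      ⟨fun h => hne A B hA hAB (congrArg Subtype.val h), hAB⟩
      ⟨fun h => hne B C hB hBC (congrArg Subtype.val h), hBC⟩
      ⟨fun h => hne C A hC hCA (congrArg Subtype.val h), hCA⟩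
end

section
/- If (v,k,i) ≠ (2k+1,k,0), then the girth of X = J(v,k,i) is at most 4; that is, X contains a cycle of length 3 or 4. -/
open Finset

lemma myGirth_le_of_cycle {V : Type*} {G : SimpleGraph V} {a : V} {w : G.Walk a a}
    (hw : w.IsCycle) : G.girth ≤ w.length := by
  have h : G.egirth ≤ (w.length : ℕ∞) := by
    rw [SimpleGraph.egirth]
    exact iInf_le_of_le a (iInf_le_of_le w (iInf_le_of_le hw le_rfl))
  calc G.girth = G.egirth.toNat := rfl
    _ ≤ (w.length : ℕ∞).toNat := ENat.toNat_le_toNat h (by simp)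
    _ = w.length := by simp

lemma myCycle4 {V : Type*} {G : SimpleGraph V} {A B C D : V}
    (hAB : G.Adj A B) (hBC : G.Adj B C) (hCD : G.Adj C D) (hDA : G.Adj D A)
    (hAC : A ≠ C) (hBD : B ≠ D) :
    ∃ w : G.Walk A A, w.IsCycle ∧ w.length = 4 := by
  refine ⟨.cons hAB (.cons hBC (.cons hCD (.cons hDA .nil))), ?_, rfl⟩
  have h1 := hAB.ne; have h2 := hBC.ne; have h3 := hCD.ne; have h4 := hDA.ne
  simp [SimpleGraph.Walk.isCycle_def, SimpleGraph.Walk.isTrail_def, List.Nodup,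
    Sym2.eq, Sym2.rel_iff']
  aesop

lemma johnson_cycle4 {v k i : ℕ} (hik : i < k)
    {A B C D : Finset (Fin v)}
    (hA : A.card = k) (hB : B.card = k) (hC : C.card = k) (hD : D.card = k)
    (h1 : (A ∩ B).card = i) (h2 : (B ∩ C).card = i) (h3 : (C ∩ D).card = i)
    (h4 : (D ∩ A).card = i) (hAC : A ≠ C) (hBD : B ≠ D) :
    (genJohnsonGraph v k i).girth ≤ 4 ∧
      ∃ (A : {A : Finset (Fin v) // A.card = k})
        (c : (genJohnsonGraph v k i).Walk A A),
        c.IsCycle ∧ (c.length = 3 ∨ c.length = 4) := by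
  have ne : ∀ (X Y : Finset (Fin v)), X.card = k → (X ∩ Y).card = i → X ≠ Y := by
    intro X Y hX hXY h
    subst h; rw [Finset.inter_self] at hXY; omega
  have sne : ∀ {X Y : Finset (Fin v)} {hX : X.card = k} {hY : Y.card = k},
      X ≠ Y → (⟨X, hX⟩ : {A : Finset (Fin v) // A.card = k}) ≠ ⟨Y, hY⟩ :=
    fun h h' => h (congrArg Subtype.val h')
  have aAB : (genJohnsonGraph v k i).Adj ⟨A, hA⟩ ⟨B, hB⟩ := ⟨sne (ne _ _ hA h1), h1⟩
  have aBC : (genJohnsonGraph v k i).Adj ⟨B, hB⟩ ⟨C, hC⟩ := ⟨sne (ne _ _ hB h2), h2⟩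
  have aCD : (genJohnsonGraph v k i).Adj ⟨C, hC⟩ ⟨D, hD⟩ := ⟨sne (ne _ _ hC h3), h3⟩
  have aDA : (genJohnsonGraph v k i).Adj ⟨D, hD⟩ ⟨A, hA⟩ := ⟨sne (ne _ _ hD h4), h4⟩
  obtain ⟨w, hw, hl⟩ := myCycle4 aAB aBC aCD aDA (sne hAC) (sne hBD)
  exact ⟨le_trans (myGirth_le_of_cycle hw) (by rw [hl]),
    ⟨_, w, hw, Or.inr hl⟩⟩

/-- If `(v,k,i) ≠ (2k+1,k,0)`, then the girth of `J(v,k,i)` is at most 4: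
`X` contains a cycle of length 3 or 4. -/
theorem girth_le_four (v k i : ℕ) (hik : i < k) (hkv : k < v)
    (h2k : 2 * k ≤ v) (hexc : ¬(v = 2 * k ∧ i = 0))
    (hodd : ¬(v = 2 * k + 1 ∧ i = 0)) :
    (genJohnsonGraph v k i).girth ≤ 4 ∧
      ∃ (A : {A : Finset (Fin v) // A.card = k})
        (c : (genJohnsonGraph v k i).Walk A A),
        c.IsCycle ∧ (c.length = 3 ∨ c.length = 4) := by
  have hcardUniv : (univ : Finset (Fin v)).card = v := by simp
  obtain ⟨A, -, hA⟩ := Finset.exists_subset_card_eq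
    (show k ≤ (univ : Finset (Fin v)).card by omega)
  by_cases hi1 : i = 1
  · -- special construction for i = 1, using only v ≥ 2k
    subst hi1
    -- pick a ≠ p in A
    obtain ⟨a, p, haA, hpA, hap⟩ := Finset.one_lt_card_iff.mp (by omega : 1 < A.card)
    set P : Finset (Fin v) := (A.erase a).erase p with hPdef
    have hPcard : P.card = k - 2 := by
      rw [hPdef, card_erase_of_mem (mem_erase.mpr ⟨Ne.symm hap, hpA⟩),
        card_erase_of_mem haA, hA]
      omega
    have hPA : ∀ z, z ∈ P → z ∈ A := fun z hz =>
      mem_of_mem_erase (mem_of_mem_erase hz)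
    have haP : a ∉ P := fun h => (mem_erase.mp (mem_of_mem_erase h)).1 rfl
    have hpP : p ∉ P := fun h => (mem_erase.mp h).1 rfl
    -- complement
    have hAc : Aᶜ.card = v - k := by rw [card_compl, hA]; simp
    obtain ⟨q, r, hq, hr, hqr⟩ := Finset.one_lt_card_iff.mp
      (by omega : 1 < Aᶜ.card)
    have hqA : q ∉ A := mem_compl.mp hq
    have hrA : r ∉ A := mem_compl.mp hr
    set Ac2 : Finset (Fin v) := (Aᶜ.erase q).erase r with hQ0
    obtain ⟨Q, hQsub, hQcard⟩ := Finset.exists_subset_card_eq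
      (show k - 2 ≤ Ac2.card by
        rw [hQ0, card_erase_of_mem (mem_erase.mpr ⟨Ne.symm hqr, hr⟩),
          card_erase_of_mem hq, hAc]
        omega)
    have hQA : ∀ z, z ∈ Q → z ∉ A := fun z hz =>
      mem_compl.mp (mem_of_mem_erase (mem_of_mem_erase (hQsub hz)))
    have hqQ : q ∉ Q := fun h => (mem_erase.mp (mem_of_mem_erase (hQsub h))).1 rfl
    have hrQ : r ∉ Q := fun h => (mem_erase.mp (hQsub h)).1 rfl
    have haq : a ≠ q := fun h => hqA (h ▸ haA)
    have har : a ≠ r := fun h => hrA (h ▸ haA)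
    have hpq : p ≠ q := fun h => hqA (h ▸ hpA)
    have hpr : p ≠ r := fun h => hrA (h ▸ hpA)
    -- the four vertices
    set B : Finset (Fin v) := insert a (insert q Q) with hBdef
    set C : Finset (Fin v) := insert q (insert r P) with hCdef
    set D : Finset (Fin v) := insert a (insert r Q) with hDdef
    have hApr : A = insert a (insert p P) := by
      rw [hPdef]
      rw [insert_erase (mem_erase.mpr ⟨Ne.symm hap, hpA⟩), insert_erase haA]
    have hBcard : B.card = k := by
      rw [hBdef, card_insert_of_notMem (by
          simp only [mem_insert]; push_neg; exact ⟨haq, fun h => hQA a h haA⟩),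
        card_insert_of_notMem hqQ, hQcard]
      omega
    have hCcard : C.card = k := by
      rw [hCdef, card_insert_of_notMem (by
          simp only [mem_insert]; push_neg; exact ⟨hqr, fun h => hqA (hPA q h)⟩),
        card_insert_of_notMem (show r ∉ P from
          fun h => hrA (hPA r h)),
        hPcard]
      omega
    have hDcard : D.card = k := by
      rw [hDdef, card_insert_of_notMem (by
          simp only [mem_insert]; push_neg; exact ⟨har, fun h => hQA a h haA⟩),
        card_insert_of_notMem hrQ, hQcard]
      omega
    have IAB : A ∩ B = {a} := by
      ext z
      simp only [hBdef, mem_inter, mem_insert, mem_singleton]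
      constructor
      · rintro ⟨hzA, rfl | rfl | hzQ⟩
        · rfl
        · exact absurd hzA hqA
        · exact absurd hzA (hQA z hzQ)
      · rintro rfl; exact ⟨haA, Or.inl rfl⟩
    have IBC : B ∩ C = {q} := by
      ext z
      simp only [hBdef, hCdef, mem_inter, mem_insert, mem_singleton]
      constructor
      · rintro ⟨rfl | rfl | hzQ, h2⟩
        · rcases h2 with rfl | rfl | h
          · exact absurd rfl haq
          · exact absurd rfl har
          · exact absurd (hPA _ h) (fun hh => False.elim (haP h))
        · rfl
        · rcases h2 with rfl | rfl | h
          · exact absurd hzQ hqQ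
          · exact absurd hzQ hrQ
          · exact absurd (hPA _ h) (hQA _ hzQ)
      · rintro rfl; exact ⟨Or.inr (Or.inl rfl), Or.inl rfl⟩
    have ICD : C ∩ D = {r} := by
      ext z
      simp only [hCdef, hDdef, mem_inter, mem_insert, mem_singleton]
      constructor
      · rintro ⟨h1, h2⟩
        rcases h1 with rfl | rfl | h
        · rcases h2 with rfl | rfl | hq2
          · exact absurd rfl haq.symm
          · exact absurd rfl hqr
          · exact absurd hq2 hqQ
        · rfl
        · rcases h2 with rfl | rfl | hq2
          · exact absurd (hPA _ h) (fun _ => haP h)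
          · exact absurd (hPA _ h) hrA
          · exact absurd (hPA _ h) (hQA _ hq2)
      · rintro rfl; exact ⟨Or.inr (Or.inl rfl), Or.inr (Or.inl rfl)⟩
    have IDA : D ∩ A = {a} := by
      ext z
      simp only [hDdef, mem_inter, mem_insert, mem_singleton]
      constructor
      · rintro ⟨rfl | rfl | hzQ, hzA⟩
        · rfl
        · exact absurd hzA hrA
        · exact absurd hzA (hQA _ hzQ)
      · rintro rfl; exact ⟨Or.inl rfl, haA⟩
    have hACne : A ≠ C := fun h => hqA (h ▸ (mem_insert_self q _ : q ∈ C))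
    have hBDne : B ≠ D := by
      intro h
      have : q ∈ D := h ▸ (mem_insert.mpr (Or.inr (mem_insert_self q Q)))
      rcases mem_insert.mp this with h' | h'
      · exact haq h'.symm
      · rcases mem_insert.mp h' with h'' | h''
        · exact hqr h''
        · exact hqQ h''
    exact johnson_cycle4 hik hA hBcard hCcard hDcard
      (by rw [IAB, card_singleton]) (by rw [IBC, card_singleton])
      (by rw [ICD, card_singleton]) (by rw [IDA, card_singleton]) hACne hBDne
  · -- main construction: needs 2k + 2 ≤ v + i
    have hv : 2 * k + 2 ≤ v + i := by
      rcases Nat.eq_zero_or_pos i with h0 | hpos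
      · subst h0; omega
      · have : 2 ≤ i := by omega
        omega
    obtain ⟨S, hSA, hS⟩ := Finset.exists_subset_card_eq (show i ≤ A.card by omega)
    have hAc : Aᶜ.card = v - k := by rw [card_compl, hA]; simp
    obtain ⟨T, hTAc, hT⟩ := Finset.exists_subset_card_eq
      (show k - i ≤ Aᶜ.card by omega)
    have hTA : ∀ z, z ∈ T → z ∉ A := fun z hz => mem_compl.mp (hTAc hz)
    have hSA' : ∀ z, z ∈ S → z ∈ A := fun z hz => hSA hz
    -- two fresh points
    have hRcard : (Aᶜ \ T).card = v - k - (k - i) := by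
      rw [card_sdiff_of_subset hTAc, hAc, hT]
    obtain ⟨x, y, hx, hy, hxy⟩ := Finset.one_lt_card_iff.mp
      (by rw [hRcard]; omega : 1 < (Aᶜ \ T).card)
    have hxA : x ∉ A := mem_compl.mp (mem_sdiff.mp hx).1
    have hxT : x ∉ T := (mem_sdiff.mp hx).2
    have hyA : y ∉ A := mem_compl.mp (mem_sdiff.mp hy).1
    have hyT : y ∉ T := (mem_sdiff.mp hy).2
    -- a ∈ A \ S, t ∈ T
    obtain ⟨a, ha⟩ := Finset.card_pos.mp
      (by rw [card_sdiff_of_subset hSA, hA, hS]; omega : 0 < (A \ S).card)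
    have haA : a ∈ A := (mem_sdiff.mp ha).1
    have haS : a ∉ S := (mem_sdiff.mp ha).2
    obtain ⟨t, ht⟩ := Finset.card_pos.mp (by rw [hT]; omega : 0 < T.card)
    have htA : t ∉ A := hTA t ht
    have htS : t ∉ S := fun h => htA (hSA' t h)
    set B : Finset (Fin v) := S ∪ T with hBdef
    set C : Finset (Fin v) := insert x (A.erase a) with hCdef
    set D : Finset (Fin v) := insert y (B.erase t) with hDdef
    have hdisjST : Disjoint S T := disjoint_left.mpr fun z hz hz' => hTA z hz' (hSA' z hz)
    have hBcard : B.card = k := by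
      rw [hBdef, card_union_of_disjoint hdisjST, hS, hT]; omega
    have hCcard : C.card = k := by
      rw [hCdef, card_insert_of_notMem (fun h => hxA (mem_of_mem_erase h)),
        card_erase_of_mem haA, hA]
      omega
    have htB : t ∈ B := mem_union_right _ ht
    have hyB : y ∉ B := by
      rw [hBdef, mem_union]; push_neg; exact ⟨fun h => hyA (hSA' y h), hyT⟩
    have hxB : x ∉ B := by
      rw [hBdef, mem_union]; push_neg; exact ⟨fun h => hxA (hSA' x h), hxT⟩
    have hDcard : D.card = k := by
      rw [hDdef, card_insert_of_notMem (fun h => hyB (mem_of_mem_erase h)),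
        card_erase_of_mem htB, hBcard]
      omega
    have IAB : A ∩ B = S := by
      ext z
      simp only [hBdef, mem_inter, mem_union]
      constructor
      · rintro ⟨hzA, hz | hz⟩
        · exact hz
        · exact absurd hzA (hTA z hz)
      · intro hz; exact ⟨hSA' z hz, Or.inl hz⟩
    have IBC : B ∩ C = S := by
      rw [hCdef, inter_insert_of_notMem hxB, inter_erase, inter_comm, IAB,
        erase_eq_of_notMem haS]
    have ICD : C ∩ D = S := by
      have hyC : y ∉ C := by
        rw [hCdef, mem_insert]; push_neg
        exact ⟨fun h => hxy (h.symm ▸ rfl), fun h => hyA (mem_of_mem_erase h)⟩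
      rw [hDdef, inter_insert_of_notMem hyC, inter_erase, inter_comm, IBC,
        erase_eq_of_notMem htS]
    have IDA : D ∩ A = S := by
      rw [hDdef, insert_inter_of_notMem hyA, erase_inter, inter_comm, IAB,
        erase_eq_of_notMem htS]
    have hACne : A ≠ C := fun h => hxA (h ▸ (mem_insert_self x _ : x ∈ C))
    have hBDne : B ≠ D := fun h => hyB (h ▸ (mem_insert_self y _ : y ∈ D))
    exact johnson_cycle4 hik hA hBcard hCcard hDcard
      (by rw [IAB, hS]) (by rw [IBC, hS]) (by rw [ICD, hS]) (by rw [IDA, hS])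
      hACne hBDne
end

section
/- Let A and B be vertices of X = J(v,k,i) and let x = |A ∩ B|. If there is a walk of even length 2p from A to B in X, then p ≥ ⌈(k − x)/Δ⌉. -/
lemma walk_inter_bound (v k i : ℕ) (hik : i < k) (h2k : 2 * k ≤ v)
    {C B : {A : Finset (Fin v) // A.card = k}} (w : (genJohnsonGraph v k i).Walk C B) :
    (∀ m, w.length = 2 * m → k ≤ (C.1 ∩ B.1).card + m * (v - 2 * k + 2 * i)) ∧
    (∀ m, w.length = 2 * m + 1 →
      k ≤ (B.1 \ C.1).card + i + m * (v - 2 * k + 2 * i)) := by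
  induction w with
  | nil =>
    constructor
    · intro m hm
      simp only [SimpleGraph.Walk.length_nil] at hm
      have hm0 : m = 0 := by omega
      subst hm0
      rename_i u
      simp [Finset.inter_self, u.2]
    · intro m hm
      simp only [SimpleGraph.Walk.length_nil] at hm
      omega
  | @cons C D B h w' ih =>
    have hCD : (C.1 ∩ D.1).card = i := h.2
    constructor
    · -- even case: length = 2*m, so w'.length = 2*(m-1)+1
      intro m hm
      simp only [SimpleGraph.Walk.length_cons] at hm
      obtain ⟨n, rfl⟩ : ∃ n, m = n + 1 := by
        rcases m with _ | n
        · omega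
        · exact ⟨n, rfl⟩
      have hodd := ih.2 n (by omega)
      -- key combinatorial facts
      have hsd : (C.1 \ D.1).card + (C.1 ∩ D.1).card = C.1.card :=
        Finset.card_sdiff_add_card_inter _ _
      have hsub : (B.1 \ D.1) ∪ (C.1 \ D.1) ⊆ Finset.univ \ D.1 := by
        intro x hx
        simp only [Finset.mem_union, Finset.mem_sdiff, Finset.mem_univ, true_and] at hx ⊢
        tauto
      have hcompl : (Finset.univ \ D.1).card = v - k := by
        rw [Finset.card_sdiff_of_subset (Finset.subset_univ _)]
        simp [D.2]
      have hle : ((B.1 \ D.1) ∪ (C.1 \ D.1)).card ≤ v - k := by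
        rw [← hcompl]; exact Finset.card_le_card hsub
      have hiu : ((B.1 \ D.1) ∪ (C.1 \ D.1)).card + ((B.1 \ D.1) ∩ (C.1 \ D.1)).card
          = (B.1 \ D.1).card + (C.1 \ D.1).card :=
        Finset.card_union_add_card_inter _ _
      have hss : (B.1 \ D.1) ∩ (C.1 \ D.1) ⊆ C.1 ∩ B.1 := by
        intro x hx
        simp only [Finset.mem_inter, Finset.mem_sdiff] at hx ⊢
        tauto
      have hss' : ((B.1 \ D.1) ∩ (C.1 \ D.1)).card ≤ (C.1 ∩ B.1).card :=
        Finset.card_le_card hss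
      have hCk : C.1.card = k := C.2
      have hΔ : n * (v - 2 * k + 2 * i) + (v - 2 * k + 2 * i)
          = (n + 1) * (v - 2 * k + 2 * i) := by ring
      omega
    · -- odd case: length = 2*m+1, so w'.length = 2*m
      intro m hm
      simp only [SimpleGraph.Walk.length_cons] at hm
      have heven := ih.1 m (by omega)
      have hDC : (D.1 ∩ C.1).card = i := by rwa [Finset.inter_comm]
      have hsub : D.1 ∩ B.1 ⊆ (D.1 ∩ C.1) ∪ (B.1 \ C.1) := by
        intro x hx
        simp only [Finset.mem_inter, Finset.mem_union, Finset.mem_sdiff] at hx ⊢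
        by_cases hc : x ∈ C.1 <;> tauto
      have hle : (D.1 ∩ B.1).card ≤ (D.1 ∩ C.1).card + (B.1 \ C.1).card :=
        (Finset.card_le_card hsub).trans (Finset.card_union_le _ _)
      omega

/-- If there is a walk of even length `2p` from `A` to `B` in `J(v,k,i)`,
then `p ≥ ⌈(k - x)/Δ⌉` where `x = |A ∩ B|`. -/
theorem even_walk_bound (v k i : ℕ) (hik : i < k) (hkv : k < v)
    (h2k : 2 * k ≤ v) (hexc : ¬(v = 2 * k ∧ i = 0))
    (A B : {A : Finset (Fin v) // A.card = k}) (p : ℕ)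
    (w : (genJohnsonGraph v k i).Walk A B) (hw : w.length = 2 * p) :
    (k - (A.1 ∩ B.1).card) ⌈/⌉ (v - 2 * k + 2 * i) ≤ p := by
  have hΔ : 0 < v - 2 * k + 2 * i := by omega
  have hb := (walk_inter_bound v k i hik h2k w).1 p hw
  rw [ceilDiv_le_iff_le_mul hΔ]
  -- k ≤ card + p*Δ  ⟹  k - card ≤ Δ * p
  have := Nat.mul_comm p (v - 2 * k + 2 * i)
  omega
end

section
/- Let A and B be vertices of X = J(v,k,i) and let x = |A ∩ B|. If x > i, then the distance between A and B in X equals min{2⌈(k − x)/Δ⌉, 2⌈(x − i)/Δ⌉ + 1}. -/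
open Finset SimpleGraph

section Aux

variable {α : Type*} [Fintype α] [DecidableEq α]

lemma sum_inter_le (B C D : Finset α) :
    (B ∩ C).card + (B ∩ D).card ≤ B.card + (C ∩ D).card := by
  calc (B ∩ C).card + (B ∩ D).card
      = ((B ∩ C) ∪ (B ∩ D)).card + ((B ∩ C) ∩ (B ∩ D)).card :=
        (card_union_add_card_inter _ _).symm
    _ ≤ B.card + (C ∩ D).card := by
        refine Nat.add_le_add (card_le_card ?_) (card_le_card ?_)
        · intro x hx; simp only [mem_union, mem_inter] at hx ⊢; tauto
        · intro x hx; simp only [mem_inter] at hx ⊢; tauto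

lemma sum_inter_ge (B C D : Finset α) :
    B.card + (C ∪ D).card ≤ (B ∩ C).card + (B ∩ D).card + Fintype.card α := by
  have h1 : (B ∩ (C ∪ D)).card + (B \ (C ∪ D)).card = B.card :=
    card_inter_add_card_sdiff _ _
  have h2 : (B ∩ (C ∪ D)).card ≤ (B ∩ C).card + (B ∩ D).card := by
    rw [inter_union_distrib_left]; exact card_union_le _ _
  have h3 : (B \ (C ∪ D)).card ≤ Fintype.card α - (C ∪ D).card := by
    rw [← card_compl]
    exact card_le_card fun x hx => by
      simp only [mem_sdiff, mem_compl] at hx ⊢; tauto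
  have h4 : (C ∪ D).card ≤ Fintype.card α := card_le_univ _
  omega

end Aux

lemma walk_parity {v k i : ℕ} (h2k : 2 * k ≤ v)
    {B C : {A : Finset (Fin v) // A.card = k}}
    (p : (genJohnsonGraph v k i).Walk C B) :
    (∀ m, p.length = 2 * m → k ≤ (B.1 ∩ C.1).card + m * (v - 2 * k + 2 * i)) ∧
    (∀ m, p.length = 2 * m + 1 → (B.1 ∩ C.1).card ≤ i + m * (v - 2 * k + 2 * i)) := by
  induction p with
  | @nil u =>
    constructor
    · intro m hm
      simp only [Walk.length_nil] at hm
      have : (u.1 ∩ u.1).card = k := by rw [inter_self]; exact u.2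
      omega
    · intro m hm
      simp only [Walk.length_nil] at hm
      omega
  | @cons C C1 B' h p ih =>
    obtain ⟨hne, hadj⟩ := h
    constructor
    · intro m hm
      change p.length + 1 = _ at hm
      obtain ⟨m', rfl⟩ : ∃ m', m = m' + 1 := ⟨m - 1, by omega⟩
      have h1 := ih.2 m' (by omega)
      have h2 := sum_inter_ge B'.1 C.1 C1.1
      have h3 : (C.1 ∪ C1.1).card + i = k + k := by
        rw [← hadj, card_union_add_card_inter, C.2, C1.2]
      have h4 : (m' + 1) * (v - 2 * k + 2 * i)
          = m' * (v - 2 * k + 2 * i) + (v - 2 * k + 2 * i) := by ring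
      have h5 : Fintype.card (Fin v) = v := Fintype.card_fin v
      omega
    · intro m hm
      change p.length + 1 = _ at hm
      have h1 := ih.1 m (by omega)
      have h2 := sum_inter_le B'.1 C.1 C1.1
      rw [hadj, B'.2] at h2
      omega

lemma exists_common_nbr {v k i : ℕ} (hik : i < k) (h2k : 2 * k ≤ v)
    {C C' : Finset (Fin v)} (hC : C.card = k) (hC' : C'.card = k)
    (hy1 : i ≤ (C ∩ C').card) (hy2 : k ≤ (C ∩ C').card + (v - 2 * k + 2 * i)) :
    ∃ E : Finset (Fin v), E.card = k ∧ (E ∩ C).card = i ∧ (E ∩ C').card = i := by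
  set y := (C ∩ C').card with hy
  have hyk : y ≤ k := hC ▸ card_le_card inter_subset_left
  have hCd : (C \ C').card + y = k := by
    rw [hy, card_sdiff_add_card_inter, hC]
  have hC'd : (C' \ C).card + y = k := by
    rw [hy, inter_comm, card_sdiff_add_card_inter, hC']
  have hcup : (C ∪ C').card + y = k + k := by
    rw [hy, card_union_add_card_inter, hC, hC']
  have hcompl : ((C ∪ C')ᶜ).card + (C ∪ C').card = v := by
    rw [card_compl, Fintype.card_fin]
    have : (C ∪ C').card ≤ v := by
      have := card_le_univ (C ∪ C'); rwa [Fintype.card_fin] at this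
    omega
  set a := min i (v - 2 * k + 2 * i + y - k) with ha
  obtain ⟨S, hS, hSc⟩ := exists_subset_card_eq (show a ≤ (C ∩ C').card by omega)
  obtain ⟨R, hR, hRc⟩ := exists_subset_card_eq (show i - a ≤ (C \ C').card by omega)
  obtain ⟨T, hT, hTc⟩ := exists_subset_card_eq (show i - a ≤ (C' \ C).card by omega)
  obtain ⟨U, hU, hUc⟩ :=
    exists_subset_card_eq (show k + a - 2 * i ≤ ((C ∪ C')ᶜ).card by omega)
  have hSx : ∀ x ∈ S, x ∈ C ∧ x ∈ C' := fun x hx => mem_inter.1 (hS hx)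
  have hRx : ∀ x ∈ R, x ∈ C ∧ x ∉ C' := fun x hx => mem_sdiff.1 (hR hx)
  have hTx : ∀ x ∈ T, x ∈ C' ∧ x ∉ C := fun x hx => mem_sdiff.1 (hT hx)
  have hUx : ∀ x ∈ U, x ∉ C ∧ x ∉ C' := fun x hx => by
    have := mem_compl.1 (hU hx); simp only [mem_union] at this; tauto
  refine ⟨((S ∪ R) ∪ T) ∪ U, ?_, ?_, ?_⟩
  · have d1 : Disjoint S R := disjoint_left.2 fun x hx hx' =>
      (hRx x hx').2 (hSx x hx).2
    have d2 : Disjoint (S ∪ R) T := disjoint_left.2 fun x hx hx' => by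
      rcases mem_union.1 hx with h | h
      · exact (hTx x hx').2 (hSx x h).1
      · exact (hTx x hx').2 (hRx x h).1
    have d3 : Disjoint ((S ∪ R) ∪ T) U := disjoint_left.2 fun x hx hx' => by
      rcases mem_union.1 hx with h | h
      · rcases mem_union.1 h with h' | h'
        · exact (hUx x hx').1 (hSx x h').1
        · exact (hUx x hx').1 (hRx x h').1
      · exact (hUx x hx').2 (hTx x h).1
    rw [card_union_of_disjoint d3, card_union_of_disjoint d2,
      card_union_of_disjoint d1, hSc, hRc, hTc, hUc]
    omega
  · have : (((S ∪ R) ∪ T) ∪ U) ∩ C = S ∪ R := by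
      ext x
      simp only [mem_inter, mem_union]
      constructor
      · rintro ⟨(⟨h | h⟩ | h) | h, hxC⟩
        · exact Or.inl h
        · exact Or.inr h
        · exact absurd hxC (hTx x h).2
        · exact absurd hxC (hUx x h).1
      · rintro (h | h)
        · exact ⟨Or.inl (Or.inl (Or.inl h)), (hSx x h).1⟩
        · exact ⟨Or.inl (Or.inl (Or.inr h)), (hRx x h).1⟩
    rw [this, card_union_of_disjoint (disjoint_left.2 fun x hx hx' =>
      (hRx x hx').2 (hSx x hx).2), hSc, hRc]
    omega
  · have : (((S ∪ R) ∪ T) ∪ U) ∩ C' = S ∪ T := by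
      ext x
      simp only [mem_inter, mem_union]
      constructor
      · rintro ⟨(⟨h | h⟩ | h) | h, hxC⟩
        · exact Or.inl h
        · exact absurd hxC (hRx x h).2
        · exact Or.inr h
        · exact absurd hxC (hUx x h).2
      · rintro (h | h)
        · exact ⟨Or.inl (Or.inl (Or.inl h)), (hSx x h).2⟩
        · exact ⟨Or.inl (Or.inr h), (hTx x h).1⟩
    rw [this, card_union_of_disjoint (disjoint_left.2 fun x hx hx' =>
      (hTx x hx').2 (hSx x hx).1), hSc, hTc]
    omega

lemma mk_adj {v k i : ℕ} (hik : i < k) {C E : {A : Finset (Fin v) // A.card = k}}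
    (h : (C.1 ∩ E.1).card = i) : (genJohnsonGraph v k i).Adj C E := by
  refine ⟨fun hEq => ?_, h⟩
  rw [hEq, inter_self, E.2] at h
  omega

lemma even_walk {v k i : ℕ} (hik : i < k) (h2k : 2 * k ≤ v)
    (B : {A : Finset (Fin v) // A.card = k}) :
    ∀ m (C : {A : Finset (Fin v) // A.card = k}),
      i ≤ (B.1 ∩ C.1).card → k ≤ (B.1 ∩ C.1).card + m * (v - 2 * k + 2 * i) →
      ∃ p : (genJohnsonGraph v k i).Walk C B, p.length = 2 * m := by
  intro m
  induction m with
  | zero =>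
    intro C hi hk
    have hle : (B.1 ∩ C.1).card ≤ k := le_trans (card_le_card inter_subset_right) (le_of_eq C.2)
    have h1 : B.1 ∩ C.1 = C.1 := eq_of_subset_of_card_le inter_subset_right (by omega)
    have h2 : C = B := Subtype.ext
      (eq_of_subset_of_card_le (h1 ▸ inter_subset_left) (by rw [B.2, C.2]))
    subst h2
    exact ⟨.nil, rfl⟩
  | succ m ih =>
    intro C hi hk
    by_cases hs : (B.1 ∩ C.1).card = k
    · have h1 : B.1 ∩ C.1 = C.1 := eq_of_subset_of_card_le inter_subset_right
        (by rw [C.2, hs])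
      have h2 : C = B := Subtype.ext
        (eq_of_subset_of_card_le (h1 ▸ inter_subset_left) (by rw [B.2, C.2]))
      subst h2
      obtain ⟨E, hEk, hEC, hEC'⟩ := exists_common_nbr (i := i) hik h2k C.2 C.2
        (by rw [inter_self, C.2]; omega) (by rw [inter_self, C.2]; omega)
      obtain ⟨w, hw⟩ := ih C (by rw [inter_self, C.2]; omega) (by rw [inter_self, C.2]; omega)
      refine ⟨.cons (mk_adj hik (E := ⟨E, hEk⟩) (by rw [inter_comm]; exact hEC))
        (.cons (mk_adj hik (C := ⟨E, hEk⟩) hEC') w), ?_⟩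
      simp only [Walk.length_cons, hw]
      ring
    · have hsk : (B.1 ∩ C.1).card ≤ k := le_trans (card_le_card inter_subset_right) (le_of_eq C.2)
      set s := (B.1 ∩ C.1).card with hsdef
      set δ := min (v - 2 * k + 2 * i) (k - s) with hδdef
      have hCB : (C.1 \ B.1).card + s = k := by
        rw [hsdef, inter_comm, card_sdiff_add_card_inter, C.2]
      have hBC : (B.1 \ C.1).card + s = k := by
        rw [hsdef, card_sdiff_add_card_inter, B.2]
      obtain ⟨D, hD, hDc⟩ := exists_subset_card_eq (show δ ≤ (C.1 \ B.1).card by omega)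
      obtain ⟨N, hN, hNc⟩ := exists_subset_card_eq (show δ ≤ (B.1 \ C.1).card by omega)
      have hDx : ∀ x ∈ D, x ∈ C.1 ∧ x ∉ B.1 := fun x hx => mem_sdiff.1 (hD hx)
      have hNx : ∀ x ∈ N, x ∈ B.1 ∧ x ∉ C.1 := fun x hx => mem_sdiff.1 (hN hx)
      have hDC : D ⊆ C.1 := fun x hx => (hDx x hx).1
      have hdisj : Disjoint (C.1 \ D) N :=
        disjoint_left.2 fun x hx hx' => (hNx x hx').2 (mem_sdiff.1 hx).1
      have hCk : (C.1 \ D).card = k - δ := by rw [card_sdiff_of_subset hDC, C.2, hDc]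
      have hC'k : ((C.1 \ D) ∪ N).card = k := by
        rw [card_union_of_disjoint hdisj, hCk, hNc]; omega
      have hBC' : (B.1 ∩ ((C.1 \ D) ∪ N)).card = s + δ := by
        have he : B.1 ∩ ((C.1 \ D) ∪ N) = (B.1 ∩ C.1) ∪ N := by
          ext x
          simp only [mem_inter, mem_union, mem_sdiff]
          constructor
          · rintro ⟨hxB, ⟨hxC, -⟩ | hxN⟩
            · exact Or.inl ⟨hxB, hxC⟩
            · exact Or.inr hxN
          · rintro (⟨hxB, hxC⟩ | hxN)
            · exact ⟨hxB, Or.inl ⟨hxC, fun hd => (hDx x hd).2 hxB⟩⟩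
            · exact ⟨(hNx x hxN).1, Or.inr hxN⟩
        rw [he, card_union_of_disjoint
          (disjoint_left.2 fun x hx hx' => (hNx x hx').2 (mem_inter.1 hx).2), hNc]
      have hCC' : (C.1 ∩ ((C.1 \ D) ∪ N)).card = k - δ := by
        have he : C.1 ∩ ((C.1 \ D) ∪ N) = C.1 \ D := by
          ext x
          simp only [mem_inter, mem_union, mem_sdiff]
          constructor
          · rintro ⟨hxC, ⟨-, hxD⟩ | hxN⟩
            · exact ⟨hxC, hxD⟩
            · exact absurd hxC (hNx x hxN).2
          · rintro ⟨hxC, hxD⟩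
            exact ⟨hxC, Or.inl ⟨hxC, hxD⟩⟩
        rw [he, hCk]
      obtain ⟨E, hEk, hEC, hEC'⟩ := exists_common_nbr (i := i) hik h2k C.2 hC'k
        (by rw [hCC']; omega) (by rw [hCC']; omega)
      have hmul : (m + 1) * (v - 2 * k + 2 * i)
          = m * (v - 2 * k + 2 * i) + (v - 2 * k + 2 * i) := by ring
      obtain ⟨w, hw⟩ := ih ⟨(C.1 \ D) ∪ N, hC'k⟩
        (show i ≤ (B.1 ∩ ((C.1 \ D) ∪ N)).card by rw [hBC']; omega)
        (show k ≤ (B.1 ∩ ((C.1 \ D) ∪ N)).card + m * (v - 2 * k + 2 * i) by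
          rw [hBC']; omega)
      refine ⟨.cons (mk_adj hik (E := ⟨E, hEk⟩) (by rw [inter_comm]; exact hEC))
        (.cons (mk_adj hik (C := ⟨E, hEk⟩) (E := ⟨(C.1 \ D) ∪ N, hC'k⟩) hEC') w), ?_⟩
      simp only [Walk.length_cons, hw]
      ring

lemma odd_walk {v k i : ℕ} (hik : i < k) (h2k : 2 * k ≤ v)
    (B : {A : Finset (Fin v) // A.card = k}) :
    ∀ m (C : {A : Finset (Fin v) // A.card = k}),
      i ≤ (B.1 ∩ C.1).card → (B.1 ∩ C.1).card ≤ i + m * (v - 2 * k + 2 * i) →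
      ∃ p : (genJohnsonGraph v k i).Walk C B, p.length = 2 * m + 1 := by
  intro m
  induction m with
  | zero =>
    intro C hi hk
    have hadj : (genJohnsonGraph v k i).Adj C B :=
      mk_adj hik (by rw [inter_comm]; omega)
    exact ⟨.cons hadj .nil, rfl⟩
  | succ m ih =>
    intro C hi hk
    by_cases hs : (B.1 ∩ C.1).card = i
    · have hadj : (genJohnsonGraph v k i).Adj C B :=
        mk_adj hik (by rw [inter_comm]; exact hs)
      obtain ⟨w, hw⟩ := even_walk hik h2k B (m + 1) B
        (by rw [inter_self]; rw [B.2]; omega) (by rw [inter_self]; rw [B.2]; omega)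
      exact ⟨.cons hadj w, by simp only [Walk.length_cons, hw]; try ring⟩
    · have hsk : (B.1 ∩ C.1).card ≤ k :=
        le_trans (card_le_card inter_subset_right) (le_of_eq C.2)
      set s := (B.1 ∩ C.1).card with hsdef
      set δ := min (v - 2 * k + 2 * i) (s - i) with hδdef
      have hCB : (C.1 ∩ B.1).card = s := by rw [inter_comm]
      have hcup : (C.1 ∪ B.1).card + s = k + k := by
        rw [← hCB, card_union_add_card_inter, C.2, B.2]
      have hcompl : ((C.1 ∪ B.1)ᶜ).card + (C.1 ∪ B.1).card = v := by
        rw [card_compl, Fintype.card_fin]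
        have : (C.1 ∪ B.1).card ≤ v := by
          have := card_le_univ (C.1 ∪ B.1); rwa [Fintype.card_fin] at this
        omega
      obtain ⟨D, hD, hDc⟩ := exists_subset_card_eq
        (show δ ≤ (C.1 ∩ B.1).card by rw [hCB]; omega)
      obtain ⟨N, hN, hNc⟩ := exists_subset_card_eq
        (show δ ≤ ((C.1 ∪ B.1)ᶜ).card by omega)
      have hDx : ∀ x ∈ D, x ∈ C.1 ∧ x ∈ B.1 := fun x hx => mem_inter.1 (hD hx)
      have hNx : ∀ x ∈ N, x ∉ C.1 ∧ x ∉ B.1 := fun x hx => by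
        have := mem_compl.1 (hN hx); simp only [mem_union] at this; tauto
      have hDC : D ⊆ C.1 := fun x hx => (hDx x hx).1
      have hdisj : Disjoint (C.1 \ D) N :=
        disjoint_left.2 fun x hx hx' => (hNx x hx').1 (mem_sdiff.1 hx).1
      have hCk : (C.1 \ D).card = k - δ := by rw [card_sdiff_of_subset hDC, C.2, hDc]
      have hC'k : ((C.1 \ D) ∪ N).card = k := by
        rw [card_union_of_disjoint hdisj, hCk, hNc]; omega
      have hBC' : (B.1 ∩ ((C.1 \ D) ∪ N)).card = s - δ := by
        have he : B.1 ∩ ((C.1 \ D) ∪ N) = (B.1 ∩ C.1) \ D := by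
          ext x
          simp only [mem_inter, mem_union, mem_sdiff]
          constructor
          · rintro ⟨hxB, ⟨hxC, hxD⟩ | hxN⟩
            · exact ⟨⟨hxB, hxC⟩, hxD⟩
            · exact absurd hxB (hNx x hxN).2
          · rintro ⟨⟨hxB, hxC⟩, hxD⟩
            exact ⟨hxB, Or.inl ⟨hxC, hxD⟩⟩
        have hDsub : D ⊆ B.1 ∩ C.1 := fun x hx => mem_inter.2 ⟨(hDx x hx).2, (hDx x hx).1⟩
        rw [he, card_sdiff_of_subset hDsub, ← hsdef, hDc]
      have hCC' : (C.1 ∩ ((C.1 \ D) ∪ N)).card = k - δ := by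
        have he : C.1 ∩ ((C.1 \ D) ∪ N) = C.1 \ D := by
          ext x
          simp only [mem_inter, mem_union, mem_sdiff]
          constructor
          · rintro ⟨hxC, ⟨-, hxD⟩ | hxN⟩
            · exact ⟨hxC, hxD⟩
            · exact absurd hxC (hNx x hxN).1
          · rintro ⟨hxC, hxD⟩
            exact ⟨hxC, Or.inl ⟨hxC, hxD⟩⟩
        rw [he, hCk]
      obtain ⟨E, hEk, hEC, hEC'⟩ := exists_common_nbr (i := i) hik h2k C.2 hC'k
        (by rw [hCC']; omega) (by rw [hCC']; omega)
      have hmul : (m + 1) * (v - 2 * k + 2 * i)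
          = m * (v - 2 * k + 2 * i) + (v - 2 * k + 2 * i) := by ring
      obtain ⟨w, hw⟩ := ih ⟨(C.1 \ D) ∪ N, hC'k⟩
        (show i ≤ (B.1 ∩ ((C.1 \ D) ∪ N)).card by rw [hBC']; omega)
        (show (B.1 ∩ ((C.1 \ D) ∪ N)).card ≤ i + m * (v - 2 * k + 2 * i) by
          rw [hBC']; omega)
      refine ⟨.cons (mk_adj hik (E := ⟨E, hEk⟩) (by rw [inter_comm]; exact hEC))
        (.cons (mk_adj hik (C := ⟨E, hEk⟩) (E := ⟨(C.1 \ D) ∪ N, hC'k⟩) hEC') w), ?_⟩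
      simp only [Walk.length_cons, hw]
      ring


/-- If `x = |A ∩ B| > i`, then
`dist(A,B) = min {2⌈(k - x)/Δ⌉, 2⌈(x - i)/Δ⌉ + 1}` in `J(v,k,i)`. -/
theorem dist_eq_min (v k i : ℕ) (hik : i < k) (hkv : k < v)
    (h2k : 2 * k ≤ v) (hexc : ¬(v = 2 * k ∧ i = 0))
    (A B : {A : Finset (Fin v) // A.card = k})
    (hxi : i < (A.1 ∩ B.1).card) :
    (genJohnsonGraph v k i).dist A B =
      min (2 * ((k - (A.1 ∩ B.1).card) ⌈/⌉ (v - 2 * k + 2 * i)))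
        (2 * (((A.1 ∩ B.1).card - i) ⌈/⌉ (v - 2 * k + 2 * i)) + 1) := by
  have hxk : (A.1 ∩ B.1).card ≤ k :=
    le_trans (card_le_card inter_subset_left) (le_of_eq A.2)
  set x := (A.1 ∩ B.1).card with hx
  have hΔ : 0 < v - 2 * k + 2 * i := by
    rcases Nat.lt_or_ge (2 * k) v with h | h
    · omega
    · have hv : v = 2 * k := le_antisymm h h2k
      have hi0 : i ≠ 0 := fun h0 => hexc ⟨hv, h0⟩
      omega
  have hBA : (B.1 ∩ A.1).card = x := by rw [inter_comm]
  set m1 := (k - x) ⌈/⌉ (v - 2 * k + 2 * i) with hm1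
  set m2 := (x - i) ⌈/⌉ (v - 2 * k + 2 * i) with hm2
  have hc1 : k - x ≤ (v - 2 * k + 2 * i) * m1 := by
    have := le_smul_ceilDiv (b := k - x) hΔ
    rwa [smul_eq_mul] at this
  have hc2 : x - i ≤ (v - 2 * k + 2 * i) * m2 := by
    have := le_smul_ceilDiv (b := x - i) hΔ
    rwa [smul_eq_mul] at this
  have comm1 : (v - 2 * k + 2 * i) * m1 = m1 * (v - 2 * k + 2 * i) := Nat.mul_comm _ _
  have comm2 : (v - 2 * k + 2 * i) * m2 = m2 * (v - 2 * k + 2 * i) := Nat.mul_comm _ _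
  obtain ⟨p1, hp1⟩ := even_walk hik h2k B m1 A (by rw [hBA]; omega) (by rw [hBA]; omega)
  obtain ⟨p2, hp2⟩ := odd_walk hik h2k B m2 A (by rw [hBA]; omega) (by rw [hBA]; omega)
  have hub1 : (genJohnsonGraph v k i).dist A B ≤ 2 * m1 := by
    rw [← hp1]; exact dist_le p1
  have hub2 : (genJohnsonGraph v k i).dist A B ≤ 2 * m2 + 1 := by
    rw [← hp2]; exact dist_le p2
  refine le_antisymm (le_min hub1 hub2) ?_
  obtain ⟨q, hq⟩ := (Reachable.exists_walk_length_eq_dist ⟨p1⟩ :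
    ∃ q : (genJohnsonGraph v k i).Walk A B, q.length = (genJohnsonGraph v k i).dist A B)
  have hpar := walk_parity h2k q
  rcases Nat.even_or_odd q.length with ⟨m, hm⟩ | ⟨m, hm⟩
  · have h1 := hpar.1 m (by omega)
    rw [hBA] at h1
    have hle : m1 ≤ m := (ceilDiv_le_iff_le_mul hΔ).2 (by
      have := Nat.mul_comm (v - 2 * k + 2 * i) m
      omega)
    have hmin := min_le_left (2 * m1) (2 * m2 + 1)
    omega
  · have h1 := hpar.2 m (by omega)
    rw [hBA] at h1
    have hle : m2 ≤ m := (ceilDiv_le_iff_le_mul hΔ).2 (by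
      have := Nat.mul_comm (v - 2 * k + 2 * i) m
      omega)
    have hmin := min_le_right (2 * m1) (2 * m2 + 1)
    omega
end

section
/- Let A and B be vertices of X = J(v,k,i) and let x = |A ∩ B|. Then dist(A,B) = 3 if x < min{i, k − Δ}; dist(A,B) = ⌈(k − x)/(k − i)⌉ if k − Δ ≤ x < i; and dist(A,B) = min{2⌈(k − x)/Δ⌉, 2⌈(x − i)/Δ⌉ + 1} if x ≥ i. -/
namespace JGaux


lemma cdle {b : ℕ} (hb : 0 < b) (a n : ℕ) : a ⌈/⌉ b ≤ n ↔ a ≤ n * b := by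
  rw [ceilDiv_le_iff_le_mul hb, Nat.mul_comm]

lemma le_cd_mul {b : ℕ} (hb : 0 < b) (a : ℕ) : a ≤ (a ⌈/⌉ b) * b :=
  (cdle hb a _).1 le_rfl

lemma cd_mono {b : ℕ} (hb : 0 < b) {a a' : ℕ} (h : a ≤ a') : a ⌈/⌉ b ≤ a' ⌈/⌉ b :=
  (cdle hb a _).2 (h.trans (le_cd_mul hb a'))

lemma cd_eq_zero {b : ℕ} (hb : 0 < b) {a : ℕ} (h : a ⌈/⌉ b = 0) : a = 0 := by
  have := (cdle hb a 0).1 (le_of_eq h); omega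

lemma cd_pos {b : ℕ} (hb : 0 < b) {a : ℕ} (ha : 0 < a) : 0 < a ⌈/⌉ b := by
  rcases Nat.eq_zero_or_pos (a ⌈/⌉ b) with h | h
  · exact absurd (cd_eq_zero hb h) (by omega)
  · exact h

lemma cd_shift {b : ℕ} (hb : 0 < b) (a : ℕ) : (a + b) ⌈/⌉ b = a ⌈/⌉ b + 1 := by
  rw [Nat.ceilDiv_eq_add_pred_div, Nat.ceilDiv_eq_add_pred_div]
  have h : a + b + b - 1 = (a + b - 1) + b := by omega
  rw [h, Nat.add_div_right _ hb]

lemma cd_le_add_one {b : ℕ} (hb : 0 < b) {a c : ℕ} (h : a ≤ c + b) :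
    a ⌈/⌉ b ≤ c ⌈/⌉ b + 1 := by
  have h1 := cd_mono hb h
  rw [cd_shift hb c] at h1
  exact h1

lemma cd_pred {b : ℕ} (hb : 0 < b) {a c : ℕ} (h : a + b ≤ c) :
    a ⌈/⌉ b + 1 ≤ c ⌈/⌉ b := by
  have h1 := cd_mono hb h
  rw [cd_shift hb a] at h1
  exact h1

/-- interval lower bound for one step -/
def LL (v k i y : ℕ) : ℕ := (i + y - k) + (3*k - i - y - v)

/-- interval upper bound for one step -/
def UU (k i y : ℕ) : ℕ := min i y + min (k-i) (k-y)

/-- the distance formula as a function of `y = |A ∩ B|` -/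
def dd (v k i y : ℕ) : ℕ :=
  if y < min i (k - (v - 2*k + 2*i)) then 3
  else if y < i then (k - y) ⌈/⌉ (k - i)
  else min (2*((k - y) ⌈/⌉ (v - 2*k + 2*i))) (2*((y - i) ⌈/⌉ (v - 2*k + 2*i)) + 1)

lemma dd_of_r1 {v k i y : ℕ} (h : y < min i (k - (v - 2*k + 2*i))) : dd v k i y = 3 := by
  rw [dd, if_pos h]

lemma dd_of_r2 {v k i y : ℕ} (h1 : ¬ y < min i (k - (v - 2*k + 2*i))) (h2 : y < i) :
    dd v k i y = (k - y) ⌈/⌉ (k - i) := by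
  rw [dd, if_neg h1, if_pos h2]

lemma dd_of_r3 {v k i y : ℕ} (h : i ≤ y) :
    dd v k i y = min (2*((k - y) ⌈/⌉ (v - 2*k + 2*i))) (2*((y - i) ⌈/⌉ (v - 2*k + 2*i)) + 1) := by
  rw [dd, if_neg (by omega), if_neg (by omega)]

section params
variable {v k i : ℕ} (hik : i < k) (h2k : 2*k ≤ v) (hD : 0 < v - 2*k + 2*i)

include hik h2k hD

lemma dd_k : dd v k i k = 0 := by
  rw [dd_of_r3 (by omega), Nat.sub_self]
  have h0 : (0:ℕ) ⌈/⌉ (v - 2*k + 2*i) = 0 := by simp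
  rw [h0]
  simp

lemma dd_i : dd v k i i ≤ 1 := by
  rw [dd_of_r3 (le_refl i), Nat.sub_self]
  have h0 : (0:ℕ) ⌈/⌉ (v - 2*k + 2*i) = 0 := by simp
  rw [h0]
  omega

lemma dd_eq_zero {y : ℕ} (hy : y ≤ k) (h : dd v k i y = 0) : y = k := by
  by_cases h1 : y < min i (k - (v - 2*k + 2*i))
  · rw [dd_of_r1 h1] at h; omega
  · by_cases h2 : y < i
    · rw [dd_of_r2 h1 h2] at h
      have := cd_eq_zero (b := k - i) (by omega) h
      omega
    · rw [dd_of_r3 (by omega)] at h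
      have h3 : 2*((k - y) ⌈/⌉ (v - 2*k + 2*i)) = 0 := by omega
      have := cd_eq_zero (b := v - 2*k + 2*i) hD (a := k - y) (by omega)
      omega

/-- If `y'` is one-step reachable from `y`, then `dd y ≤ dd y' + 1`. -/
lemma step_lower {y y' : ℕ} (hy : y ≤ k) (h1 : LL v k i y ≤ y') (h2 : y' ≤ UU k i y) :
    dd v k i y ≤ dd v k i y' + 1 := by
  rw [LL] at h1; rw [UU] at h2
  have hy'k : y' ≤ k := by omega
  by_cases a1 : y < min i (k - (v - 2*k + 2*i))
  · -- region 1 : dd y = 3, show dd y' ≥ 2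
    rw [dd_of_r1 a1]
    rw [dd_of_r3 (by omega)]
    have q1 : 0 < (k - y') ⌈/⌉ (v - 2*k + 2*i) := cd_pos hD (by omega)
    have q2 : 0 < (y' - i) ⌈/⌉ (v - 2*k + 2*i) := cd_pos hD (by omega)
    omega
  · by_cases a2 : y < i
    · -- region 2, note k ≤ y + D
      rw [dd_of_r2 a1 a2]
      by_cases b2 : y' < i
      · by_cases b1 : y' < min i (k - (v - 2*k + 2*i))
        · -- (2,1)
          rw [dd_of_r1 b1]
          have hs : (k - y) ⌈/⌉ (k - i) ≤ 2 := by
            rw [cdle (b := k - i) (by omega)]; omega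
          omega
        · -- (2,2)
          rw [dd_of_r2 b1 b2]
          exact cd_le_add_one (by omega) (by omega)
      · -- (2,3)
        rw [dd_of_r3 (by omega)]
        have hs : (k - y) ⌈/⌉ (k - i) ≤ 2 := by
          rw [cdle (b := k - i) (by omega)]; omega
        have q1 : 0 < (k - y') ⌈/⌉ (v - 2*k + 2*i) := cd_pos hD (by omega)
        omega
    · -- region 3 : y ≥ i
      rw [dd_of_r3 (by omega)]
      by_cases b2 : y' < i
      · -- (3, <i)
        have hq : (k - y) ⌈/⌉ (v - 2*k + 2*i) ≤ 1 := by rw [cdle hD]; omega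
        have hd' : 1 ≤ dd v k i y' := by
          by_cases b1 : y' < min i (k - (v - 2*k + 2*i))
          · rw [dd_of_r1 b1]; omega
          · rw [dd_of_r2 b1 b2]
            have := cd_pos (b := k - i) (by omega) (a := k - y') (by omega)
            omega
        omega
      · -- (3,3)
        rw [dd_of_r3 (by omega)]
        have ha : (y - i) ⌈/⌉ (v - 2*k + 2*i) ≤ (k - y') ⌈/⌉ (v - 2*k + 2*i) :=
          cd_mono hD (by omega)
        have hb : (k - y) ⌈/⌉ (v - 2*k + 2*i) ≤ (y' - i) ⌈/⌉ (v - 2*k + 2*i) + 1 := by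
          by_cases hc : k ≤ y + (v - 2*k + 2*i)
          · rw [cdle hD]
            have := le_cd_mul hD (y' - i)
            have h5 : 1 * (v - 2*k + 2*i) ≤ ((y' - i) ⌈/⌉ (v - 2*k + 2*i) + 1) * (v - 2*k + 2*i) := by
              apply Nat.mul_le_mul_right; omega
            omega
          · exact cd_le_add_one hD (by omega)
        omega

/-- descent: from any `y ≠ k` there is a one-step `y'` with `dd y' + 1 ≤ dd y`. -/
lemma descend {y : ℕ} (hy : y ≤ k) (hyk : y ≠ k) :
    ∃ y', y' ≤ k ∧ LL v k i y ≤ y' ∧ y' ≤ UU k i y ∧ dd v k i y' + 1 ≤ dd v k i y := by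
  have h0 : (0:ℕ) ⌈/⌉ (v - 2*k + 2*i) = 0 := by simp
  by_cases a1 : y < min i (k - (v - 2*k + 2*i))
  · -- region 1 : y' = k - (y + D) + i, dd y' = 2
    refine ⟨k - (y + (v - 2*k + 2*i)) + i, by omega, ?_, ?_, ?_⟩
    · rw [LL]; omega
    · rw [UU]; omega
    · rw [dd_of_r1 a1, dd_of_r3 (by omega)]
      have hq : (k - (k - (y + (v - 2*k + 2*i)) + i)) ⌈/⌉ (v - 2*k + 2*i) ≤ 1 := by
        rw [cdle hD]; omega
      have hq' : 0 < (k - (k - (y + (v - 2*k + 2*i)) + i)) ⌈/⌉ (v - 2*k + 2*i) :=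
        cd_pos hD (by omega)
      have q2 : 0 < ((k - (y + (v - 2*k + 2*i)) + i) - i) ⌈/⌉ (v - 2*k + 2*i) :=
        cd_pos hD (by omega)
      omega
  · by_cases a2 : y < i
    · -- region 2, k ≤ y + D
      have hkyD : k ≤ y + (v - 2*k + 2*i) := by omega
      by_cases hb : y + (k - i) < i
      · -- y' = y + (k-i), still region 2
        refine ⟨y + (k - i), by omega, ?_, ?_, ?_⟩
        · rw [LL]; omega
        · rw [UU]; omega
        · rw [dd_of_r2 a1 a2, dd_of_r2 (by omega) hb]
          have h3 : k - y = (k - (y + (k - i))) + (k - i) := by omega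
          rw [h3, cd_shift (by omega : 0 < k - i)]
      · -- y' = i
        refine ⟨i, by omega, ?_, ?_, ?_⟩
        · rw [LL]; omega
        · rw [UU]; omega
        · rw [dd_of_r2 a1 a2]
          have hdi := dd_i hik h2k hD
          have hs2 : (k - y) ⌈/⌉ (k - i) ≤ 2 := by
            rw [cdle (b := k - i) (by omega)]; omega
          have hs1 : 2 ≤ (k - y) ⌈/⌉ (k - i) := by
            by_contra h
            rw [Nat.not_le] at h
            have h' : (k - y) ⌈/⌉ (k - i) ≤ 1 := by omega
            rw [cdle (b := k - i) (by omega)] at h'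
            omega
          omega
    · -- region 3
      have hiy : i ≤ y := by omega
      have hqm := le_cd_mul hD (k - y)
      have hrm := le_cd_mul hD (y - i)
      have hq1 : 1 ≤ (k - y) ⌈/⌉ (v - 2*k + 2*i) := cd_pos hD (by omega)
      by_cases hc : (y - i) ⌈/⌉ (v - 2*k + 2*i) < (k - y) ⌈/⌉ (v - 2*k + 2*i)
      · -- odd side: y' = k - y + i
        refine ⟨k - y + i, by omega, ?_, ?_, ?_⟩
        · rw [LL]; omega
        · rw [UU]; omega
        · rw [dd_of_r3 hiy, dd_of_r3 (by omega)]
          have h4 : k - (k - y + i) = y - i := by omega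
          have h5 : k - y + i - i = k - y := by omega
          rw [h4, h5]
          omega
      · -- even side: y' = max i (LL y)
        by_cases hL : LL v k i y ≤ i
        · -- y' = i
          refine ⟨i, by omega, by omega, ?_, ?_⟩
          · rw [UU]; omega
          · rw [dd_of_r3 hiy]
            have hdi := dd_i hik h2k hD
            omega
        · -- y' = LL y = k - y - D + i > i ; needs k - y > D
          have hLval : LL v k i y = 3*k - i - y - v := by rw [LL] at *; omega
          have hky : (v - 2*k + 2*i) + i < k - y + i := by rw [LL] at hL; omega
          refine ⟨LL v k i y, by rw [LL] at *; omega, le_refl _, ?_, ?_⟩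
          · rw [UU, LL] at *; omega
          · rw [dd_of_r3 hiy, dd_of_r3 (by omega)]
            have h4 : LL v k i y - i = k - y - (v - 2*k + 2*i) := by rw [LL] at *; omega
            rw [h4]
            have key : (k - y - (v - 2*k + 2*i)) ⌈/⌉ (v - 2*k + 2*i) + 1
                ≤ (k - y) ⌈/⌉ (v - 2*k + 2*i) := cd_pred hD (by omega)
            omega

end params

lemma pick_a {v k i y y' : ℕ} (hik : i < k) (h2k : 2*k ≤ v) (hy : y ≤ k)
    (h1 : (i + y - k) + (3*k - i - y - v) ≤ y') (h2 : y' ≤ min i y + min (k-i) (k-y)) :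
    ∃ a, a ≤ i ∧ a ≤ y ∧ a ≤ y' ∧ y' - a ≤ k - y ∧
        y' - a ≤ k - i ∧ i - a ≤ k - y ∧
        (k - i) - (y' - a) ≤ v - (2*k - y) :=
  ⟨max (i + y - k) (max (y' - (k - y)) (y' - (k - i))),
      by omega, by omega, by omega, by omega, by omega, by omega, by omega⟩

section fin
variable {v k i : ℕ} (hik : i < k) (h2k : 2*k ≤ v)

include hik h2k

/-- adjacency moves the intersection size within the interval `[LL, UU]` -/
lemma step_mem {B C D : Finset (Fin v)} (hB : B.card = k) (hC : C.card = k)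
    (hDc : D.card = k) (hadj : (C ∩ D).card = i) :
    LL v k i ((C ∩ B).card) ≤ (D ∩ B).card ∧ (D ∩ B).card ≤ UU k i ((C ∩ B).card) := by
  have hsplit : (D ∩ B ∩ C).card + ((D ∩ B) \ C).card = (D ∩ B).card :=
    Finset.card_inter_add_card_sdiff _ _
  -- upper bounds
  have hu1 : (D ∩ B ∩ C).card ≤ i := by
    rw [← hadj]
    exact Finset.card_le_card (fun x hx => by
      simp only [Finset.mem_inter] at *; tauto)
  have hu2 : (D ∩ B ∩ C).card ≤ (C ∩ B).card :=
    Finset.card_le_card (fun x hx => by simp only [Finset.mem_inter] at *; tauto)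
  have hDsd : (D ∩ C).card + (D \ C).card = k := by
    rw [Finset.card_inter_add_card_sdiff, hDc]
  have hDC : (D ∩ C).card = i := by rw [Finset.inter_comm] at hadj; exact hadj
  have hBsd : (B ∩ C).card + (B \ C).card = k := by
    rw [Finset.card_inter_add_card_sdiff, hB]
  have hBC : (B ∩ C).card = (C ∩ B).card := by rw [Finset.inter_comm]
  have hu3 : ((D ∩ B) \ C).card ≤ (D \ C).card :=
    Finset.card_le_card (fun x hx => by
      simp only [Finset.mem_sdiff, Finset.mem_inter] at *; tauto)
  have hu4 : ((D ∩ B) \ C).card ≤ (B \ C).card :=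
    Finset.card_le_card (fun x hx => by
      simp only [Finset.mem_sdiff, Finset.mem_inter] at *; tauto)
  -- lower bound for the part inside C
  have hl1 : (C ∩ D).card + (C ∩ B).card
      = ((C ∩ D) ∩ (C ∩ B)).card + ((C ∩ D) ∪ (C ∩ B)).card :=
    (Finset.card_inter_add_card_union _ _).symm
  have he1 : (C ∩ D) ∩ (C ∩ B) = D ∩ B ∩ C := by
    ext x; simp only [Finset.mem_inter]; tauto
  have hsub1 : ((C ∩ D) ∪ (C ∩ B)).card ≤ k := by
    rw [← hC]
    exact Finset.card_le_card (fun x hx => by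
      simp only [Finset.mem_union, Finset.mem_inter] at *; tauto)
  -- lower bound for the part outside C
  have hl2 : (D \ C).card + (B \ C).card
      = ((D \ C) ∩ (B \ C)).card + ((D \ C) ∪ (B \ C)).card :=
    (Finset.card_inter_add_card_union _ _).symm
  have he2 : (D \ C) ∩ (B \ C) = (D ∩ B) \ C := by
    ext x; simp only [Finset.mem_inter, Finset.mem_sdiff]; tauto
  have hsub2 : ((D \ C) ∪ (B \ C)).card ≤ v - k := by
    have h1 : ((D \ C) ∪ (B \ C)) ⊆ Cᶜ := by
      intro x hx
      simp only [Finset.mem_union, Finset.mem_sdiff, Finset.mem_compl] at *; tauto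
    have h2 := Finset.card_le_card h1
    rwa [Finset.card_compl, Fintype.card_fin, hC] at h2
  rw [he1] at hl1
  rw [he2] at hl2
  have hyk : (C ∩ B).card ≤ k := by
    rw [← hC]; exact Finset.card_le_card Finset.inter_subset_left
  rw [LL, UU]
  omega

set_option maxHeartbeats 1000000 in
/-- one can always move the intersection size to any point of `[LL, UU]` -/
lemma step_exists {B C : Finset (Fin v)} (hB : B.card = k) (hC : C.card = k)
    {y' : ℕ} (h1 : LL v k i ((C ∩ B).card) ≤ y') (h2 : y' ≤ UU k i ((C ∩ B).card)) :
    ∃ D : Finset (Fin v), D.card = k ∧ (C ∩ D).card = i ∧ (D ∩ B).card = y' := by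
  have hyk : (C ∩ B).card ≤ k := by
    rw [← hC]; exact Finset.card_le_card Finset.inter_subset_left
  have hCBu : (C ∪ B).card + (C ∩ B).card = 2*k := by
    have := Finset.card_inter_add_card_union C B
    omega
  have hcompl : ((C ∪ B)ᶜ : Finset (Fin v)).card = v - (C ∪ B).card := by
    rw [Finset.card_compl, Fintype.card_fin]
  have hCd : (C ∩ B).card + (C \ B).card = k := by
    rw [Finset.card_inter_add_card_sdiff, hC]
  have hBd : (B ∩ C).card + (B \ C).card = k := by
    rw [Finset.card_inter_add_card_sdiff, hB]
  have hBCc : (B ∩ C).card = (C ∩ B).card := by rw [Finset.inter_comm]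
  -- choose the sizes of the four pieces
  rw [LL] at h1; rw [UU] at h2
  obtain ⟨a, ha1, ha2, ha3, ha4, ha5, ha6, ha7⟩ := pick_a hik h2k hyk h1 h2
  obtain ⟨S1, hS1s, hS1c⟩ := Finset.exists_subset_card_eq (s := C ∩ B) (n := a) (by omega)
  obtain ⟨S2, hS2s, hS2c⟩ := Finset.exists_subset_card_eq (s := C \ B) (n := i - a) (by omega)
  obtain ⟨S3, hS3s, hS3c⟩ := Finset.exists_subset_card_eq (s := B \ C) (n := y' - a) (by omega)
  obtain ⟨S4, hS4s, hS4c⟩ := Finset.exists_subset_card_eq (s := (C ∪ B)ᶜ)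
      (n := (k - i) - (y' - a)) (by omega)
  have m1 : ∀ x ∈ S1, x ∈ C ∧ x ∈ B := fun x hx => by
    have := hS1s hx; simp only [Finset.mem_inter] at this; exact this
  have m2 : ∀ x ∈ S2, x ∈ C ∧ x ∉ B := fun x hx => by
    have := hS2s hx; simp only [Finset.mem_sdiff] at this; exact this
  have m3 : ∀ x ∈ S3, x ∈ B ∧ x ∉ C := fun x hx => by
    have := hS3s hx; simp only [Finset.mem_sdiff] at this; exact this
  have m4 : ∀ x ∈ S4, x ∉ C ∧ x ∉ B := fun x hx => by
    have := hS4s hx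
    simp only [Finset.mem_compl, Finset.mem_union] at this; tauto
  refine ⟨S1 ∪ S2 ∪ S3 ∪ S4, ?_, ?_, ?_⟩
  · have d12 : Disjoint S1 S2 := Finset.disjoint_left.2 fun x hx1 hx2 =>
      (m2 _ hx2).2 (m1 _ hx1).2
    have d123 : Disjoint (S1 ∪ S2) S3 := Finset.disjoint_left.2 fun x hx1 hx3 => by
      rcases Finset.mem_union.1 hx1 with h | h
      · exact (m3 _ hx3).2 (m1 _ h).1
      · exact (m3 _ hx3).2 (m2 _ h).1
    have d1234 : Disjoint (S1 ∪ S2 ∪ S3) S4 := Finset.disjoint_left.2 fun x hx1 hx4 => by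
      rcases Finset.mem_union.1 hx1 with h | h
      · rcases Finset.mem_union.1 h with h' | h'
        · exact (m4 _ hx4).1 (m1 _ h').1
        · exact (m4 _ hx4).1 (m2 _ h').1
      · exact (m4 _ hx4).2 (m3 _ h).1
    rw [Finset.card_union_of_disjoint d1234, Finset.card_union_of_disjoint d123,
      Finset.card_union_of_disjoint d12, hS1c, hS2c, hS3c, hS4c]
    omega
  · have he : C ∩ (S1 ∪ S2 ∪ S3 ∪ S4) = S1 ∪ S2 := by
      ext x
      simp only [Finset.mem_inter, Finset.mem_union]
      constructor
      · rintro ⟨hxC, ((h | h) | h) | h⟩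
        · exact Or.inl h
        · exact Or.inr h
        · exact absurd hxC (m3 _ h).2
        · exact absurd hxC (m4 _ h).1
      · rintro (h | h)
        · exact ⟨(m1 _ h).1, Or.inl (Or.inl (Or.inl h))⟩
        · exact ⟨(m2 _ h).1, Or.inl (Or.inl (Or.inr h))⟩
    rw [he, Finset.card_union_of_disjoint (Finset.disjoint_left.2 fun x hx1 hx2 =>
      (m2 _ hx2).2 (m1 _ hx1).2), hS1c, hS2c]
    omega
  · have he : (S1 ∪ S2 ∪ S3 ∪ S4) ∩ B = S1 ∪ S3 := by
      ext x
      simp only [Finset.mem_inter, Finset.mem_union]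
      constructor
      · rintro ⟨((h | h) | h) | h, hxB⟩
        · exact Or.inl h
        · exact absurd hxB (m2 _ h).2
        · exact Or.inr h
        · exact absurd hxB (m4 _ h).2
      · rintro (h | h)
        · exact ⟨Or.inl (Or.inl (Or.inl h)), (m1 _ h).2⟩
        · exact ⟨Or.inl (Or.inr h), (m3 _ h).1⟩
    rw [he, Finset.card_union_of_disjoint (Finset.disjoint_left.2 fun x hx1 hx3 =>
      (m3 _ hx3).2 (m1 _ hx1).1), hS1c, hS3c]
    omega

end fin

section walks
variable {v k i : ℕ} (hik : i < k) (h2k : 2*k ≤ v) (hD : 0 < v - 2*k + 2*i)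

include hik h2k hD

omit hik h2k hD in
lemma card_inter_le' {v' k' : ℕ} (A B : {A : Finset (Fin v') // A.card = k'}) :
    (A.1 ∩ B.1).card ≤ k' := by
  have h1 : (A.1 ∩ B.1).card ≤ A.1.card := Finset.card_le_card Finset.inter_subset_left
  have h2 := A.2
  omega

lemma walk_lower :
    ∀ {A B : {A : Finset (Fin v) // A.card = k}} (W : (genJohnsonGraph v k i).Walk A B),
      dd v k i ((A.1 ∩ B.1).card) ≤ W.length := by
  intro A B W
  induction W with
  | nil =>
    rename_i u
    rw [Finset.inter_self, u.2, dd_k hik h2k hD]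
    exact Nat.zero_le _
  | @cons A C B h p ih =>
    rw [SimpleGraph.Walk.length_cons]
    have hstep := step_mem hik h2k (B := B.1) B.2 A.2 C.2 h.2
    have hy : (A.1 ∩ B.1).card ≤ k := card_inter_le' A B
    have := step_lower hik h2k hD hy hstep.1 hstep.2
    omega

lemma exists_walk_le :
    ∀ (n : ℕ) (A B : {A : Finset (Fin v) // A.card = k}),
      dd v k i ((A.1 ∩ B.1).card) ≤ n →
      ∃ W : (genJohnsonGraph v k i).Walk A B, W.length ≤ dd v k i ((A.1 ∩ B.1).card) := by
  intro n
  induction n with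
  | zero =>
    intro A B h
    have hy : (A.1 ∩ B.1).card ≤ k := card_inter_le' A B
    have hk : (A.1 ∩ B.1).card = k := dd_eq_zero hik h2k hD hy (Nat.le_zero.1 h)
    have h1 : A.1 ∩ B.1 = A.1 :=
      Finset.eq_of_subset_of_card_le Finset.inter_subset_left (by rw [A.2, hk])
    have h2 : A.1 ⊆ B.1 := by rw [← h1]; exact Finset.inter_subset_right
    have h4 : A = B := Subtype.ext (Finset.eq_of_subset_of_card_le h2 (by rw [A.2, B.2]))
    subst h4
    exact ⟨SimpleGraph.Walk.nil, by simp⟩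
  | succ n ih =>
    intro A B h
    have hy : (A.1 ∩ B.1).card ≤ k := card_inter_le' A B
    by_cases hk : (A.1 ∩ B.1).card = k
    · have h1 : A.1 ∩ B.1 = A.1 :=
        Finset.eq_of_subset_of_card_le Finset.inter_subset_left (by rw [A.2, hk])
      have h2 : A.1 ⊆ B.1 := by rw [← h1]; exact Finset.inter_subset_right
      have h4 : A = B := Subtype.ext (Finset.eq_of_subset_of_card_le h2 (by rw [A.2, B.2]))
      subst h4
      exact ⟨SimpleGraph.Walk.nil, by simp⟩
    · obtain ⟨y', hy'k, hL, hU, hlt⟩ := descend hik h2k hD hy hk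
      obtain ⟨Df, hDk, hCD, hDB⟩ := step_exists hik h2k (B := B.1) (C := A.1) B.2 A.2 hL hU
      have hadj : (genJohnsonGraph v k i).Adj A ⟨Df, hDk⟩ := by
        refine ⟨fun hEq => ?_, hCD⟩
        have : A.1 = Df := congrArg Subtype.val hEq
        rw [this, Finset.inter_self, hDk] at hCD
        omega
      obtain ⟨W', hW'⟩ := ih ⟨Df, hDk⟩ B (by
        show dd v k i ((Df ∩ B.1).card) ≤ n
        rw [hDB]; omega)
      refine ⟨SimpleGraph.Walk.cons hadj W', ?_⟩
      rw [SimpleGraph.Walk.length_cons]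
      have hcoe : dd v k i (((⟨Df, hDk⟩ : {A : Finset (Fin v) // A.card = k}).1 ∩ B.1).card)
          = dd v k i y' := by
        rw [(rfl : (⟨Df, hDk⟩ : {A : Finset (Fin v) // A.card = k}).1 = Df), hDB]
      omega

lemma dist_eq_dd (A B : {A : Finset (Fin v) // A.card = k}) :
    (genJohnsonGraph v k i).dist A B = dd v k i ((A.1 ∩ B.1).card) := by
  obtain ⟨W, hW⟩ := exists_walk_le hik h2k hD (dd v k i ((A.1 ∩ B.1).card)) A B le_rfl
  have hub := (SimpleGraph.dist_le W).trans hW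
  obtain ⟨P, hP⟩ := (SimpleGraph.Walk.reachable W).exists_walk_length_eq_dist
  have hlb := walk_lower hik h2k hD P
  omega

end walks
end JGaux

/-- The distance formula for `J(v,k,i)`: with `x = |A ∩ B|` and `Δ = v - 2k + 2i`,
`dist(A,B) = 3` if `x < min {i, k - Δ}`; `dist(A,B) = ⌈(k-x)/(k-i)⌉` if `k - Δ ≤ x < i`;
and `dist(A,B) = min {2⌈(k-x)/Δ⌉, 2⌈(x-i)/Δ⌉ + 1}` if `x ≥ i`. -/
theorem dist_formula (v k i : ℕ) (hik : i < k) (hkv : k < v)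
    (h2k : 2 * k ≤ v) (hexc : ¬(v = 2 * k ∧ i = 0))
    (A B : {A : Finset (Fin v) // A.card = k}) :
    ((A.1 ∩ B.1).card < min i (k - (v - 2 * k + 2 * i)) →
      (genJohnsonGraph v k i).dist A B = 3) ∧
    (k - (v - 2 * k + 2 * i) ≤ (A.1 ∩ B.1).card → (A.1 ∩ B.1).card < i →
      (genJohnsonGraph v k i).dist A B = (k - (A.1 ∩ B.1).card) ⌈/⌉ (k - i)) ∧
    (i ≤ (A.1 ∩ B.1).card →
      (genJohnsonGraph v k i).dist A B =
        min (2 * ((k - (A.1 ∩ B.1).card) ⌈/⌉ (v - 2 * k + 2 * i)))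
          (2 * (((A.1 ∩ B.1).card - i) ⌈/⌉ (v - 2 * k + 2 * i)) + 1)) := by
  have h2k' : 2*k ≤ v := by omega
  have hD : 0 < v - 2*k + 2*i := by omega
  have main := JGaux.dist_eq_dd hik h2k' hD A B
  refine ⟨fun h => ?_, fun h h' => ?_, fun h => ?_⟩
  · rw [main, JGaux.dd_of_r1 h]
  · rw [main, JGaux.dd_of_r2 (by omega) h']
  · rw [main, JGaux.dd_of_r3 h]
end

section
/- Assume k > i + 1. Define f(x) = min{2⌈(k − x)/Δ⌉, 2⌈(x − i)/Δ⌉ + 1} for integers x. Then the maximum of f(x) over x ∈ {i+1, i+2, …, k} equals ⌈(k − i − 1)/Δ⌉ + 1. -/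
lemma nat_ceilDiv_le_iff {d a m : ℕ} (hd : 0 < d) : a ⌈/⌉ d ≤ m ↔ a ≤ d * m :=
  ceilDiv_le_iff_le_mul hd

lemma nat_lt_ceilDiv_iff {d a m : ℕ} (hd : 0 < d) : m < a ⌈/⌉ d ↔ d * m < a := by
  rw [lt_iff_not_ge, lt_iff_not_ge, not_iff_not]
  exact nat_ceilDiv_le_iff hd

lemma nat_ceilDiv_mul_add_one {d u : ℕ} (hd : 0 < d) : (u * d + 1) ⌈/⌉ d = u + 1 := by
  refine le_antisymm ?_ ?_
  · rw [nat_ceilDiv_le_iff hd, Nat.mul_add, Nat.mul_one, Nat.mul_comm]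
    omega
  · rw [Nat.add_one_le_iff, nat_lt_ceilDiv_iff hd, Nat.mul_comm]
    omega

/-- For `k > i + 1`, the maximum of
`f(x) = min {2⌈(k - x)/Δ⌉, 2⌈(x - i)/Δ⌉ + 1}` over `x ∈ {i+1, …, k}`
equals `⌈(k - i - 1)/Δ⌉ + 1`, where `Δ = v - 2k + 2i`. -/
theorem max_dist_value (v k i : ℕ) (hik : i < k) (hkv : k < v)
    (h2k : 2 * k ≤ v) (hexc : ¬(v = 2 * k ∧ i = 0))
    (hki : i + 1 < k) :
    IsGreatest
      ((fun x : ℕ =>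
          min (2 * ((k - x) ⌈/⌉ (v - 2 * k + 2 * i)))
            (2 * ((x - i) ⌈/⌉ (v - 2 * k + 2 * i)) + 1)) '' Set.Icc (i + 1) k)
      ((k - i - 1) ⌈/⌉ (v - 2 * k + 2 * i) + 1) := by
  have hexc' : v ≠ 2 * k ∨ i ≠ 0 := by tauto
  set d : ℕ := v - 2 * k + 2 * i with hdd
  have hd : 0 < d := by omega
  set M : ℕ := (k - i - 1) ⌈/⌉ d with hMdef
  -- M ≥ 1
  have hM1 : 1 ≤ M := by
    rw [hMdef, Nat.add_one_le_iff, nat_lt_ceilDiv_iff hd]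
    omega
  -- strict lower bound: d * (M - 1) < k - i - 1
  have hM_gt : d * (M - 1) < k - i - 1 := by
    rw [← nat_lt_ceilDiv_iff hd, ← hMdef]
    omega
  constructor
  · -- membership : there exists x achieving M + 1
    rcases Nat.even_or_odd M with ⟨s, hs⟩ | ⟨s, hs⟩
    · -- M = 2s, s ≥ 1; take x = i + (s-1)*d + 1
      obtain ⟨u, hu⟩ : ∃ u, s = u + 1 := ⟨s - 1, by omega⟩
      have key : d * (2 * u + 1) < k - i - 1 := by
        have h := hM_gt
        rwa [show M - 1 = 2 * u + 1 by omega] at h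
      have key' : d * u + d * u + d < k - i - 1 := by
        rw [show 2 * u + 1 = u + u + 1 by ring, Nat.mul_add, Nat.mul_add, Nat.mul_one] at key
        omega
      refine ⟨i + u * d + 1, ⟨by omega, by rw [Nat.mul_comm] at key'; omega⟩, ?_⟩
      simp only
      have hB : (i + u * d + 1 - i) ⌈/⌉ d = u + 1 := by
        rw [show i + u * d + 1 - i = u * d + 1 by omega]
        exact nat_ceilDiv_mul_add_one hd
      have hA : u + 1 < (k - (i + u * d + 1)) ⌈/⌉ d := by
        rw [nat_lt_ceilDiv_iff hd, Nat.mul_add, Nat.mul_one, Nat.mul_comm] at *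
        omega
      rw [hB]
      omega
    · -- M = 2s + 1 ; take x = k - s*d - 1
      have key : d * (2 * s) < k - i - 1 := by
        have h := hM_gt
        rwa [show M - 1 = 2 * s by omega] at h
      have key' : d * s + d * s < k - i - 1 := by
        rw [Nat.two_mul, Nat.mul_add] at key
        omega
      refine ⟨k - s * d - 1, ⟨by rw [Nat.mul_comm] at key'; omega, by omega⟩, ?_⟩
      simp only
      have hA : (k - (k - s * d - 1)) ⌈/⌉ d = s + 1 := by
        rw [show k - (k - s * d - 1) = s * d + 1 by rw [Nat.mul_comm] at key'; omega]
        exact nat_ceilDiv_mul_add_one hd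
      have hB : s < (k - s * d - 1 - i) ⌈/⌉ d := by
        rw [nat_lt_ceilDiv_iff hd, Nat.mul_comm] at *
        omega
      rw [hA]
      omega
  · -- upper bound
    rintro y ⟨x, ⟨hx1, hx2⟩, rfl⟩
    simp only
    by_contra hcon
    push_neg at hcon
    set A := (k - x) ⌈/⌉ d with hAdef
    set B := (x - i) ⌈/⌉ d with hBdef
    have hA2 : M + 2 ≤ 2 * A := by omega
    have hB2 : M + 2 ≤ 2 * B + 1 := by omega
    obtain ⟨a, ha⟩ : ∃ a, A = a + 1 := ⟨A - 1, by omega⟩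
    obtain ⟨b, hb⟩ : ∃ b, B = b + 1 := ⟨B - 1, by omega⟩
    have haA : d * a < k - x := by
      rw [← nat_lt_ceilDiv_iff hd, ← hAdef]
      omega
    have hbB : d * b < x - i := by
      rw [← nat_lt_ceilDiv_iff hd, ← hBdef]
      omega
    have hsum : d * (a + b) < k - i - 1 := by
      rw [Nat.mul_add]
      omega
    rw [← nat_lt_ceilDiv_iff hd, ← hMdef] at hsum
    omega
end

section
/- If i = 0, then the diameter of X = J(v,k,0) (the Kneser graph) equals ⌈(k − 1)/(v − 2k)⌉ + 1. -/
open Finset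

namespace KneserAux

variable {v k : ℕ}

lemma adj_of_inter (hk : 1 ≤ k) {X Y : {A : Finset (Fin v) // A.card = k}}
    (h : (X.1 ∩ Y.1).card = 0) : (genJohnsonGraph v k 0).Adj X Y := by
  refine ⟨?_, h⟩
  rintro rfl
  rw [inter_self] at h
  have := X.2
  omega

/-- choose a common neighbor: any k-set disjoint from X and D -/
lemma exists_mid (hv : 2*k+1 ≤ v) (hk : 1 ≤ k)
    (X : {A : Finset (Fin v) // A.card = k}) (D0 : Finset (Fin v))
    (hDcard : D0.card = k) (hXD : (X.1 ∪ D0).card ≤ k + (v - 2*k)) :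
    ∃ C : {A : Finset (Fin v) // A.card = k},
      (genJohnsonGraph v k 0).Adj X C ∧ (genJohnsonGraph v k 0).Adj C ⟨D0, hDcard⟩ := by
  have hcompl : k ≤ (univ \ (X.1 ∪ D0)).card := by
    rw [card_sdiff_of_subset (subset_univ _)]
    have : (univ : Finset (Fin v)).card = v := by simp
    omega
  obtain ⟨C0, hC0sub, hC0card⟩ := exists_subset_card_eq hcompl
  have hdisj : Disjoint C0 (X.1 ∪ D0) := (subset_sdiff.mp hC0sub).2
  refine ⟨⟨C0, hC0card⟩, adj_of_inter hk ?_, adj_of_inter hk ?_⟩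
  · rw [card_eq_zero, ← disjoint_iff_inter_eq_empty]
    exact (hdisj.mono_right subset_union_left).symm
  · rw [card_eq_zero, ← disjoint_iff_inter_eq_empty]
    exact hdisj.mono_right subset_union_right

lemma step_up (hv : 2*k+1 ≤ v) (hk : 1 ≤ k) (X B : {A : Finset (Fin v) // A.card = k})
    (hσ : (X.1 ∩ B.1).card < k) :
    ∃ C D : {A : Finset (Fin v) // A.card = k},
      (genJohnsonGraph v k 0).Adj X C ∧ (genJohnsonGraph v k 0).Adj C D ∧
      min k ((X.1 ∩ B.1).card + (v - 2*k)) ≤ (D.1 ∩ B.1).card := by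
  set d := v - 2*k with hd
  set σ := (X.1 ∩ B.1).card with hσdef
  have hBX : (B.1 \ X.1).card = k - σ := by
    have h1 := card_inter_add_card_sdiff B.1 X.1
    rw [inter_comm] at h1
    have := B.2
    omega
  have hXB : (X.1 \ B.1).card = k - σ := by
    have h1 := card_inter_add_card_sdiff X.1 B.1
    have := X.2
    omega
  obtain ⟨S, hSsub, hScard⟩ : ∃ S ⊆ B.1 \ X.1, S.card = min d (k - σ) :=
    exists_subset_card_eq (by rw [hBX]; exact Nat.min_le_right _ _)
  obtain ⟨F, hFsub, hFcard⟩ : ∃ F ⊆ X.1 \ B.1, F.card = (k - σ) - min d (k - σ) :=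
    exists_subset_card_eq (by rw [hXB]; omega)
  set D0 := (X.1 ∩ B.1) ∪ S ∪ F with hD0
  have hSX : Disjoint S X.1 := sdiff_disjoint.mono_left hSsub
  have hSB : S ⊆ B.1 := hSsub.trans sdiff_subset
  have hFX : F ⊆ X.1 := hFsub.trans sdiff_subset
  have hFB : Disjoint F B.1 := sdiff_disjoint.mono_left hFsub
  have hd1 : Disjoint (X.1 ∩ B.1) S := (hSX.mono_right inter_subset_left).symm
  have hd2 : Disjoint ((X.1 ∩ B.1) ∪ S) F :=
    disjoint_union_left.mpr ⟨(hFB.mono_right inter_subset_right).symm, hSX.mono_right hFX⟩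
  have hD0card : D0.card = k := by
    rw [hD0, card_union_of_disjoint hd2, card_union_of_disjoint hd1, hScard, hFcard]
    omega
  have hD0B : min k (σ + d) ≤ (D0 ∩ B.1).card := by
    have hsub : (X.1 ∩ B.1) ∪ S ⊆ D0 ∩ B.1 := by
      rw [hD0]
      exact subset_inter (subset_union_left) (union_subset inter_subset_right hSB)
    have := card_le_card hsub
    rw [card_union_of_disjoint hd1, hScard] at this
    omega
  have hXD : (X.1 ∪ D0).card ≤ k + d := by
    have hsub : X.1 ∪ D0 ⊆ X.1 ∪ S := by
      rw [hD0]
      exact union_subset subset_union_left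
        (union_subset (union_subset (inter_subset_left.trans subset_union_left)
          subset_union_right) (hFX.trans subset_union_left))
    calc (X.1 ∪ D0).card ≤ (X.1 ∪ S).card := card_le_card hsub
      _ ≤ X.1.card + S.card := card_union_le _ _
      _ ≤ k + d := by rw [X.2, hScard]; omega
  obtain ⟨C, hXC, hCD⟩ := exists_mid hv hk X D0 hD0card hXD
  exact ⟨C, ⟨D0, hD0card⟩, hXC, hCD, hD0B⟩

lemma step_down (hv : 2*k+1 ≤ v) (hk : 1 ≤ k) (X B : {A : Finset (Fin v) // A.card = k})
    (hσ : 0 < (X.1 ∩ B.1).card) :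
    ∃ C D : {A : Finset (Fin v) // A.card = k},
      (genJohnsonGraph v k 0).Adj X C ∧ (genJohnsonGraph v k 0).Adj C D ∧
      (D.1 ∩ B.1).card + min (v - 2*k) ((X.1 ∩ B.1).card) ≤ (X.1 ∩ B.1).card := by
  set d := v - 2*k with hd
  set σ := (X.1 ∩ B.1).card with hσdef
  obtain ⟨R, hRsub, hRcard⟩ : ∃ R ⊆ X.1 ∩ B.1, R.card = min d σ :=
    exists_subset_card_eq (Nat.min_le_right d σ)
  have hXuB : (X.1 ∪ B.1).card = 2*k - σ := by
    have h1 := card_union_add_card_inter X.1 B.1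
    have := X.2; have := B.2
    omega
  obtain ⟨N, hNsub, hNcard⟩ : ∃ N ⊆ univ \ (X.1 ∪ B.1), N.card = min d σ := by
    apply exists_subset_card_eq
    rw [card_sdiff_of_subset (subset_univ _), hXuB]
    have : (univ : Finset (Fin v)).card = v := by simp
    have := X.2
    have hσk : σ ≤ k := by
      have h3 := card_le_card (inter_subset_left (s₁ := X.1) (s₂ := B.1))
      rw [X.2] at h3; exact h3
    omega
  have hNX : Disjoint N (X.1 ∪ B.1) := (subset_sdiff.mp hNsub).2
  have hRX : R ⊆ X.1 := hRsub.trans inter_subset_left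
  set D0 := (X.1 \ R) ∪ N with hD0
  have hD0card : D0.card = k := by
    rw [hD0, card_union_of_disjoint
      ((hNX.mono_right (sdiff_subset.trans subset_union_left)).symm),
      card_sdiff_of_subset hRX, hRcard, X.2]
    have : min d σ ≤ k := by
      have h3 := card_le_card (inter_subset_left (s₁ := X.1) (s₂ := B.1))
      rw [X.2] at h3
      omega
    omega
  have hD0B : (D0 ∩ B.1).card + min d σ ≤ σ := by
    have hsub : D0 ∩ B.1 ⊆ (X.1 ∩ B.1) \ R := by
      intro x hx
      rw [mem_inter] at hx
      rcases mem_union.mp hx.1 with h | h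
      · rw [mem_sdiff] at h ⊢
        exact ⟨mem_inter.mpr ⟨h.1, hx.2⟩, h.2⟩
      · exact absurd hx.2 (disjoint_left.mp (hNX.mono_right subset_union_right) h)
    have h2 := card_le_card hsub
    rw [card_sdiff_of_subset hRsub, hRcard] at h2
    omega
  have hXD : (X.1 ∪ D0).card ≤ k + d := by
    have hsub : X.1 ∪ D0 ⊆ X.1 ∪ N := by
      rw [hD0]
      exact union_subset subset_union_left
        (union_subset (sdiff_subset.trans subset_union_left) subset_union_right)
    calc (X.1 ∪ D0).card ≤ (X.1 ∪ N).card := card_le_card hsub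
      _ ≤ X.1.card + N.card := card_union_le _ _
      _ ≤ k + d := by rw [X.2, hNcard]; omega
  obtain ⟨C, hXC, hCD⟩ := exists_mid hv hk X D0 hD0card hXD
  exact ⟨C, ⟨D0, hD0card⟩, hXC, hCD, hD0B⟩

lemma eq_of_inter {X B : {A : Finset (Fin v) // A.card = k}}
    (h : k ≤ (X.1 ∩ B.1).card) : X = B := by
  have h1 : X.1 ∩ B.1 = X.1 :=
    eq_of_subset_of_card_le inter_subset_left (by rw [X.2]; exact h)
  have h2 : X.1 ⊆ B.1 := by rw [← h1]; exact inter_subset_right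
  exact Subtype.ext (eq_of_subset_of_card_le h2 (by rw [X.2, B.2]))

lemma ub_even (hv : 2*k+1 ≤ v) (hk : 1 ≤ k) :
    ∀ (n : ℕ) (X B : {A : Finset (Fin v) // A.card = k}),
      k ≤ (X.1 ∩ B.1).card + n*(v - 2*k) →
      (genJohnsonGraph v k 0).edist X B ≤ 2*(n:ℕ∞) := by
  intro n
  induction n with
  | zero =>
    intro X B h
    have hXB : X = B := eq_of_inter (by simpa using h)
    rw [hXB]
    simp [SimpleGraph.edist_self]
  | succ n ih =>
    intro X B h
    by_cases hc : (X.1 ∩ B.1).card < k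
    · obtain ⟨C, D, hXC, hCD, hmin⟩ := step_up hv hk X B hc
      have hexp : (n+1)*(v - 2*k) = n*(v - 2*k) + (v - 2*k) := by ring
      have key : k ≤ (D.1 ∩ B.1).card + n*(v - 2*k) := by omega
      calc (genJohnsonGraph v k 0).edist X B
          ≤ (genJohnsonGraph v k 0).edist X C + (genJohnsonGraph v k 0).edist C D
            + (genJohnsonGraph v k 0).edist D B := by
            rw [add_assoc]
            apply le_trans (SimpleGraph.edist_triangle (v := C))
            exact add_le_add_right (SimpleGraph.edist_triangle (v := D)) _
        _ ≤ 1 + 1 + 2*(n:ℕ∞) := by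
            gcongr
            · exact (SimpleGraph.edist_eq_one_iff_adj.mpr hXC).le
            · exact (SimpleGraph.edist_eq_one_iff_adj.mpr hCD).le
            · exact ih D B key
        _ = 2*((n+1 : ℕ):ℕ∞) := by push_cast; ring
    · have hXB : X = B := eq_of_inter (by omega)
      rw [hXB]
      simp [SimpleGraph.edist_self]

lemma ub_odd (hv : 2*k+1 ≤ v) (hk : 1 ≤ k) :
    ∀ (n : ℕ) (X B : {A : Finset (Fin v) // A.card = k}),
      (X.1 ∩ B.1).card ≤ n*(v - 2*k) →
      (genJohnsonGraph v k 0).edist X B ≤ 2*(n:ℕ∞) + 1 := by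
  intro n
  induction n with
  | zero =>
    intro X B h
    have hadj : (genJohnsonGraph v k 0).Adj X B := adj_of_inter hk (by omega)
    rw [SimpleGraph.edist_eq_one_iff_adj.mpr hadj]
    simp
  | succ n ih =>
    intro X B h
    by_cases hc : 0 < (X.1 ∩ B.1).card
    · obtain ⟨C, D, hXC, hCD, hmin⟩ := step_down hv hk X B hc
      have hexp : (n+1)*(v - 2*k) = n*(v - 2*k) + (v - 2*k) := by ring
      have hd1 : 1 ≤ v - 2*k := by omega
      have key : (D.1 ∩ B.1).card ≤ n*(v - 2*k) := by omega
      calc (genJohnsonGraph v k 0).edist X B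
          ≤ (genJohnsonGraph v k 0).edist X C + (genJohnsonGraph v k 0).edist C D
            + (genJohnsonGraph v k 0).edist D B := by
            rw [add_assoc]
            apply le_trans (SimpleGraph.edist_triangle (v := C))
            exact add_le_add_right (SimpleGraph.edist_triangle (v := D)) _
        _ ≤ 1 + 1 + (2*(n:ℕ∞) + 1) := by
            gcongr
            · exact (SimpleGraph.edist_eq_one_iff_adj.mpr hXC).le
            · exact (SimpleGraph.edist_eq_one_iff_adj.mpr hCD).le
            · exact ih D B key
        _ = 2*((n+1 : ℕ):ℕ∞) + 1 := by push_cast; ring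
    · have hadj : (genJohnsonGraph v k 0).Adj X B := adj_of_inter hk (by omega)
      rw [SimpleGraph.edist_eq_one_iff_adj.mpr hadj]
      calc (1:ℕ∞) ≤ 0 + 1 := by norm_num
        _ ≤ 2*((n+1 : ℕ):ℕ∞) + 1 := by gcongr; exact zero_le

lemma walk_bound (hv : 2*k+1 ≤ v) {X B : {A : Finset (Fin v) // A.card = k}}
    (w : (genJohnsonGraph v k 0).Walk X B) :
    ∀ p : ℕ, (w.length = 2*p → k ≤ (X.1 ∩ B.1).card + p*(v - 2*k)) ∧
             (w.length = 2*p + 1 → (X.1 ∩ B.1).card ≤ p*(v - 2*k)) := by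
  induction w with
  | nil =>
    rename_i u
    intro p
    refine ⟨fun _ => ?_, fun hp => by simp at hp⟩
    have h1 : (u.1 ∩ u.1).card = k := by rw [inter_self, u.2]
    omega
  | cons huy w ih =>
    rename_i u y b
    have hdisj : Disjoint u.1 y.1 := by
      rw [disjoint_iff_inter_eq_empty, ← card_eq_zero]
      exact huy.2
    have fact1 : (u.1 ∩ b.1).card + (y.1 ∩ b.1).card ≤ k := by
      have hsub : (u.1 ∩ b.1) ∪ (y.1 ∩ b.1) ⊆ b.1 :=
        union_subset inter_subset_right inter_subset_right
      have hdd : Disjoint (u.1 ∩ b.1) (y.1 ∩ b.1) :=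
        hdisj.mono inter_subset_left inter_subset_left
      have := card_le_card hsub
      rw [card_union_of_disjoint hdd, b.2] at this
      exact this
    have fact2 : k ≤ (u.1 ∩ b.1).card + (y.1 ∩ b.1).card + (v - 2*k) := by
      have hsub : b.1 ⊆ (u.1 ∩ b.1) ∪ (y.1 ∩ b.1) ∪ (univ \ (u.1 ∪ y.1)) := by
        intro x hx
        simp only [mem_union, mem_inter, mem_sdiff, mem_univ, true_and]
        by_cases hxu : x ∈ u.1
        · exact Or.inl (Or.inl ⟨hxu, hx⟩)
        · by_cases hxy : x ∈ y.1
          · exact Or.inl (Or.inr ⟨hxy, hx⟩)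
          · exact Or.inr (by simp [hxu, hxy])
      have hcompl : (univ \ (u.1 ∪ y.1)).card = v - 2*k := by
        rw [card_sdiff_of_subset (subset_univ _), card_union_of_disjoint hdisj, u.2, y.2]
        simp [two_mul]
      have h2 := card_le_card hsub
      have h3 := card_union_le ((u.1 ∩ b.1) ∪ (y.1 ∩ b.1)) (univ \ (u.1 ∪ y.1))
      have h4 := card_union_le (u.1 ∩ b.1) (y.1 ∩ b.1)
      rw [b.2] at h2
      omega
    intro p
    simp only [SimpleGraph.Walk.length_cons]
    constructor
    · intro hp
      obtain ⟨q, rfl⟩ : ∃ q, p = q + 1 := ⟨p - 1, by omega⟩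
      have h5 := (ih q).2 (by omega)
      have hexp : (q+1)*(v - 2*k) = q*(v - 2*k) + (v - 2*k) := by ring
      omega
    · intro hp
      have h5 := (ih p).1 (by omega)
      omega

lemma arith_min (d k σ : ℕ) (hd : 1 ≤ d) (hk : 1 ≤ k) (hσ : σ ≤ k) :
    2*((k - σ) ⌈/⌉ d) ≤ (k-1) ⌈/⌉ d + 1 ∨ 2*(σ ⌈/⌉ d) + 1 ≤ (k-1) ⌈/⌉ d + 1 := by
  simp only [Nat.ceilDiv_eq_add_pred_div]
  by_cases hσ0 : σ = 0
  · right
    subst hσ0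
    rw [show (0:ℕ) + d - 1 = d - 1 by omega, Nat.div_eq_of_lt (by omega)]
    simp
  by_cases hσk : σ = k
  · left
    rw [show k - σ + d - 1 = d - 1 by omega, Nat.div_eq_of_lt (by omega)]
    simp
  have h1 : 1 ≤ σ := by omega
  have h2 : σ + 1 ≤ k := by omega
  have ha : (σ + d - 1)/d = (σ-1)/d + 1 := by
    rw [show σ + d - 1 = (σ-1) + d by omega, Nat.add_div_right _ (by omega)]
  have hb : (k - σ + d - 1)/d = (k-σ-1)/d + 1 := by
    rw [show k - σ + d - 1 = (k-σ-1) + d by omega, Nat.add_div_right _ (by omega)]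
  have ht : (k - 1 + d - 1)/d = (k-2)/d + 1 := by
    rw [show k - 1 + d - 1 = (k-2) + d by omega, Nat.add_div_right _ (by omega)]
  have hsum : (σ-1)/d + (k-σ-1)/d ≤ (k-2)/d := by
    rw [Nat.le_div_iff_mul_le (by omega : 0 < d), add_mul]
    have u1 := Nat.div_mul_le_self (σ-1) d
    have u2 := Nat.div_mul_le_self (k-σ-1) d
    omega
  rw [ha, hb, ht]
  omega

end KneserAux

open KneserAux

/-- If `i = 0` (the Kneser graph), the diameter of `J(v,k,0)` equals
`⌈(k - 1)/(v - 2k)⌉ + 1`. -/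
theorem kneser_diam (v k i : ℕ) (hik : i < k) (hkv : k < v)
    (h2k : 2 * k ≤ v) (hexc : ¬(v = 2 * k ∧ i = 0))
    (hi : i = 0) :
    (genJohnsonGraph v k i).diam = (k - 1) ⌈/⌉ (v - 2 * k) + 1 := by
  subst hi
  have hk1 : 1 ≤ k := hik
  have hv : 2*k + 1 ≤ v := by
    have hne : v ≠ 2*k := fun hh => hexc ⟨hh, rfl⟩
    omega
  set G := genJohnsonGraph v k 0 with hG
  set d := v - 2*k with hd
  have hd0 : 0 < d := by omega
  set t := (k-1) ⌈/⌉ d with ht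
  -- upper bound
  have hub : ∀ X B : {A : Finset (Fin v) // A.card = k},
      G.edist X B ≤ ((t+1 : ℕ) : ℕ∞) := by
    intro X B
    have hσk : (X.1 ∩ B.1).card ≤ k := by
      have h3 := card_le_card (inter_subset_left (s₁ := X.1) (s₂ := B.1))
      rw [X.2] at h3; exact h3
    rcases arith_min d k ((X.1 ∩ B.1).card) hd0 hk1 hσk with h | h
    · have hkey : k ≤ (X.1 ∩ B.1).card + ((k - (X.1 ∩ B.1).card) ⌈/⌉ d) * d := by
        have := (ceilDiv_le_iff_le_mul hd0
          (b := k - (X.1 ∩ B.1).card) (c := (k - (X.1 ∩ B.1).card) ⌈/⌉ d)).mp le_rfl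
        rw [mul_comm] at this
        omega
      refine le_trans (ub_even hv hk1 _ X B hkey) ?_
      calc (2 * (((k - (X.1 ∩ B.1).card) ⌈/⌉ d : ℕ) : ℕ∞))
          = ((2 * ((k - (X.1 ∩ B.1).card) ⌈/⌉ d) : ℕ) : ℕ∞) := by push_cast; ring
        _ ≤ ((t+1 : ℕ) : ℕ∞) := Nat.cast_le.mpr h
    · have hkey : (X.1 ∩ B.1).card ≤ (((X.1 ∩ B.1).card) ⌈/⌉ d) * d := by
        have := (ceilDiv_le_iff_le_mul hd0
          (b := (X.1 ∩ B.1).card) (c := ((X.1 ∩ B.1).card) ⌈/⌉ d)).mp le_rfl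
        rw [mul_comm] at this
        omega
      refine le_trans (ub_odd hv hk1 _ X B hkey) ?_
      calc (2 * ((((X.1 ∩ B.1).card) ⌈/⌉ d : ℕ) : ℕ∞) + 1)
          = ((2 * (((X.1 ∩ B.1).card) ⌈/⌉ d) + 1 : ℕ) : ℕ∞) := by push_cast; ring
        _ ≤ ((t+1 : ℕ) : ℕ∞) := Nat.cast_le.mpr h
  have hediam : G.ediam ≤ ((t+1 : ℕ) : ℕ∞) :=
    SimpleGraph.ediam_le_of_edist_le fun u w => hub u w
  have hnetop : G.ediam ≠ ⊤ := ne_top_of_le_ne_top (ENat.coe_ne_top _) hediam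
  have hdiam_le : G.diam ≤ t + 1 := by
    have h4 := ENat.toNat_le_toNat hediam (ENat.coe_ne_top _)
    rw [ENat.toNat_coe] at h4
    simpa [SimpleGraph.diam] using h4
  -- choice of s
  obtain ⟨s, hsk, hslow⟩ : ∃ s, s + 1 ≤ k ∧
      ((t = 0 ∧ s = 0) ∨
       (1 ≤ t ∧ s = ((t+1)/2 - 1)*d + 1 ∧ (t-1)*d + 2 ≤ k)) := by
    rcases Nat.eq_zero_or_pos t with ht0 | ht1
    · exact ⟨0, by omega, Or.inl ⟨ht0, rfl⟩⟩
    · have hk2 : 2 ≤ k := by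
        by_contra hcon
        have hkeq : k = 1 := by omega
        rw [ht, hkeq, Nat.ceilDiv_eq_add_pred_div,
          show 1 - 1 + d - 1 = d - 1 by omega, Nat.div_eq_of_lt (by omega)] at ht1
        omega
      have ht2 : t = (k-2)/d + 1 := by
        rw [ht, Nat.ceilDiv_eq_add_pred_div, show k - 1 + d - 1 = (k-2) + d by omega,
          Nat.add_div_right _ hd0]
      have ht3 : (t-1)*d + 2 ≤ k := by
        rw [ht2]
        simp only [Nat.add_sub_cancel]
        have := Nat.div_mul_le_self (k-2) d
        omega
      refine ⟨((t+1)/2 - 1)*d + 1, ?_, Or.inr ⟨ht1, rfl, ht3⟩⟩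
      have hq : (t+1)/2 - 1 ≤ t - 1 := by omega
      have := Nat.mul_le_mul_right d hq
      omega
  -- construct the extreme pair
  have hAbound : ∀ m ∈ Finset.range k, m < v := by
    intro m hm; rw [Finset.mem_range] at hm; omega
  have hBbound : ∀ m ∈ Finset.range s ∪ Finset.Ico k (2*k - s), m < v := by
    intro m hm
    rcases Finset.mem_union.mp hm with hm | hm
    · rw [Finset.mem_range] at hm; omega
    · rw [Finset.mem_Ico] at hm; omega
  have hBdisj : Disjoint (Finset.range s) (Finset.Ico k (2*k - s)) := by
    rw [Finset.disjoint_left]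
    intro m hm1 hm2
    rw [Finset.mem_range] at hm1
    rw [Finset.mem_Ico] at hm2
    omega
  set A : {A : Finset (Fin v) // A.card = k} :=
    ⟨(Finset.range k).attachFin hAbound,
      by rw [Finset.card_attachFin, Finset.card_range]⟩ with hA
  set B : {A : Finset (Fin v) // A.card = k} :=
    ⟨(Finset.range s ∪ Finset.Ico k (2*k - s)).attachFin hBbound,
      by rw [Finset.card_attachFin, Finset.card_union_of_disjoint hBdisj,
        Finset.card_range, Nat.card_Ico]; omega⟩ with hB
  have hABs : (A.1 ∩ B.1).card = s := by
    have hinter : A.1 ∩ B.1 = (Finset.range s).attachFin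
        (fun m hm => by rw [Finset.mem_range] at hm; omega) := by
      ext x
      simp only [hA, hB, Finset.mem_inter, Finset.mem_attachFin, Finset.mem_union,
        Finset.mem_range, Finset.mem_Ico]
      omega
    rw [hinter, Finset.card_attachFin, Finset.card_range]
  -- lower bound
  have hreach : G.Reachable A B :=
    SimpleGraph.reachable_of_edist_ne_top
      (ne_top_of_le_ne_top (ENat.coe_ne_top _) (hub A B))
  obtain ⟨w, hw⟩ := hreach.exists_walk_length_eq_dist
  have hlen : t + 1 ≤ w.length := by
    rcases Nat.even_or_odd w.length with ⟨p, hp⟩ | ⟨p, hp⟩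
    · have hbd := (walk_bound hv w p).1 (by omega)
      rw [hABs, ← hd] at hbd
      rcases hslow with ⟨ht0, hs0⟩ | ⟨ht1, hs1, hk2⟩
      · have hp1 : p ≠ 0 := by
          rintro rfl
          simp at hbd
          omega
        omega
      · set q := (t+1)/2 with hq
        have hq1 : 1 ≤ q := by omega
        have hcontra : t - q + 1 ≤ p := by
          by_contra hcon
          have hple : p ≤ t - q := by omega
          have hmul := Nat.mul_le_mul_right d hple
          have hsumq : (t-q)*d + (q-1)*d = (t-1)*d := by
            rw [← add_mul]
            congr 1
            omega
          omega
        omega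
    · have hbd := (walk_bound hv w p).2 (by omega)
      rw [hABs, ← hd] at hbd
      rcases hslow with ⟨ht0, hs0⟩ | ⟨ht1, hs1, hk2⟩
      · omega
      · set q := (t+1)/2 with hq
        have hq1 : 1 ≤ q := by omega
        have hqp : q ≤ p := by
          by_contra hcon
          have hple : p ≤ q - 1 := by omega
          have hmul := Nat.mul_le_mul_right d hple
          omega
        omega
  have hdist : t + 1 ≤ G.dist A B := hw ▸ hlen
  have hdiam_ge := SimpleGraph.dist_le_diam hnetop (u := A) (v := B)
  omega
end

section
/- The diameter of X = J(v,k,i) is given by: diam(X) = ⌈(k − i − 1)/Δ⌉ + 1 if v < 3(k − i) − 1 or i = 0; diam(X) = 3 if 3(k − i) − 1 ≤ v < 3k − 2i and i ≠ 0; and diam(X) = ⌈k/(k − i)⌉ if v ≥ 3k − 2i and i ≠ 0. -/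
namespace JGAux

lemma ceil_le {a b c : ℕ} (h : a ≤ b * c) : a ⌈/⌉ b ≤ c := by
  rcases Nat.eq_zero_or_pos b with hb | hb
  · subst hb; simp [Nat.ceilDiv_eq_add_pred_div]
  · exact (ceilDiv_le_iff_le_smul hb).2 h

lemma ceil_spec {a b : ℕ} (hb : 0 < b) : a ≤ b * (a ⌈/⌉ b) :=
  le_smul_ceilDiv hb

lemma le_ceil {a b c : ℕ} (hb : 0 < b) (h : b * c < a + b) : c ≤ a ⌈/⌉ b := by
  by_contra hc
  push_neg at hc
  have h1 : a ⌈/⌉ b ≤ c - 1 := by omega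
  rw [ceilDiv_le_iff_le_smul hb] at h1
  simp only [smul_eq_mul] at h1
  have h2 : b * (c-1) + b ≤ b * c := by
    rcases Nat.exists_eq_add_of_le (by omega : 1 ≤ c) with ⟨c', rfl⟩
    have : 1 + c' - 1 = c' := by omega
    rw [this, Nat.mul_add, Nat.mul_one]; omega
  omega

lemma ceil_min {a b : ℕ} (ha : 0 < a ⌈/⌉ b) : b * (a ⌈/⌉ b - 1) < a := by
  by_contra h
  push_neg at h
  have := ceil_le h
  omega

lemma ceil_mono {a a' b : ℕ} (h : a ≤ a') : a ⌈/⌉ b ≤ a' ⌈/⌉ b := by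
  simp only [Nat.ceilDiv_eq_add_pred_div]
  exact Nat.div_le_div_right (by omega)

end JGAux

namespace JGAux
lemma ceil_add_self {a b : ℕ} (hb : 0 < b) : (a + b) ⌈/⌉ b = a ⌈/⌉ b + 1 := by
  simp only [Nat.ceilDiv_eq_add_pred_div]
  have h : a + b + b - 1 = (a + b - 1) + b := by omega
  rw [h, Nat.add_div_right _ hb]

lemma ceil_pos {a b : ℕ} (hb : 0 < b) (ha : 0 < a) : 0 < a ⌈/⌉ b :=
  le_ceil hb (by omega)
end JGAux


namespace JGSets
open Finset
variable {α : Type*} [DecidableEq α] [Fintype α]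

/-- Realize a pair of k-sets with prescribed intersection size. -/
lemma realize_pair {k s : ℕ} (hs : s ≤ k) (hk : 2 * k ≤ Fintype.card α) :
    ∃ A B : Finset α, A.card = k ∧ B.card = k ∧ (A ∩ B).card = s := by
  obtain ⟨A, -, hA⟩ := exists_subset_card_eq (show k ≤ (univ : Finset α).card by
    simpa using by omega)
  obtain ⟨S, hSA, hS⟩ := exists_subset_card_eq (show s ≤ A.card by omega)
  have hcompl : (k - s) ≤ Aᶜ.card := by
    rw [card_compl, hA]; omega
  obtain ⟨T, hTA, hT⟩ := exists_subset_card_eq hcompl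
  refine ⟨A, S ∪ T, hA, ?_, ?_⟩
  · rw [card_union_of_disjoint (disjoint_left.mpr fun x hxS hxT => (mem_compl.mp (hTA hxT)) (hSA hxS))]
    omega
  · have h1 : A ∩ (S ∪ T) = S := by
      ext x
      simp only [mem_inter, mem_union]
      constructor
      · rintro ⟨hxA, hxS | hxT⟩
        · exact hxS
        · exact absurd hxA (mem_compl.mp (hTA hxT))
      · intro hxS; exact ⟨hSA hxS, Or.inl hxS⟩
    rw [h1, hS]

/-- Cardinality constraints forced by one adjacency step. -/
lemma adj_bounds {v k i : ℕ} (hcard : Fintype.card α = v)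
    {A C C' : Finset α} (hA : A.card = k) (hC : C.card = k) (hC' : C'.card = k)
    (hi : (C ∩ C').card = i) :
    (A ∩ C).card ≤ k ∧ (A ∩ C').card ≤ k ∧
    (A ∩ C').card + i ≤ (A ∩ C).card + k ∧
    (A ∩ C).card + i ≤ (A ∩ C').card + k ∧
    (A ∩ C).card + (A ∩ C').card ≤ k + i ∧
    3 * k ≤ v + (A ∩ C).card + (A ∩ C').card + i := by
  have ht : (A ∩ C).card ≤ k := hC ▸ card_le_card inter_subset_right
  have ht' : (A ∩ C').card ≤ k := hC' ▸ card_le_card inter_subset_right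
  -- sdiff cards
  have hCC' : (C' ∩ C).card = i := by rw [inter_comm]; exact hi
  have hsd1 : (C' \ C).card + i = k := by
    have := card_inter_add_card_sdiff C' C
    omega
  have hsd2 : (C \ C').card + i = k := by
    have := card_inter_add_card_sdiff C C'
    omega
  -- (1) : A∩C' ⊆ (A∩C) ∪ (C'\C)
  have h1 : (A ∩ C').card + i ≤ (A ∩ C).card + k := by
    have hsub : A ∩ C' ⊆ (A ∩ C) ∪ (C' \ C) := by
      intro x hx
      simp only [mem_inter] at hx
      by_cases hxC : x ∈ C
      · exact mem_union_left _ (mem_inter.mpr ⟨hx.1, hxC⟩)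
      · exact mem_union_right _ (mem_sdiff.mpr ⟨hx.2, hxC⟩)
    have := card_le_card hsub
    have := card_union_le (A ∩ C) (C' \ C)
    omega
  have h2 : (A ∩ C).card + i ≤ (A ∩ C').card + k := by
    have hsub : A ∩ C ⊆ (A ∩ C') ∪ (C \ C') := by
      intro x hx
      simp only [mem_inter] at hx
      by_cases hxC : x ∈ C'
      · exact mem_union_left _ (mem_inter.mpr ⟨hx.1, hxC⟩)
      · exact mem_union_right _ (mem_sdiff.mpr ⟨hx.2, hxC⟩)
    have := card_le_card hsub
    have := card_union_le (A ∩ C') (C \ C')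
    omega
  have h3 : (A ∩ C).card + (A ∩ C').card ≤ k + i := by
    have he : ((A ∩ C) ∪ (A ∩ C')).card + ((A ∩ C) ∩ (A ∩ C')).card
        = (A ∩ C).card + (A ∩ C').card := card_union_add_card_inter _ _
    have hu : ((A ∩ C) ∪ (A ∩ C')).card ≤ k := by
      refine hA ▸ card_le_card ?_
      intro x hx
      rcases mem_union.mp hx with h | h
      · exact (mem_inter.mp h).1
      · exact (mem_inter.mp h).1
    have hi2 : ((A ∩ C) ∩ (A ∩ C')).card ≤ i := by
      refine hi ▸ card_le_card ?_
      intro x hx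
      simp only [mem_inter] at hx ⊢
      exact ⟨hx.1.2, hx.2.2⟩
    omega
  have h4 : 3 * k ≤ v + (A ∩ C).card + (A ∩ C').card + i := by
    have e1 : (A ∪ C).card + (A ∩ C).card = A.card + C.card := card_union_add_card_inter _ _
    have e2 : ((A ∪ C) ∪ C').card + ((A ∪ C) ∩ C').card = (A ∪ C).card + C'.card :=
      card_union_add_card_inter _ _
    have e3 : ((A ∪ C) ∩ C') = (A ∩ C') ∪ (C ∩ C') := union_inter_distrib_right ..
    have e4 : ((A ∩ C') ∪ (C ∩ C')).card ≤ (A ∩ C').card + (C ∩ C').card := card_union_le _ _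
    have e5 : ((A ∪ C) ∪ C').card ≤ v := hcard ▸ card_le_univ _
    rw [e3] at e2
    omega
  exact ⟨ht, ht', h1, h2, h3, h4⟩

/-- Step construction: given C with |A∩C| = t and a feasible t', build C' adjacent-compatible. -/
lemma step_construct {v k i t t' : ℕ} (hcard : Fintype.card α = v) (hik : i ≤ k) (hv : 2 * k ≤ v)
    {A C : Finset α} (hA : A.card = k) (hC : C.card = k) (ht : (A ∩ C).card = t)
    (h0 : t ≤ k) (h1 : t' ≤ k) (h2 : t' + i ≤ t + k) (h3 : t + i ≤ t' + k)
    (h4 : t + t' ≤ k + i) (h5 : 3 * k ≤ v + t + t' + i) :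
    ∃ C' : Finset α, C'.card = k ∧ (C ∩ C').card = i ∧ (A ∩ C').card = t' := by
  classical
  set x := max (max (t + i - k) (t' + i - k)) (t + t' - k) with hx
  have hx_i : x ≤ i := by omega
  have hx_t : x ≤ t := by omega
  have hx_t' : x ≤ t' := by omega
  -- regions
  have hR1 : (A ∩ C).card = t := ht
  have hR2 : (C \ A).card = k - t := by
    have := card_inter_add_card_sdiff C A
    rw [inter_comm] at this
    omega
  have hR3 : (A \ C).card = k - t := by
    have := card_inter_add_card_sdiff A C
    omega
  have hR4 : ((A ∪ C)ᶜ).card = v - (2 * k - t) := by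
    rw [card_compl, hcard]
    have := card_union_add_card_inter A C
    omega
  obtain ⟨S1, hS1sub, hS1⟩ := exists_subset_card_eq (show x ≤ (A ∩ C).card by omega)
  obtain ⟨S2, hS2sub, hS2⟩ := exists_subset_card_eq (show i - x ≤ (C \ A).card by omega)
  obtain ⟨S3, hS3sub, hS3⟩ := exists_subset_card_eq (show t' - x ≤ (A \ C).card by omega)
  obtain ⟨S4, hS4sub, hS4⟩ := exists_subset_card_eq
    (show (k - i) - (t' - x) ≤ ((A ∪ C)ᶜ).card by omega)
  -- membership characterizations
  have m1 : ∀ y ∈ S1, y ∈ A ∧ y ∈ C := fun y hy => mem_inter.mp (hS1sub hy)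
  have m2 : ∀ y ∈ S2, y ∈ C ∧ y ∉ A := fun y hy => mem_sdiff.mp (hS2sub hy)
  have m3 : ∀ y ∈ S3, y ∈ A ∧ y ∉ C := fun y hy => mem_sdiff.mp (hS3sub hy)
  have m4 : ∀ y ∈ S4, y ∉ A ∧ y ∉ C := fun y hy => by
    have := mem_compl.mp (hS4sub hy)
    simp only [mem_union] at this
    tauto
  refine ⟨S1 ∪ S2 ∪ S3 ∪ S4, ?_, ?_, ?_⟩
  · have d12 : Disjoint S1 S2 := disjoint_left.mpr fun y h1 h2 => (m2 y h2).2 (m1 y h1).1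
    have d123 : Disjoint (S1 ∪ S2) S3 := disjoint_left.mpr fun y h h3 => by
      rcases mem_union.mp h with h' | h'
      · exact (m3 y h3).2 (m1 y h').2
      · exact (m3 y h3).2 (m2 y h').1
    have d1234 : Disjoint (S1 ∪ S2 ∪ S3) S4 := disjoint_left.mpr fun y h h4 => by
      rcases mem_union.mp h with h' | h'
      · rcases mem_union.mp h' with h'' | h''
        · exact (m4 y h4).1 (m1 y h'').1
        · exact (m4 y h4).2 (m2 y h'').1
      · exact (m4 y h4).1 (m3 y h').1
    rw [card_union_of_disjoint d1234, card_union_of_disjoint d123, card_union_of_disjoint d12,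
      hS1, hS2, hS3, hS4]
    omega
  · have he : C ∩ (S1 ∪ S2 ∪ S3 ∪ S4) = S1 ∪ S2 := by
      ext y
      simp only [mem_inter, mem_union]
      constructor
      · rintro ⟨hyC, (((h|h)|h)|h)⟩
        · exact Or.inl h
        · exact Or.inr h
        · exact absurd hyC (m3 y h).2
        · exact absurd hyC (m4 y h).2
      · rintro (h | h)
        · exact ⟨(m1 y h).2, Or.inl (Or.inl (Or.inl h))⟩
        · exact ⟨(m2 y h).1, Or.inl (Or.inl (Or.inr h))⟩
    rw [he, card_union_of_disjoint
      (disjoint_left.mpr fun y h1 h2 => (m2 y h2).2 (m1 y h1).1), hS1, hS2]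
    omega
  · have he : A ∩ (S1 ∪ S2 ∪ S3 ∪ S4) = S1 ∪ S3 := by
      ext y
      simp only [mem_inter, mem_union]
      constructor
      · rintro ⟨hyA, (((h|h)|h)|h)⟩
        · exact Or.inl h
        · exact absurd hyA (m2 y h).2
        · exact Or.inr h
        · exact absurd hyA (m4 y h).1
      · rintro (h | h)
        · exact ⟨(m1 y h).1, Or.inl (Or.inl (Or.inl h))⟩
        · exact ⟨(m3 y h).1, Or.inl (Or.inr h)⟩
    rw [he, card_union_of_disjoint
      (disjoint_left.mpr fun y h1 h3 => (m3 y h3).2 (m1 y h1).2), hS1, hS3]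
    omega

end JGSets

namespace JGWalk
open Finset SimpleGraph

lemma diam_eq_of {V' : Type*} (G : SimpleGraph V') (F : ℕ)
    (upper : ∀ u v : V', ∃ w : G.Walk u v, w.length ≤ F)
    (lower : ∃ u v : V', ∀ w : G.Walk u v, F ≤ w.length) : G.diam = F := by
  have h1 : G.ediam ≤ F := ediam_le_of_edist_le fun u v => by
    obtain ⟨w, hw⟩ := upper u v
    exact (G.edist_le w).trans (by exact_mod_cast hw)
  have h2 : (F : ℕ∞) ≤ G.ediam := by
    obtain ⟨u, v, hup⟩ := lower
    refine le_trans ?_ (G.edist_le_ediam (u := u) (v := v))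
    rw [edist_eq_sInf]
    exact le_sInf (by rintro _ ⟨w, rfl⟩; show (F : ℕ∞) ≤ (w.length : ℕ∞); exact_mod_cast hup w)
  have h3 : G.ediam = F := le_antisymm h1 h2
  rw [SimpleGraph.diam, h3]
  simp

variable {v k i : ℕ}

/-- `P A hA n t`: from any vertex `C` with `|A ∩ C| = t` there is a walk to `A`
of length at most `n`. -/
def P (i : ℕ) {A : Finset (Fin v)} (hA : A.card = k) (n t : ℕ) : Prop :=
  ∀ C (hC : C.card = k), (A ∩ C).card = t →
    ∃ w : (genJohnsonGraph v k i).Walk ⟨C, hC⟩ ⟨A, hA⟩, w.length ≤ n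

lemma P_mono {A : Finset (Fin v)} (hA : A.card = k) {n m t : ℕ} (h : n ≤ m)
    (hp : P i hA n t) : P i hA m t := fun C hC ht =>
  (hp C hC ht).imp fun _ hw => hw.trans h

lemma P_top {A : Finset (Fin v)} (hA : A.card = k) (n : ℕ) : P i hA n k := by
  intro C hC ht
  have h1 : A ∩ C = C := eq_of_subset_of_card_le inter_subset_right (by omega)
  have hsub : C ⊆ A := by rw [← h1]; exact inter_subset_left
  have h2 : C = A := eq_of_subset_of_card_le hsub (by omega)
  have hv : (⟨C, hC⟩ : {A : Finset (Fin v) // A.card = k}) = ⟨A, hA⟩ := Subtype.ext h2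
  exact ⟨(SimpleGraph.Walk.nil).copy hv.symm rfl, by simp⟩

lemma P_last (hik : i < k) {A : Finset (Fin v)} (hA : A.card = k) : P i hA 1 i := by
  intro C hC ht
  have hne : (⟨C, hC⟩ : {A : Finset (Fin v) // A.card = k}) ≠ ⟨A, hA⟩ := by
    intro h
    have : C = A := congrArg Subtype.val h
    subst this
    rw [inter_self] at ht
    omega
  have hadj : (genJohnsonGraph v k i).Adj ⟨C, hC⟩ ⟨A, hA⟩ :=
    ⟨hne, by rwa [inter_comm]⟩
  exact ⟨SimpleGraph.Walk.cons hadj SimpleGraph.Walk.nil, by simp⟩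

lemma P_step (hcard : 2 * k ≤ v) (hik : i < k) {A : Finset (Fin v)} (hA : A.card = k)
    {n t t' : ℕ}
    (h0 : t ≤ k) (h1 : t' ≤ k) (h2 : t' + i ≤ t + k) (h3 : t + i ≤ t' + k)
    (h4 : t + t' ≤ k + i) (h5 : 3 * k ≤ v + t + t' + i)
    (hp : P i hA n t') : P i hA (n + 1) t := by
  intro C hC ht
  obtain ⟨C', hC', hCC', hAC'⟩ := JGSets.step_construct (by simp) (le_of_lt hik)
    (by simpa using hcard) hA hC ht h0 h1 h2 h3 h4 h5
  have hne : (⟨C, hC⟩ : {A : Finset (Fin v) // A.card = k}) ≠ ⟨C', hC'⟩ := by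
    intro h
    have : C = C' := congrArg Subtype.val h
    subst this
    rw [inter_self] at hCC'
    omega
  have hadj : (genJohnsonGraph v k i).Adj ⟨C, hC⟩ ⟨C', hC'⟩ := ⟨hne, hCC'⟩
  obtain ⟨w, hw⟩ := hp C' hC' hAC'
  exact ⟨SimpleGraph.Walk.cons hadj w, by simp; omega⟩

end JGWalk


namespace JGWalk
open Finset SimpleGraph JGAux

variable {v k i : ℕ}

/-- Case 3 recursion: climb from `t ≤ i` up to `i`, then one step to `k`. -/
lemma U3rec (h2k : 2 * k ≤ v) (hik : i < k) {A : Finset (Fin v)} (hA : A.card = k)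
    (hc3 : 3 * k ≤ v + 2 * i) :
    ∀ a t, t ≤ i → i ≤ t + (k - i) * a → P i hA (a + 1) t := by
  intro a
  induction a with
  | zero =>
    intro t ht1 ht2
    have : t = i := by omega
    subst this
    exact P_last hik hA
  | succ a ih =>
    intro t ht1 ht2
    have hprod : (k - i) * (a + 1) = (k - i) * a + (k - i) := by ring
    by_cases h : i ≤ t + (k - i) * a
    · exact P_mono hA (by omega) (ih t ht1 h)
    · push_neg at h
      set t' := min i (t + (k - i)) with ht'
      have hstep := P_step h2k hik hA (n := a + 1) (t := t) (t' := t')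
        (by omega) (by omega) (by omega) (by omega) (by omega) (by omega)
      have hih : P i hA (a + 1) t' := by
        refine ih t' (by omega) ?_
        rcases le_or_gt i (t + (k - i)) with hc | hc
        · have : t' = i := by omega
          omega
        · have : t' = t + (k - i) := by omega
          omega
      exact P_mono hA (by omega) (hstep hih)

/-- Case 3 upper bound. -/
lemma U3 (h2k : 2 * k ≤ v) (hik : i < k) (hi : 1 ≤ i) {A : Finset (Fin v)} (hA : A.card = k)
    (hc3 : 3 * k ≤ v + 2 * i) :
    ∀ s, s ≤ k → P i hA (k ⌈/⌉ (k - i)) s := by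
  intro s hs
  have hK : 0 < k - i := by omega
  have hceil : k ⌈/⌉ (k - i) = i ⌈/⌉ (k - i) + 1 := by
    have h := ceil_add_self (a := i) hK
    rw [show i + (k - i) = k by omega] at h
    exact h
  rcases eq_or_lt_of_le hs with rfl | hsk
  · exact P_top hA _
  rcases le_or_gt s i with hsi | his
  · -- climb up
    set a := (i - s) ⌈/⌉ (k - i) with ha
    have h1 : i - s ≤ (k - i) * a := ceil_spec hK
    have h2 : P i hA (a + 1) s := U3rec h2k hik hA hc3 a s hsi (by omega)
    refine P_mono hA ?_ h2
    rw [hceil]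
    have := ceil_mono (b := k - i) (show i - s ≤ i by omega)
    omega
  · -- one step down to i, then to k
    have h2 : 2 ≤ k ⌈/⌉ (k - i) := by
      refine le_ceil hK ?_
      have : (k - i) * 2 = (k - i) + (k - i) := by ring
      omega
    have hstep := P_step h2k hik hA (n := 1) (t := s) (t' := i)
      (by omega) (by omega) (by omega) (by omega) (by omega) (by omega)
    exact P_mono hA (by omega) (hstep (P_last hik hA))

/-- Case 2 upper bound: diameter ≤ 3. -/
lemma U2 (h2k : 2 * k ≤ v) (hik : i < k) (hi : 1 ≤ i) {A : Finset (Fin v)} (hA : A.card = k)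
    (hcl : 3 * k ≤ v + 3 * i + 1) (hcr : v + 2 * i < 3 * k) :
    ∀ s, s ≤ k → P i hA 3 s := by
  intro s hs
  rcases eq_or_lt_of_le hs with rfl | hsk
  · exact P_top hA _
  -- D = v - 2k + 2i; t1 = max (k - D) (max (k + i - D - s) (s - (k - i)))
  set D := v - 2 * k + 2 * i with hD
  have hDv : D + 2 * k = v + 2 * i := by omega
  set t1 := max (k - D) (max (k + i - D - s) (s - (k - i))) with ht1
  have hs1 := P_step h2k hik hA (n := 2) (t := s) (t' := t1)
    (by omega) (by omega) (by omega) (by omega) (by omega) (by omega)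
  have hs2 := P_step h2k hik hA (n := 1) (t := t1) (t' := i)
    (by omega) (by omega) (by omega) (by omega) (by omega) (by omega)
  exact hs1 (hs2 (P_last hik hA))

/-- Case 1, phase-1 paths (even length): reach `k` ascending evens. -/
lemma U1P1 (h2k : 2 * k ≤ v) (hik : i < k) {A : Finset (Fin v)} (hA : A.card = k)
    {D : ℕ} (hD : D + 2 * k = v + 2 * i) (hDpos : 1 ≤ D) :
    ∀ a t, i ≤ t → t ≤ k → k ≤ t + D * a → P i hA (2 * a) t := by
  intro a
  induction a with
  | zero =>
    intro t ht1 ht2 ht3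
    have : t = k := by omega
    subst this
    exact P_top hA _
  | succ a ih =>
    intro t ht1 ht2 ht3
    have hprod : D * (a + 1) = D * a + D := by ring
    by_cases hfin : k ≤ t + D
    · rcases eq_or_lt_of_le ht2 with rfl | htk
      · exact P_top hA _
      · have hstep := P_step h2k hik hA (n := 1) (t := t) (t' := i)
          (by omega) (by omega) (by omega) (by omega) (by omega) (by omega)
        exact P_mono hA (by omega) (hstep (P_last hik hA))
    · push_neg at hfin
      set u := k + i - D - t with hu
      have h1 : P i hA (2 * a) (t + D) := ih (t + D) (by omega) (by omega) (by omega)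
      have h2 := P_step h2k hik hA (n := 2 * a) (t := u) (t' := t + D)
        (by omega) (by omega) (by omega) (by omega) (by omega) (by omega) h1
      have h3 := P_step h2k hik hA (n := 2 * a + 1) (t := t) (t' := u)
        (by omega) (by omega) (by omega) (by omega) (by omega) (by omega) h2
      exact P_mono hA (by omega) h3

/-- Case 1, phase-2 paths (odd length): descend evens to `i`. -/
lemma U1P2 (h2k : 2 * k ≤ v) (hik : i < k) {A : Finset (Fin v)} (hA : A.card = k)
    {D : ℕ} (hD : D + 2 * k = v + 2 * i) (hDpos : 1 ≤ D) :
    ∀ a t, i ≤ t → t ≤ k → t ≤ i + D * a → P i hA (2 * a + 1) t := by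
  intro a
  induction a with
  | zero =>
    intro t ht1 ht2 ht3
    have : t = i := by omega
    subst this
    exact P_last hik hA
  | succ a ih =>
    intro t ht1 ht2 ht3
    have hprod : D * (a + 1) = D * a + D := by ring
    by_cases hsm : t ≤ i + D * a
    · exact P_mono hA (by omega) (ih t ht1 ht2 hsm)
    · push_neg at hsm
      set u := k + i - t with hu
      set t2 := max i (t - D) with ht2'
      have h1 : P i hA (2 * a + 1) t2 := ih t2 (by omega) (by omega) (by omega)
      have h2 := P_step h2k hik hA (n := 2 * a + 1) (t := u) (t' := t2)
        (by omega) (by omega) (by omega) (by omega) (by omega) (by omega) h1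
      have h3 := P_step h2k hik hA (n := 2 * a + 2) (t := t) (t' := u)
        (by omega) (by omega) (by omega) (by omega) (by omega) (by omega) h2
      exact P_mono hA (by omega) h3

/-- Case 1, starting below `i` (only when `i ≠ 0`, so `Δ ≤ k-i-2`). -/
lemma U1small (h2k : 2 * k ≤ v) (hik : i < k) {A : Finset (Fin v)} (hA : A.card = k)
    {D : ℕ} (hD : D + 2 * k = v + 2 * i) (hDpos : 1 ≤ D)
    (hc1 : v + 3 * i + 2 ≤ 3 * k) :
    ∀ s, s < i → P i hA 3 s := by
  intro s hsi
  have hDK : D + i + 2 ≤ k := by omega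
  have hD2i : 2 * i ≤ D := by omega
  set t1 := k + i - D - s with ht1
  by_cases ht1i : t1 ≤ i
  · have hstep := P_step h2k hik hA (n := 1) (t := s) (t' := i)
      (by omega) (by omega) (by omega) (by omega) (by omega) (by omega)
    exact P_mono hA (by omega) (hstep (P_last hik hA))
  · push_neg at ht1i
    have h1 := P_step h2k hik hA (n := 1) (t := t1) (t' := i)
      (by omega) (by omega) (by omega) (by omega) (by omega) (by omega) (P_last hik hA)
    have h2 := P_step h2k hik hA (n := 2) (t := s) (t' := t1)
      (by omega) (by omega) (by omega) (by omega) (by omega) (by omega) h1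
    exact h2

/-- Case 1 upper bound. -/
lemma U1 (h2k : 2 * k ≤ v) (hik : i < k) {A : Finset (Fin v)} (hA : A.card = k)
    {D : ℕ} (hD : D + 2 * k = v + 2 * i) (hDpos : 1 ≤ D)
    (hdich : i = 0 ∨ v + 3 * i + 2 ≤ 3 * k) :
    ∀ s, s ≤ k → P i hA ((k - i - 1) ⌈/⌉ D + 1) s := by
  intro s hs
  set q := (k - i - 1) ⌈/⌉ D with hq
  rcases lt_or_ge s i with hsi | his
  · -- s < i : i ≠ 0
    have hc1 : v + 3 * i + 2 ≤ 3 * k := by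
      rcases hdich with h | h
      · omega
      · exact h
    have hq2 : 2 ≤ q := by
      refine le_ceil hDpos ?_
      have : D * 2 = D + D := by ring
      omega
    exact P_mono hA (by omega) (U1small h2k hik hA hD hDpos hc1 s hsi)
  · set a1 := (k - s) ⌈/⌉ D with ha1
    set a2 := (s - i) ⌈/⌉ D with ha2
    have hs1 : k - s ≤ D * a1 := ceil_spec hDpos
    have hs2 : s - i ≤ D * a2 := ceil_spec hDpos
    have hP1 : P i hA (2 * a1) s := U1P1 h2k hik hA hD hDpos a1 s his hs (by omega)
    have hP2 : P i hA (2 * a2 + 1) s := U1P2 h2k hik hA hD hDpos a2 s his hs (by omega)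
    by_cases hb : 2 * a1 ≤ q + 1
    · exact P_mono hA hb hP1
    · push_neg at hb
      have ha1pos : 1 ≤ a1 := by omega
      have hfin : 2 * a2 + 1 ≤ q + 1 := by
        rcases Nat.eq_zero_or_pos a2 with h0 | ha2pos
        · omega
        · have hm1 : D * (a1 - 1) < k - s := ceil_min (by omega)
          have hm2 : D * (a2 - 1) < s - i := ceil_min (by omega)
          have hqs : k - i - 1 ≤ D * q := ceil_spec hDpos
          have hsum : D * ((a1 - 1) + (a2 - 1)) < D * q := by
            rw [Nat.mul_add]
            omega
          have hlt : (a1 - 1) + (a2 - 1) < q := Nat.lt_of_mul_lt_mul_left hsum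
          omega
      exact P_mono hA hfin hP2

end JGWalk


namespace JGWalk
open Finset SimpleGraph JGAux

variable {v k i : ℕ}

lemma adj_card {x y : {A : Finset (Fin v) // A.card = k}}
    (h : (genJohnsonGraph v k i).Adj x y) : (x.1 ∩ y.1).card = i := h.2

/-- Potential bound for case 3: each step gains at most `k - i`. -/
lemma walk_bound3 {A : Finset (Fin v)} (hA : A.card = k) :
    ∀ (x z : {A : Finset (Fin v) // A.card = k})
      (w : (genJohnsonGraph v k i).Walk x z), z.1 = A →
      k ≤ (A ∩ x.1).card + w.length * (k - i) := by
  intro x z w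
  induction w with
  | nil =>
    intro hz
    simp [hz, Finset.inter_self, hA]
  | @cons x y z h p ih =>
    intro hz
    have hb := JGSets.adj_bounds (v := v) (by simp) hA x.2 y.2 (adj_card h)
    have hexp : (p.length + 1) * (k - i) = p.length * (k - i) + (k - i) := by ring
    have hih := ih hz
    rw [Walk.length_cons]
    omega

/-- Case 3 lower bound at `s = 0`. -/
lemma lower3 (hik : i < k) {A B : Finset (Fin v)} (hA : A.card = k) (hB : B.card = k)
    (hAB : (A ∩ B).card = 0) :
    ∀ w : (genJohnsonGraph v k i).Walk ⟨B, hB⟩ ⟨A, hA⟩, k ⌈/⌉ (k - i) ≤ w.length := by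
  intro w
  have h := walk_bound3 hA ⟨B, hB⟩ ⟨A, hA⟩ w rfl
  have h' : k ≤ (A ∩ B).card + w.length * (k - i) := h
  rw [hAB] at h'
  exact ceil_le (by rw [Nat.mul_comm]; omega)

/-- Any walk of length 2 into `A` starts with nonzero intersection (case 2). -/
lemma walk_len2 {A : Finset (Fin v)} (hA : A.card = k) (hcl2 : v + 2 * i < 3 * k) :
    ∀ (x z : {A : Finset (Fin v) // A.card = k})
      (w : (genJohnsonGraph v k i).Walk x z), z.1 = A →
      w.length = 2 → 1 ≤ (A ∩ x.1).card := by
  intro x z w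
  induction w with
  | nil => intro _ hlen; simp at hlen
  | @cons x y z h p ih =>
    intro hz hlen
    rw [Walk.length_cons] at hlen
    have hp1 : p.length = 1 := by omega
    have hadj := Walk.adj_of_length_eq_one hp1
    have hyA : (y.1 ∩ z.1).card = i := adj_card hadj
    rw [hz] at hyA
    have hb := JGSets.adj_bounds (v := v) (by simp) hA x.2 y.2 (adj_card h)
    have hyA' : (A ∩ y.1).card = i := by rwa [inter_comm] at hyA
    omega

/-- Case 2 lower bound at `s = 0`: every walk has length at least 3. -/
lemma lower2 (hik : i < k) (hi : 1 ≤ i)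
    {A B : Finset (Fin v)} (hA : A.card = k) (hB : B.card = k)
    (hAB : (A ∩ B).card = 0) (hcl2 : v + 2 * i < 3 * k) :
    ∀ w : (genJohnsonGraph v k i).Walk ⟨B, hB⟩ ⟨A, hA⟩, 3 ≤ w.length := by
  intro w
  by_contra hlt
  push_neg at hlt
  interval_cases h : w.length
  · have he := Walk.eq_of_length_eq_zero h
    have hBA : B = A := congrArg Subtype.val he
    rw [hBA, inter_self, hA] at hAB
    omega
  · have hadj := Walk.adj_of_length_eq_one h
    have hc : (B ∩ A).card = i := adj_card hadj
    rw [inter_comm] at hc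
    omega
  · have h2 := walk_len2 hA hcl2 ⟨B, hB⟩ ⟨A, hA⟩ w rfl h
    have h2' : 1 ≤ (A ∩ B).card := h2
    omega

/-- Parity potential bounds for case 1. -/
lemma walk_bound1 {A : Finset (Fin v)} (hA : A.card = k)
    {D : ℕ} (hD : D + 2 * k = v + 2 * i) :
    ∀ (x z : {A : Finset (Fin v) // A.card = k})
      (w : (genJohnsonGraph v k i).Walk x z), z.1 = A → ∀ m : ℕ,
      (w.length = 2 * m → k ≤ (A ∩ x.1).card + m * D) ∧
      (w.length = 2 * m + 1 → (A ∩ x.1).card ≤ i + m * D) := by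
  intro x z w
  induction w with
  | nil =>
    intro hz m
    constructor
    · intro _
      simp [hz, Finset.inter_self, hA]
    · intro h
      simp at h
  | @cons x y z h p ih =>
    intro hz m
    have hb := JGSets.adj_bounds (v := v) (by simp) hA x.2 y.2 (adj_card h)
    constructor
    · intro hlen
      rw [Walk.length_cons] at hlen
      obtain ⟨m', rfl⟩ : ∃ m', m = m' + 1 := ⟨m - 1, by omega⟩
      have hih := (ih hz m').2 (by omega)
      have hexp : (m' + 1) * D = m' * D + D := by ring
      omega
    · intro hlen
      rw [Walk.length_cons] at hlen
      have hih := (ih hz m).1 (by omega)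
      omega

end JGWalk


namespace JGWalk
open Finset SimpleGraph JGAux

variable {v k i : ℕ}

/-- Case 1 lower bound: a pair of vertices at distance at least `⌈(k-i-1)/D⌉ + 1`. -/
lemma lower1 (hik : i < k) (h2k : 2 * k ≤ v) {D : ℕ} (hD : D + 2 * k = v + 2 * i)
    (hD1 : 1 ≤ D) :
    ∃ x y : {A : Finset (Fin v) // A.card = k},
      ∀ w : (genJohnsonGraph v k i).Walk x y, (k - i - 1) ⌈/⌉ D + 1 ≤ w.length := by
  have hcard : 2 * k ≤ Fintype.card (Fin v) := by simpa using h2k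
  set q := (k - i - 1) ⌈/⌉ D with hq
  rcases Nat.eq_zero_or_pos q with hq0 | hqpos
  · -- trivial bound 1: pick intersection 0
    obtain ⟨A, B, hA, hB, hAB⟩ := JGSets.realize_pair (k := k) (s := 0) (by omega) hcard
    refine ⟨⟨B, hB⟩, ⟨A, hA⟩, fun w => ?_⟩
    rw [hq0]
    by_contra hlen
    push_neg at hlen
    have h0 : w.length = 0 := by omega
    have he := Walk.eq_of_length_eq_zero h0
    have hBA : B = A := congrArg Subtype.val he
    rw [hBA, inter_self, hA] at hAB
    omega
  · set cq := (q + 1) / 2 with hcq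
    set u := D * (cq - 1) + 1 with hu
    have hmin : D * (q - 1) < k - i - 1 := ceil_min hqpos
    have hmono : D * (cq - 1) ≤ D * (q - 1) := Nat.mul_le_mul_left D (by omega)
    have hsk : i + u ≤ k := by omega
    obtain ⟨A, B, hA, hB, hAB⟩ := JGSets.realize_pair (k := k) (s := i + u) hsk hcard
    refine ⟨⟨B, hB⟩, ⟨A, hA⟩, fun w => ?_⟩
    have hspec : k - i - 1 ≤ D * q := ceil_spec hD1
    rcases Nat.even_or_odd w.length with ⟨m, hm⟩ | ⟨m, hm⟩
    · have hb := (walk_bound1 hA hD ⟨B, hB⟩ ⟨A, hA⟩ w rfl m).1 (by omega)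
      have hb' : k ≤ (A ∩ B).card + m * D := hb
      by_contra hlen
      push_neg at hlen
      have hcomm : m * D = D * m := Nat.mul_comm _ _
      have f1 : D * (cq - 1) + D * m = D * (cq - 1 + m) := by ring
      have f2 : D * (cq - 1 + m) ≤ D * (q - 1) := Nat.mul_le_mul_left D (by omega)
      omega
    · have hb := (walk_bound1 hA hD ⟨B, hB⟩ ⟨A, hA⟩ w rfl m).2 (by omega)
      have hb' : (A ∩ B).card ≤ i + m * D := hb
      have hcomm : m * D = D * m := Nat.mul_comm _ _
      have hlt : D * (cq - 1) < D * m := by omega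
      have hm' : cq - 1 < m := Nat.lt_of_mul_lt_mul_left hlt
      omega

end JGWalk

theorem diam_formula' (v k i : ℕ) (hik : i < k) (hkv : k < v)
    (h2k : 2 * k ≤ v) (hexc : ¬(v = 2 * k ∧ i = 0)) :
    ((v < 3 * (k - i) - 1 ∨ i = 0) →
      (genJohnsonGraph v k i).diam = (k - i - 1) ⌈/⌉ (v - 2 * k + 2 * i) + 1) ∧
    (3 * (k - i) - 1 ≤ v → v < 3 * k - 2 * i → i ≠ 0 →
      (genJohnsonGraph v k i).diam = 3) ∧
    (3 * k - 2 * i ≤ v → i ≠ 0 →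
      (genJohnsonGraph v k i).diam = k ⌈/⌉ (k - i)) := by
  have hcard : 2 * k ≤ Fintype.card (Fin v) := by simpa using h2k
  have hD : (v - 2 * k + 2 * i) + 2 * k = v + 2 * i := by omega
  have hD1 : 1 ≤ v - 2 * k + 2 * i := by
    rcases Nat.eq_zero_or_pos i with h0 | hpos
    · have : v ≠ 2 * k := fun h => hexc ⟨h, h0⟩
      omega
    · omega
  have hinter : ∀ u u' : {A : Finset (Fin v) // A.card = k}, (u'.1 ∩ u.1).card ≤ k := by
    intro u u'
    calc (u'.1 ∩ u.1).card ≤ u.1.card := Finset.card_le_card Finset.inter_subset_right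
    _ = k := u.2
  refine ⟨?_, ?_, ?_⟩
  · -- Case 1
    intro hcase
    have hdich : i = 0 ∨ v + 3 * i + 2 ≤ 3 * k := by
      rcases hcase with h | h
      · right; omega
      · left; exact h
    refine JGWalk.diam_eq_of _ _ (fun u u' => ?_) ?_
    · obtain ⟨w, hw⟩ := JGWalk.U1 h2k hik u'.2 hD hD1 hdich _ (hinter u u') u.1 u.2 rfl
      exact ⟨w, hw⟩
    · exact JGWalk.lower1 hik h2k hD hD1
  · -- Case 2
    intro hcl hcr hi0
    have hi : 1 ≤ i := by omega
    have hcl' : 3 * k ≤ v + 3 * i + 1 := by omega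
    have hcr' : v + 2 * i < 3 * k := by omega
    refine JGWalk.diam_eq_of _ _ (fun u u' => ?_) ?_
    · obtain ⟨w, hw⟩ := JGWalk.U2 h2k hik hi u'.2 hcl' hcr' _ (hinter u u') u.1 u.2 rfl
      exact ⟨w, hw⟩
    · obtain ⟨A, B, hA, hB, hAB⟩ := JGSets.realize_pair (k := k) (s := 0) (by omega) hcard
      exact ⟨⟨B, hB⟩, ⟨A, hA⟩, JGWalk.lower2 hik hi hA hB hAB hcr'⟩
  · -- Case 3
    intro hc3 hi0
    have hi : 1 ≤ i := by omega
    have hc3' : 3 * k ≤ v + 2 * i := by omega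
    refine JGWalk.diam_eq_of _ _ (fun u u' => ?_) ?_
    · obtain ⟨w, hw⟩ := JGWalk.U3 h2k hik hi u'.2 hc3' _ (hinter u u') u.1 u.2 rfl
      exact ⟨w, hw⟩
    · obtain ⟨A, B, hA, hB, hAB⟩ := JGSets.realize_pair (k := k) (s := 0) (by omega) hcard
      exact ⟨⟨B, hB⟩, ⟨A, hA⟩, JGWalk.lower3 hik hA hB hAB⟩

/-- The diameter of `J(v,k,i)`: `⌈(k-i-1)/Δ⌉ + 1` if `v < 3(k-i) - 1` or `i = 0`;
`3` if `3(k-i) - 1 ≤ v < 3k - 2i` and `i ≠ 0`; and `⌈k/(k-i)⌉` if `v ≥ 3k - 2i`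
and `i ≠ 0`. -/
theorem diam_formula (v k i : ℕ) (hik : i < k) (hkv : k < v)
    (h2k : 2 * k ≤ v) (hexc : ¬(v = 2 * k ∧ i = 0)) :
    ((v < 3 * (k - i) - 1 ∨ i = 0) →
      (genJohnsonGraph v k i).diam = (k - i - 1) ⌈/⌉ (v - 2 * k + 2 * i) + 1) ∧
    (3 * (k - i) - 1 ≤ v → v < 3 * k - 2 * i → i ≠ 0 →
      (genJohnsonGraph v k i).diam = 3) ∧
    (3 * k - 2 * i ≤ v → i ≠ 0 →
      (genJohnsonGraph v k i).diam = k ⌈/⌉ (k - i)) := by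
  exact diam_formula' v k i hik hkv h2k hexc
end

section
/- Assume the girth of X = J(v,k,i) equals 4, and let r = ⌈(k − i)/Δ⌉. Let A and B be vertices of X with x = |A ∩ B|. If r is odd and x ∈ {⌊(k + i − Δ)/2⌋, ⌈(k + i − Δ)/2⌉}, then dist(A,B) = r. -/
set_option linter.all false
set_option maxHeartbeats 2000000

namespace GenJohnsonAux

open Finset

/-- Key step lemma: given `k`-sets `C, B` and a target intersection size `y` satisfying the
feasibility inequalities, there is a `k`-set `C'` with `|C' ∩ C| = i` and `|C' ∩ B| = y`. -/
lemma gj_step {v k i : ℕ} (hik : i < k) (h2k : 2 * k ≤ v)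
    (B C : Finset (Fin v)) (hB : B.card = k) (hC : C.card = k)
    (y : ℕ) (hy : y ≤ k)
    (h1 : (C ∩ B).card + i ≤ y + k) (h2 : y + i ≤ (C ∩ B).card + k)
    (h3 : (C ∩ B).card + y ≤ k + i) (h4 : 3 * k ≤ (C ∩ B).card + y + v + i) :
    ∃ C' : Finset (Fin v), C'.card = k ∧ (C' ∩ C).card = i ∧ (C' ∩ B).card = y := by
  obtain ⟨x, hx⟩ : ∃ x, (C ∩ B).card = x := ⟨_, rfl⟩
  rw [hx] at h1 h2 h3 h4
  have hxk : x ≤ k := by rw [← hx, ← hC]; exact card_le_card inter_subset_left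
  have hs2 : (C \ B).card + x = k := by rw [← hx, card_sdiff_add_card_inter, hC]
  have hs3 : (B \ C).card + x = k := by
    rw [← hx, inter_comm, card_sdiff_add_card_inter, hB]
  have hs4 : ((C ∪ B)ᶜ).card + ((C ∪ B).card) = v := by
    simpa [add_comm] using Finset.card_add_card_compl (C ∪ B)
  have hsu : (C ∪ B).card + x = 2 * k := by
    rw [← hx, card_union_add_card_inter, hC, hB]; ring
  obtain ⟨a, b, c, d, hab, hac, habcd, ha1, hb1, hc1, hd1⟩ :
      ∃ a b c d : ℕ, a + b = i ∧ a + c = y ∧ a + b + c + d = k ∧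
        a ≤ (C ∩ B).card ∧ b ≤ (C \ B).card ∧ c ≤ (B \ C).card ∧ d ≤ ((C ∪ B)ᶜ).card := by
    refine ⟨max (i + x - k) (max (x + y - k) (i + y - k)),
      i - max (i + x - k) (max (x + y - k) (i + y - k)),
      y - max (i + x - k) (max (x + y - k) (i + y - k)),
      k - i - (y - max (i + x - k) (max (x + y - k) (i + y - k))),
      by omega, by omega, by omega, ?_, ?_, ?_, ?_⟩ <;> omega
  obtain ⟨t1, ht1, hct1⟩ := exists_subset_card_eq ha1
  obtain ⟨t2, ht2, hct2⟩ := exists_subset_card_eq hb1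
  obtain ⟨t3, ht3, hct3⟩ := exists_subset_card_eq hc1
  obtain ⟨t4, ht4, hct4⟩ := exists_subset_card_eq hd1
  clear ha1 hb1 hc1 hd1 hs2 hs3 hs4 hsu
  have m1 : ∀ z ∈ t1, z ∈ C ∧ z ∈ B := fun z hz => mem_inter.mp (ht1 hz)
  have m2 : ∀ z ∈ t2, z ∈ C ∧ z ∉ B := fun z hz => mem_sdiff.mp (ht2 hz)
  have m3 : ∀ z ∈ t3, z ∈ B ∧ z ∉ C := fun z hz => mem_sdiff.mp (ht3 hz)
  have m4 : ∀ z ∈ t4, z ∉ C ∧ z ∉ B := fun z hz => by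
    have := mem_compl.mp (ht4 hz); rw [mem_union] at this; tauto
  clear ht1 ht2 ht3 ht4 hx
  have hd12 : Disjoint t1 t2 :=
    disjoint_left.mpr fun z p q => ((m2 z q).2 (m1 z p).2).elim
  have hd13 : Disjoint t1 t3 :=
    disjoint_left.mpr fun z p q => ((m3 z q).2 (m1 z p).1).elim
  have hd14 : Disjoint t1 t4 :=
    disjoint_left.mpr fun z p q => ((m4 z q).1 (m1 z p).1).elim
  have hd23 : Disjoint t2 t3 :=
    disjoint_left.mpr fun z p q => ((m3 z q).2 (m2 z p).1).elim
  have hd24 : Disjoint t2 t4 :=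
    disjoint_left.mpr fun z p q => ((m4 z q).1 (m2 z p).1).elim
  have hd34 : Disjoint t3 t4 :=
    disjoint_left.mpr fun z p q => ((m4 z q).2 (m3 z p).1).elim
  refine ⟨t1 ∪ t2 ∪ t3 ∪ t4, ?_, ?_, ?_⟩
  · rw [card_union_of_disjoint
        (disjoint_union_left.mpr ⟨disjoint_union_left.mpr ⟨hd14, hd24⟩, hd34⟩),
        card_union_of_disjoint (disjoint_union_left.mpr ⟨hd13, hd23⟩),
        card_union_of_disjoint hd12]
    omega
  · have he : (t1 ∪ t2 ∪ t3 ∪ t4) ∩ C = t1 ∪ t2 := by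
      rw [union_inter_distrib_right, union_inter_distrib_right, union_inter_distrib_right]
      rw [inter_eq_left.mpr fun z hz => (m1 z hz).1,
          inter_eq_left.mpr fun z hz => (m2 z hz).1]
      have e3 : t3 ∩ C = ∅ :=
        eq_empty_of_forall_notMem fun z hz => by
          have := mem_inter.mp hz; exact (m3 z this.1).2 this.2
      have e4 : t4 ∩ C = ∅ :=
        eq_empty_of_forall_notMem fun z hz => by
          have := mem_inter.mp hz; exact (m4 z this.1).1 this.2
      rw [e3, e4, union_empty, union_empty]
    rw [he, card_union_of_disjoint hd12]; omega
  · have he : (t1 ∪ t2 ∪ t3 ∪ t4) ∩ B = t1 ∪ t3 := by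
      rw [union_inter_distrib_right, union_inter_distrib_right, union_inter_distrib_right]
      rw [inter_eq_left.mpr fun z hz => (m1 z hz).2,
          inter_eq_left.mpr fun z hz => (m3 z hz).1]
      have e2 : t2 ∩ B = ∅ :=
        eq_empty_of_forall_notMem fun z hz => by
          have := mem_inter.mp hz; exact (m2 z this.1).2 this.2
      have e4 : t4 ∩ B = ∅ :=
        eq_empty_of_forall_notMem fun z hz => by
          have := mem_inter.mp hz; exact (m4 z this.1).2 this.2
      rw [e2, e4, union_empty, union_empty]
    rw [he, card_union_of_disjoint hd13]; omega

/-- Any two adjacent `k`-sets rule: sum inequalities for intersections with a third `k`-set. -/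
lemma gj_adj_bounds {v k i : ℕ} (B C C' : Finset (Fin v))
    (hB : B.card = k) (hC : C.card = k) (hC' : C'.card = k)
    (hi : (C ∩ C').card = i) :
    (C ∩ B).card + (C' ∩ B).card ≤ k + i ∧
    3 * k ≤ (C ∩ B).card + (C' ∩ B).card + v + i := by
  have h0 := card_union_add_card_inter (C ∩ B) (C' ∩ B)
  have hu : ((C ∩ B) ∪ (C' ∩ B)) = (C ∪ C') ∩ B := (union_inter_distrib_right C C' B).symm
  have h1 : ((C ∩ B) ∪ (C' ∩ B)).card ≤ k := by
    rw [← hB]; exact card_le_card (union_subset inter_subset_right inter_subset_right)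
  have h2 : ((C ∩ B) ∩ (C' ∩ B)).card ≤ i := by
    rw [← hi]
    refine card_le_card fun z hz => ?_
    rw [mem_inter] at hz ⊢
    exact ⟨(mem_inter.mp hz.1).1, (mem_inter.mp hz.2).1⟩
  have h3 := card_union_add_card_inter (C ∪ C') B
  have h4 := card_union_add_card_inter C C'
  have h5 : ((C ∪ C') ∪ B).card ≤ v := by
    simpa using card_le_univ ((C ∪ C') ∪ B)
  rw [hu] at h0 h1
  omega

abbrev GJV (v k : ℕ) := {A : Finset (Fin v) // A.card = k}

lemma gj_adj_of_inter {v k i : ℕ} (hik : i < k) (a b : GJV v k)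
    (h : (a.1 ∩ b.1).card = i) : (genJohnsonGraph v k i).Adj a b := by
  refine ⟨fun he => ?_, h⟩
  subst he
  rw [Finset.inter_self, a.2] at h
  omega

/-- The two-sided parity invariant along any walk to `B`. -/
lemma gj_walk_inv {v k i : ℕ} (hik : i < k) (h2k : 2 * k ≤ v)
    (B : GJV v k) {C : GJV v k} (w : (genJohnsonGraph v k i).Walk C B) :
    (w.length % 2 = 0 → 2 * k ≤ 2 * (C.1 ∩ B.1).card + w.length * (v - 2 * k + 2 * i)) ∧
    (w.length % 2 = 1 →
      2 * (C.1 ∩ B.1).card + (v - 2 * k + 2 * i) ≤ 2 * i + w.length * (v - 2 * k + 2 * i)) := by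
  clear hik
  induction w with
  | nil =>
    rename_i U
    simp only [SimpleGraph.Walk.length_nil, Finset.inter_self, U.2]
    omega
  | @cons U W X h p ih =>
    obtain ⟨hne, hcard⟩ := id h
    have hb := gj_adj_bounds X.1 U.1 W.1 X.2 U.2 W.2 hcard
    rw [SimpleGraph.Walk.length_cons]
    have hmul : (p.length + 1) * (v - 2 * k + 2 * i)
        = p.length * (v - 2 * k + 2 * i) + (v - 2 * k + 2 * i) := by ring
    rw [hmul]
    obtain ⟨D, hD⟩ : ∃ D, p.length * (v - 2 * k + 2 * i) = D := ⟨_, rfl⟩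
    rw [hD] at ih ⊢
    omega

/-- Construction of a walk of odd length `2n+1` from a suitable starting intersection. -/
lemma gj_walk_up {v k i : ℕ} (hik : i < k) (h2k : 2 * k ≤ v) (B : GJV v k) :
    ∀ n : ℕ, ∀ C : GJV v k, i ≤ (C.1 ∩ B.1).card →
      2 * (C.1 ∩ B.1).card ≤ 2 * i + 2 * n * (v - 2 * k + 2 * i) →
      2 * (C.1 ∩ B.1).card ≤ k + i →
      ∃ w : (genJohnsonGraph v k i).Walk C B, w.length = 2 * n + 1 := by
  intro n
  induction n with
  | zero =>
    intro C h1 h2 h3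
    have hx : (C.1 ∩ B.1).card = i := by omega
    exact ⟨SimpleGraph.Walk.cons (gj_adj_of_inter hik C B hx) SimpleGraph.Walk.nil, rfl⟩
  | succ n ih =>
    intro C h1 h2 h3
    obtain ⟨x, hx⟩ : ∃ x, (C.1 ∩ B.1).card = x := ⟨_, rfl⟩
    rw [hx] at h1 h2 h3
    have hxk : x ≤ k := by
      have h' : (C.1 ∩ B.1).card ≤ B.1.card := card_le_card inter_subset_right
      have hBk := B.2
      omega
    -- first step: up to k + i - x
    obtain ⟨C₁', hC₁k, hC₁C, hC₁B⟩ := gj_step hik h2k B.1 C.1 B.2 C.2 (k + i - x)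
      (by omega) (by omega) (by omega) (by omega) (by omega)
    -- second step: down to max i (x - Δ)
    obtain ⟨C₂', hC₂k, hC₂C, hC₂B⟩ := gj_step hik h2k B.1 C₁' B.2 hC₁k
      (max i (x - (v - 2 * k + 2 * i)))
      (by omega) (by omega) (by omega) (by omega) (by omega)
    have adj1 : (genJohnsonGraph v k i).Adj C ⟨C₁', hC₁k⟩ :=
      gj_adj_of_inter hik _ _ (by rw [Finset.inter_comm]; exact hC₁C)
    have adj2 : (genJohnsonGraph v k i).Adj ⟨C₁', hC₁k⟩ ⟨C₂', hC₂k⟩ :=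
      gj_adj_of_inter hik _ _ (by rw [Finset.inter_comm]; exact hC₂C)
    have hQ : 2 * n * (v - 2 * k + 2 * i) + 2 * (v - 2 * k + 2 * i)
        = 2 * (n + 1) * (v - 2 * k + 2 * i) := by ring
    obtain ⟨w', hw'⟩ := ih ⟨C₂', hC₂k⟩ (by
        show i ≤ (C₂' ∩ B.1).card
        rw [hC₂B]; exact le_max_left _ _)
      (by
        obtain ⟨P, hP⟩ : ∃ P, 2 * n * (v - 2 * k + 2 * i) = P := ⟨_, rfl⟩
        rw [hP] at hQ ⊢
        rw [hC₂B]
        omega)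
      (by rw [hC₂B]; omega)
    exact ⟨SimpleGraph.Walk.cons adj1 (SimpleGraph.Walk.cons adj2 w'),
      by rw [SimpleGraph.Walk.length_cons, SimpleGraph.Walk.length_cons, hw']; ring⟩

end GenJohnsonAux

open GenJohnsonAux

/-- Assume `J(v,k,i)` has girth 4 and let `r = ⌈(k-i)/Δ⌉`. If `r` is odd and
`x = |A ∩ B| ∈ {⌊(k+i-Δ)/2⌋, ⌈(k+i-Δ)/2⌉}`, then `dist(A,B) = r`. -/
theorem dist_eq_r_odd (v k i : ℕ) (hik : i < k) (hkv : k < v)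
    (h2k : 2 * k ≤ v) (hexc : ¬(v = 2 * k ∧ i = 0))
    (hg : (genJohnsonGraph v k i).girth = 4)
    (hr : Odd ((k - i) ⌈/⌉ (v - 2 * k + 2 * i)))
    (A B : {A : Finset (Fin v) // A.card = k})
    (hx : (A.1 ∩ B.1).card = (k + i - (v - 2 * k + 2 * i)) / 2 ∨
          (A.1 ∩ B.1).card = (k + i - (v - 2 * k + 2 * i)) ⌈/⌉ 2) :
    (genJohnsonGraph v k i).dist A B = (k - i) ⌈/⌉ (v - 2 * k + 2 * i) := by
  classical
  have hΔpos : 1 ≤ v - 2 * k + 2 * i := by omega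
  -- Girth 4 implies triangle-free, which forces Δ < k - i.
  have htf : v + 3 * i < 3 * k := by
    by_contra hcon
    push_neg at hcon
    obtain ⟨B0, -, hB0⟩ := Finset.exists_subset_card_eq
      (s := (Finset.univ : Finset (Fin v))) (n := k) (by simp; omega)
    have hBB : (B0 ∩ B0).card = k := by rw [Finset.inter_self, hB0]
    obtain ⟨A0, hA0k, hA0B, -⟩ := gj_step hik h2k B0 B0 hB0 hB0 i
      (by omega) (by omega) (by omega) (by omega) (by omega)
    obtain ⟨C0, hC0k, hC0A, hC0B⟩ := gj_step hik h2k B0 A0 hB0 hA0k i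
      (by omega) (by omega) (by omega) (by omega) (by omega)
    set G := genJohnsonGraph v k i with hG
    let a : GJV v k := ⟨A0, hA0k⟩
    let b : GJV v k := ⟨B0, hB0⟩
    let c : GJV v k := ⟨C0, hC0k⟩
    have hab : G.Adj a b := gj_adj_of_inter hik a b hA0B
    have hbc : G.Adj b c := gj_adj_of_inter hik b c (by
      show (B0 ∩ C0).card = i
      rw [Finset.inter_comm]; exact hC0B)
    have hca : G.Adj c a := gj_adj_of_inter hik c a hC0A
    let w : G.Walk a a := SimpleGraph.Walk.cons hab (SimpleGraph.Walk.cons hbc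
      (SimpleGraph.Walk.cons hca SimpleGraph.Walk.nil))
    have hcyc : w.IsCycle := by
      simp [w, SimpleGraph.Walk.isCycle_def, SimpleGraph.Walk.isTrail_def, hab.ne, hbc.ne,
        hca.ne, hca.ne', hab.ne']
    have hle : G.egirth ≤ 3 := by
      have h4' : G.egirth ≤ (w.length : ℕ∞) := by
        rw [SimpleGraph.egirth]
        exact iInf_le_of_le a (iInf_le_of_le w (iInf_le_of_le hcyc le_rfl))
      simpa [w] using h4'
    have hg3 : G.girth ≤ 3 := by
      have := ENat.toNat_le_toNat hle (by simp)
      simpa [SimpleGraph.girth] using this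
    omega
  -- numeric facts about r
  obtain ⟨n, hn⟩ := hr
  have hrdef : (k - i) ⌈/⌉ (v - 2 * k + 2 * i)
      = (k - i + (v - 2 * k + 2 * i) - 1) / (v - 2 * k + 2 * i) :=
    Nat.ceilDiv_eq_add_pred_div _ _
  have hdm := Nat.div_add_mod (k - i + (v - 2 * k + 2 * i) - 1) (v - 2 * k + 2 * i)
  have hml : (k - i + (v - 2 * k + 2 * i) - 1) % (v - 2 * k + 2 * i) < (v - 2 * k + 2 * i) :=
    Nat.mod_lt _ hΔpos
  have hdivn : (k - i + (v - 2 * k + 2 * i) - 1) / (v - 2 * k + 2 * i) = 2 * n + 1 := by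
    rw [← hrdef, hn]
  rw [hdivn] at hdm
  obtain ⟨Q, hQ⟩ : ∃ Q, n * (v - 2 * k + 2 * i) = Q := ⟨_, rfl⟩
  have hdm' : (v - 2 * k + 2 * i) * (2 * n + 1) = 2 * Q + (v - 2 * k + 2 * i) := by
    rw [← hQ]; ring
  rw [hdm'] at hdm
  -- unified description of the starting intersection size
  have hpar : 2 * (A.1 ∩ B.1).card = k + i - (v - 2 * k + 2 * i) ∨
      2 * (A.1 ∩ B.1).card = k + i - (v - 2 * k + 2 * i) + 1 ∨
      2 * (A.1 ∩ B.1).card + 1 = k + i - (v - 2 * k + 2 * i) := by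
    rcases hx with hm | hm
    · omega
    · rw [Nat.ceilDiv_eq_add_pred_div] at hm; omega
  have hparity : 2 * (A.1 ∩ B.1).card = k + i - (v - 2 * k + 2 * i) + 1 →
      ¬ (2 ∣ (k + i - (v - 2 * k + 2 * i))) := by
    rcases hx with hm | hm
    · omega
    · rw [Nat.ceilDiv_eq_add_pred_div] at hm; omega
  -- upper bound: explicit walk of length 2n+1
  obtain ⟨w, hw⟩ := gj_walk_up hik h2k B n A (by omega)
    (by
      have e : 2 * n * (v - 2 * k + 2 * i) = 2 * Q := by rw [← hQ]; ring
      rw [e]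
      rcases hpar with hm | hm | hm
      · omega
      · have := hparity hm; omega
      · omega)
    (by omega)
  have hub : (genJohnsonGraph v k i).dist A B ≤ 2 * n + 1 := hw ▸ SimpleGraph.dist_le w
  -- lower bound via the parity invariant
  have hre : (genJohnsonGraph v k i).Reachable A B := ⟨w⟩
  obtain ⟨p, hp⟩ := hre.exists_walk_length_eq_dist
  have hinv := gj_walk_inv hik h2k B p
  rw [hp] at hinv
  obtain ⟨D, hD⟩ : ∃ D, (genJohnsonGraph v k i).dist A B * (v - 2 * k + 2 * i) = D := ⟨_, rfl⟩
  rw [hD] at hinv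
  rw [hn]
  refine le_antisymm hub ?_
  rcases Nat.mod_two_eq_zero_or_one ((genJohnsonGraph v k i).dist A B) with hpar2 | hpar2
  · by_contra hlt
    push_neg at hlt
    have hmm : (genJohnsonGraph v k i).dist A B * (v - 2 * k + 2 * i)
        ≤ (2 * n) * (v - 2 * k + 2 * i) := Nat.mul_le_mul_right _ (by omega)
    have h2q : (2 * n) * (v - 2 * k + 2 * i) = 2 * Q := by rw [← hQ]; ring
    rw [hD, h2q] at hmm
    have hE := hinv.1 hpar2
    omega
  · have hO := hinv.2 hpar2
    have hDge : 2 * Q ≤ D := by omega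
    have hmul : (2 * n) * (v - 2 * k + 2 * i)
        ≤ (genJohnsonGraph v k i).dist A B * (v - 2 * k + 2 * i) := by
      have h2q : (2 * n) * (v - 2 * k + 2 * i) = 2 * Q := by rw [← hQ]; ring
      rw [h2q, hD]; exact hDge
    have := Nat.le_of_mul_le_mul_right (by
      have h2q : (2 * n) * (v - 2 * k + 2 * i) = (v - 2 * k + 2 * i) * (2 * n) := by ring
      have h2q' : (genJohnsonGraph v k i).dist A B * (v - 2 * k + 2 * i)
          = (v - 2 * k + 2 * i) * ((genJohnsonGraph v k i).dist A B) := by ring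
      exact hmul) hΔpos
    omega
end

section
/- Assume the girth of X = J(v,k,i) equals 4, and let r = ⌈(k − i)/Δ⌉. Let A and B be vertices of X with x = |A ∩ B|. If r is even and x ∈ {⌊(k + i)/2⌋, ⌈(k + i)/2⌉}, then dist(A,B) = r. -/
open Finset

lemma exists_common_nbr_s16 (v k i : ℕ) (hik : i < k) (h2k : 2 * k ≤ v)
    (hΔk : v - 2 * k + 2 * i + i < k)
    (P Q : Finset (Fin v)) (hP : P.card = k) (hQ : Q.card = k)
    (hz : k ≤ (P ∩ Q).card + (v - 2 * k + 2 * i)) :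
    ∃ R : Finset (Fin v), R.card = k ∧ (R ∩ P).card = i ∧ (R ∩ Q).card = i := by
  set z := (P ∩ Q).card with hzdef
  have hzk : z ≤ k := hP ▸ card_le_card inter_subset_left
  have hPQ : (P \ Q).card + z = k := by
    have := card_sdiff_add_card_inter P Q
    rw [← hzdef] at this; omega
  have hQP : (Q \ P).card + z = k := by
    have := card_sdiff_add_card_inter Q P
    rw [inter_comm, ← hzdef] at this; omega
  have hUnion : (P ∪ Q).card + z = 2 * k := by
    have := card_union_add_card_inter P Q
    rw [← hzdef] at this; omega
  have hOut : ((univ : Finset (Fin v)) \ (P ∪ Q)).card + (P ∪ Q).card = v := by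
    have h1 : ((univ : Finset (Fin v)) \ (P ∪ Q)).card
        = (univ : Finset (Fin v)).card - (P ∪ Q).card :=
      card_sdiff_of_subset (subset_univ _)
    have h2 : (P ∪ Q).card ≤ (univ : Finset (Fin v)).card := card_le_card (subset_univ _)
    simp only [card_univ, Fintype.card_fin] at h1 h2
    omega
  obtain ⟨a, haS, haC⟩ := exists_subset_card_eq (s := P ∩ Q) (n := i - (k - z)) (by omega)
  obtain ⟨b, hbS, hbC⟩ := exists_subset_card_eq (s := P \ Q) (n := i - (i - (k - z))) (by omega)
  obtain ⟨c, hcS, hcC⟩ := exists_subset_card_eq (s := Q \ P) (n := i - (i - (k - z))) (by omega)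
  obtain ⟨d, hdS, hdC⟩ := exists_subset_card_eq (s := (univ : Finset (Fin v)) \ (P ∪ Q))
      (n := k - 2 * i + (i - (k - z))) (by omega)
  -- membership facts
  have haP : ∀ x ∈ a, x ∈ P := fun x hx => (mem_inter.1 (haS hx)).1
  have haQ : ∀ x ∈ a, x ∈ Q := fun x hx => (mem_inter.1 (haS hx)).2
  have hbP : ∀ x ∈ b, x ∈ P := fun x hx => (mem_sdiff.1 (hbS hx)).1
  have hbQ : ∀ x ∈ b, x ∉ Q := fun x hx => (mem_sdiff.1 (hbS hx)).2
  have hcQ : ∀ x ∈ c, x ∈ Q := fun x hx => (mem_sdiff.1 (hcS hx)).1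
  have hcP : ∀ x ∈ c, x ∉ P := fun x hx => (mem_sdiff.1 (hcS hx)).2
  have hdPQ : ∀ x ∈ d, x ∉ P ∪ Q := fun x hx => (mem_sdiff.1 (hdS hx)).2
  have hdP : ∀ x ∈ d, x ∉ P := fun x hx h => hdPQ x hx (mem_union_left _ h)
  have hdQ : ∀ x ∈ d, x ∉ Q := fun x hx h => hdPQ x hx (mem_union_right _ h)
  refine ⟨a ∪ b ∪ c ∪ d, ?_, ?_, ?_⟩
  · have d1 : Disjoint a b := disjoint_left.2 fun x hx hx' => hbQ x hx' (haQ x hx)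
    have d2 : Disjoint (a ∪ b) c := disjoint_left.2 fun x hx hx' => by
      rcases mem_union.1 hx with h | h
      · exact hcP x hx' (haP x h)
      · exact hcP x hx' (hbP x h)
    have d3 : Disjoint (a ∪ b ∪ c) d := disjoint_left.2 fun x hx hx' => by
      rcases mem_union.1 hx with h | h
      · rcases mem_union.1 h with h' | h'
        · exact hdP x hx' (haP x h')
        · exact hdP x hx' (hbP x h')
      · exact hdQ x hx' (hcQ x h)
    rw [card_union_of_disjoint d3, card_union_of_disjoint d2, card_union_of_disjoint d1,
      haC, hbC, hcC, hdC]
    omega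
  · have hRP : (a ∪ b ∪ c ∪ d) ∩ P = a ∪ b := by
      ext x
      simp only [mem_inter, mem_union]
      constructor
      · rintro ⟨h1, h2⟩
        rcases h1 with ((h | h) | h) | h
        · exact Or.inl h
        · exact Or.inr h
        · exact absurd h2 (hcP x h)
        · exact absurd h2 (hdP x h)
      · rintro (h | h)
        · exact ⟨Or.inl (Or.inl (Or.inl h)), haP x h⟩
        · exact ⟨Or.inl (Or.inl (Or.inr h)), hbP x h⟩
    rw [hRP, card_union_of_disjoint (disjoint_left.2 fun x hx hx' => hbQ x hx' (haQ x hx)),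
      haC, hbC]
    omega
  · have hRQ : (a ∪ b ∪ c ∪ d) ∩ Q = a ∪ c := by
      ext x
      simp only [mem_inter, mem_union]
      constructor
      · rintro ⟨h1, h2⟩
        rcases h1 with ((h | h) | h) | h
        · exact Or.inl h
        · exact absurd h2 (hbQ x h)
        · exact Or.inr h
        · exact absurd h2 (hdQ x h)
      · rintro (h | h)
        · exact ⟨Or.inl (Or.inl (Or.inl h)), haQ x h⟩
        · exact ⟨Or.inl (Or.inr h), hcQ x h⟩
    rw [hRQ, card_union_of_disjoint (disjoint_left.2 fun x hx hx' => hcP x hx' (haP x hx)),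
      haC, hcC]
    omega


lemma adj_of_inter (v k i : ℕ) (hik : i < k) (A R : {A : Finset (Fin v) // A.card = k})
    (h : (R.1 ∩ A.1).card = i) : (genJohnsonGraph v k i).Adj A R := by
  constructor
  · rintro rfl
    rw [inter_self, A.2] at h
    omega
  · rwa [inter_comm]

lemma exists_walk (v k i : ℕ) (hik : i < k) (h2k : 2 * k ≤ v)
    (hΔk : v - 2 * k + 2 * i + i < k) :
    ∀ (m : ℕ) (A B : {A : Finset (Fin v) // A.card = k}),
      k ≤ (A.1 ∩ B.1).card + m * (v - 2 * k + 2 * i) →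
      ∃ w : (genJohnsonGraph v k i).Walk A B, w.length = 2 * m := by
  intro m
  induction m with
  | zero =>
    intro A B hAB
    have hx : (A.1 ∩ B.1).card = k := by
      have h : A.1 ∩ B.1 ⊆ A.1 := inter_subset_left
      have h2 := card_le_card h
      rw [A.2] at h2
      omega
    have hsub : A.1 ⊆ B.1 := by
      have h1 : A.1 ∩ B.1 = A.1 :=
        eq_of_subset_of_card_le inter_subset_left (by rw [hx, A.2])
      rw [← h1]; exact inter_subset_right
    have : A = B := Subtype.ext (eq_of_subset_of_card_le hsub (by rw [A.2, B.2]))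
    subst this
    exact ⟨SimpleGraph.Walk.nil, rfl⟩
  | succ m ih =>
    intro A B hAB
    set Δ := v - 2 * k + 2 * i with hΔdef
    set x := (A.1 ∩ B.1).card with hxdef
    have hxk : x ≤ k := by
      have h : A.1 ∩ B.1 ⊆ A.1 := inter_subset_left
      have h2 := card_le_card h
      rw [A.2] at h2
      omega
    by_cases hxeq : x = k
    · -- prepend a closed 2-walk at A
      obtain ⟨w', hw'⟩ := ih A B (by omega)
      obtain ⟨R, hRc, hRA, -⟩ := exists_common_nbr_s16 v k i hik h2k hΔk A.1 A.1 A.2 A.2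
        (by rw [inter_self]; omega)
      let Rv : {A : Finset (Fin v) // A.card = k} := ⟨R, hRc⟩
      have h1 : (genJohnsonGraph v k i).Adj A Rv := adj_of_inter v k i hik A Rv hRA
      refine ⟨SimpleGraph.Walk.cons h1 (SimpleGraph.Walk.cons h1.symm w'), ?_⟩
      simp only [SimpleGraph.Walk.length_cons, hw']
      omega
    · -- build B' closer to A
      have hBA : (B.1 \ A.1).card + x = k := by
        have := card_sdiff_add_card_inter B.1 A.1
        rw [inter_comm, ← hxdef] at this
        omega
      have hAB' : (A.1 \ B.1).card + x = k := by
        have := card_sdiff_add_card_inter A.1 B.1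
        rw [← hxdef] at this
        omega
      set δ := min Δ (k - x) with hδdef
      obtain ⟨T, hTS, hTC⟩ := exists_subset_card_eq (s := B.1 \ A.1) (n := δ) (by omega)
      obtain ⟨U, hUS, hUC⟩ := exists_subset_card_eq (s := A.1 \ B.1) (n := δ) (by omega)
      have hTB : T ⊆ B.1 := hTS.trans sdiff_subset
      have hdisj : Disjoint (B.1 \ T) U := by
        refine disjoint_left.2 fun y hy hy' => ?_
        exact (mem_sdiff.1 (hUS hy')).2 (mem_sdiff.1 hy).1
      have hB'c : ((B.1 \ T) ∪ U).card = k := by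
        rw [card_union_of_disjoint hdisj, card_sdiff_of_subset hTB, hUC, hTC, B.2]
        omega
      set B' : {A : Finset (Fin v) // A.card = k} := ⟨(B.1 \ T) ∪ U, hB'c⟩ with hB'def
      have hAB'x : (A.1 ∩ B'.1).card = x + δ := by
        have he : A.1 ∩ ((B.1 \ T) ∪ U) = (A.1 ∩ B.1) ∪ U := by
          ext y
          simp only [mem_inter, mem_union, mem_sdiff]
          constructor
          · rintro ⟨hA, (⟨hB, -⟩ | hU)⟩
            · exact Or.inl ⟨hA, hB⟩
            · exact Or.inr hU
          · rintro (⟨hA, hB⟩ | hU)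
            · refine ⟨hA, Or.inl ⟨hB, fun hT => ?_⟩⟩
              exact (mem_sdiff.1 (hTS hT)).2 hA
            · have := mem_sdiff.1 (hUS hU)
              exact ⟨this.1, Or.inr hU⟩
        have hd2 : Disjoint (A.1 ∩ B.1) U := by
          refine disjoint_left.2 fun y hy hy' => ?_
          exact (mem_sdiff.1 (hUS hy')).2 (mem_inter.1 hy).2
        show (A.1 ∩ ((B.1 \ T) ∪ U)).card = x + δ
        rw [he, card_union_of_disjoint hd2, ← hxdef, hUC]
      have hmul : (m + 1) * Δ = m * Δ + Δ := by ring
      obtain ⟨w', hw'⟩ := ih A B' (by rw [hAB'x]; omega)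
      -- two more steps from B' to B
      obtain ⟨R, hRc, hRB', hRB⟩ := exists_common_nbr_s16 v k i hik h2k hΔk B'.1 B.1 B'.2 B.2
        (by
          have hsub : B.1 \ T ⊆ B'.1 ∩ B.1 := by
            intro y hy
            exact mem_inter.2 ⟨mem_union_left _ hy, (mem_sdiff.1 hy).1⟩
          have := card_le_card hsub
          rw [card_sdiff_of_subset hTB, hTC, B.2] at this
          omega)
      let Rv : {A : Finset (Fin v) // A.card = k} := ⟨R, hRc⟩
      have h1 : (genJohnsonGraph v k i).Adj B' Rv := adj_of_inter v k i hik B' Rv hRB'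
      have h2 : (genJohnsonGraph v k i).Adj Rv B := ((adj_of_inter v k i hik B Rv hRB)).symm
      refine ⟨w'.append (SimpleGraph.Walk.cons h1 (SimpleGraph.Walk.cons h2 SimpleGraph.Walk.nil)), ?_⟩
      simp only [SimpleGraph.Walk.length_append, SimpleGraph.Walk.length_cons,
        SimpleGraph.Walk.length_nil, hw']
      omega

lemma walk_bound (v k i : ℕ) (h2k : 2 * k ≤ v) :
    ∀ {D C : {A : Finset (Fin v) // A.card = k}}
      (w : (genJohnsonGraph v k i).Walk D C),
      (∀ t, w.length = 2 * t →
        (k : ℤ) ≤ ((D.1 ∩ C.1).card : ℤ) + t * ((v - 2 * k + 2 * i : ℕ) : ℤ)) ∧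
      (∀ t, w.length = 2 * t + 1 →
        ((D.1 ∩ C.1).card : ℤ) ≤ (i : ℤ) + t * ((v - 2 * k + 2 * i : ℕ) : ℤ)) := by
  intro D C w
  induction w with
  | nil =>
    rename_i D
    constructor
    · intro t ht
      simp only [SimpleGraph.Walk.length_nil] at ht
      have ht0 : t = 0 := by omega
      subst ht0
      rw [inter_self, D.2]
      simp
    · intro t ht
      simp only [SimpleGraph.Walk.length_nil] at ht
      omega
  | cons h w ih =>
    rename_i D P C
    have hDP : (D.1 ∩ P.1).card = i := h.2
    -- region cards
    have hDsd : (D.1 \ P.1).card + i = k := by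
      have h1 := card_sdiff_add_card_inter D.1 P.1
      rw [hDP, D.2] at h1
      omega
    have hCP : (C.1 \ P.1).card + (P.1 ∩ C.1).card = k := by
      have h1 := card_sdiff_add_card_inter C.1 P.1
      rw [inter_comm, C.2] at h1
      omega
    have hOut : (((univ : Finset (Fin v)) \ P.1) \ D.1).card + (D.1 \ P.1).card = v - k := by
      have h1 := card_sdiff_add_card_inter ((univ : Finset (Fin v)) \ P.1) D.1
      have h2 : ((univ : Finset (Fin v)) \ P.1).card = v - k := by
        rw [card_sdiff_of_subset (subset_univ _), card_univ, Fintype.card_fin, P.2]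
      have h3 : ((univ : Finset (Fin v)) \ P.1) ∩ D.1 = D.1 \ P.1 := by
        ext y; simp only [mem_inter, mem_sdiff, mem_univ, true_and]; tauto
      rw [h2, h3] at h1
      omega
    constructor
    · intro t ht
      simp only [SimpleGraph.Walk.length_cons] at ht
      obtain ⟨t', rfl⟩ : ∃ t', t = t' + 1 := ⟨t - 1, by omega⟩
      have hlen : w.length = 2 * t' + 1 := by omega
      have hPC := ih.2 t' hlen
      -- C \ P ⊆ (D ∩ C) ∪ ((univ \ P) \ D)
      have hsub : C.1 \ P.1 ⊆ (D.1 ∩ C.1) ∪ (((univ : Finset (Fin v)) \ P.1) \ D.1) := by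
        intro y hy
        simp only [mem_sdiff] at hy
        by_cases hyD : y ∈ D.1
        · exact mem_union_left _ (mem_inter.2 ⟨hyD, hy.1⟩)
        · exact mem_union_right _ (by simp [mem_sdiff, hy.2, hyD])
      have hcard := (card_le_card hsub).trans (card_union_le _ _)
      have hΔ : ((v - 2 * k + 2 * i : ℕ) : ℤ) = (v : ℤ) - 2 * k + 2 * i := by omega
      have hc : ((t' + 1 : ℕ) : ℤ) = (t' : ℤ) + 1 := by push_cast; ring
      rw [hc]
      have e1 : ((C.1 \ P.1).card : ℤ) + ((P.1 ∩ C.1).card : ℤ) = k := by exact_mod_cast hCP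
      have e2 : ((((univ : Finset (Fin v)) \ P.1) \ D.1).card : ℤ) + ((D.1 \ P.1).card : ℤ)
          = (v : ℤ) - k := by
        have : ((v - k : ℕ) : ℤ) = (v : ℤ) - k := by omega
        omega
      have e3 : ((D.1 \ P.1).card : ℤ) + i = k := by exact_mod_cast hDsd
      have e4 : ((C.1 \ P.1).card : ℤ) ≤ ((D.1 ∩ C.1).card : ℤ)
          + ((((univ : Finset (Fin v)) \ P.1) \ D.1).card : ℤ) := by exact_mod_cast hcard
      linarith [hPC, e1, e2, e3, e4, hΔ]
    · intro t ht
      simp only [SimpleGraph.Walk.length_cons] at ht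
      have hlen : w.length = 2 * t := by omega
      have hPC := ih.1 t hlen
      have hsub : D.1 ∩ C.1 ⊆ (D.1 ∩ P.1) ∪ (C.1 \ P.1) := by
        intro y hy
        simp only [mem_inter] at hy
        by_cases hyP : y ∈ P.1
        · exact mem_union_left _ (mem_inter.2 ⟨hy.1, hyP⟩)
        · exact mem_union_right _ (mem_sdiff.2 ⟨hy.2, hyP⟩)
      have hcard := (card_le_card hsub).trans (card_union_le _ _)
      have e1 : ((C.1 \ P.1).card : ℤ) + ((P.1 ∩ C.1).card : ℤ) = k := by exact_mod_cast hCP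
      have e4 : ((D.1 ∩ C.1).card : ℤ) ≤ (i : ℤ) + ((C.1 \ P.1).card : ℤ) := by
        rw [← hDP]; exact_mod_cast hcard
      linarith [hPC, e1, e4]


/-- Assume `J(v,k,i)` has girth 4 and let `r = ⌈(k-i)/Δ⌉`. If `r` is even and
`x = |A ∩ B| ∈ {⌊(k+i)/2⌋, ⌈(k+i)/2⌉}`, then `dist(A,B) = r`. -/
theorem dist_eq_r_even (v k i : ℕ) (hik : i < k) (hkv : k < v)
    (h2k : 2 * k ≤ v) (hexc : ¬(v = 2 * k ∧ i = 0))
    (hg : (genJohnsonGraph v k i).girth = 4)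
    (hr : Even ((k - i) ⌈/⌉ (v - 2 * k + 2 * i)))
    (A B : {A : Finset (Fin v) // A.card = k})
    (hx : (A.1 ∩ B.1).card = (k + i) / 2 ∨
          (A.1 ∩ B.1).card = (k + i) ⌈/⌉ 2) :
    (genJohnsonGraph v k i).dist A B = (k - i) ⌈/⌉ (v - 2 * k + 2 * i) := by
  have hΔ1 : 1 ≤ v - 2 * k + 2 * i := by
    rcases Nat.lt_or_ge 0 (v - 2 * k + 2 * i) with h | h
    · omega
    · exact absurd ⟨by omega, by omega⟩ hexc
  have hΔpos : 0 < v - 2 * k + 2 * i := hΔ1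
  have hub : k - i ≤ (v - 2 * k + 2 * i) * ((k - i) ⌈/⌉ (v - 2 * k + 2 * i)) :=
    (ceilDiv_le_iff_le_mul hΔpos).1 le_rfl
  obtain ⟨m, hm⟩ := hr
  have hmpos : 0 < m := by
    rcases Nat.eq_zero_or_pos m with h | h
    · rw [h] at hm
      rw [hm, Nat.mul_zero] at hub
      omega
    · exact h
  obtain ⟨m', rfl⟩ : ∃ m', m = m' + 1 := ⟨m - 1, by omega⟩
  have hΔk : v - 2 * k + 2 * i + i < k := by
    by_contra hcon
    push_neg at hcon
    have h1 : (k - i) ⌈/⌉ (v - 2 * k + 2 * i) ≤ 1 :=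
      (ceilDiv_le_iff_le_mul hΔpos).2 (by omega)
    omega
  have hlt : ¬ (k - i ≤ (v - 2 * k + 2 * i) * (2 * m' + 1)) := by
    intro hcon
    have h1 := (ceilDiv_le_iff_le_mul hΔpos).2 hcon
    omega
  rw [hm] at hub ⊢
  rw [Nat.ceilDiv_eq_add_pred_div] at hx
  set x := (A.1 ∩ B.1).card with hxdef
  -- key product facts
  have e1 : (v - 2 * k + 2 * i) * (m' + 1 + (m' + 1))
      = 2 * (m' * (v - 2 * k + 2 * i)) + 2 * (v - 2 * k + 2 * i) := by ring
  have e2 : (v - 2 * k + 2 * i) * (2 * m' + 1)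
      = 2 * (m' * (v - 2 * k + 2 * i)) + (v - 2 * k + 2 * i) := by ring
  rw [e1] at hub
  rw [e2] at hlt
  -- upper bound
  have hkx : k ≤ x + (m' + 1) * (v - 2 * k + 2 * i) := by
    have e3 : (m' + 1) * (v - 2 * k + 2 * i)
        = m' * (v - 2 * k + 2 * i) + (v - 2 * k + 2 * i) := by ring
    omega
  obtain ⟨w, hw⟩ := exists_walk v k i hik h2k hΔk (m' + 1) A B hkx
  have hle : (genJohnsonGraph v k i).dist A B ≤ 2 * (m' + 1) := by
    have h1 := SimpleGraph.dist_le w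
    omega
  have hreach : (genJohnsonGraph v k i).Reachable A B := ⟨w⟩
  obtain ⟨p, hp⟩ := hreach.exists_walk_length_eq_dist
  have hcastmul : ∀ s : ℕ, ((s : ℤ) * ((v - 2 * k + 2 * i : ℕ) : ℤ))
      = ((s * (v - 2 * k + 2 * i) : ℕ) : ℤ) := by
    intro s; push_cast; ring
  rcases Nat.even_or_odd ((genJohnsonGraph v k i).dist A B) with ⟨t, ht⟩ | ⟨t, ht⟩
  · -- even distance
    have hb := (walk_bound v k i h2k p).1 t (by omega)
    rw [hcastmul t] at hb
    rcases Nat.lt_or_ge t (m' + 1) with hcase | hcase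
    · -- t ≤ m' : contradiction
      exfalso
      have htm : t * (v - 2 * k + 2 * i) ≤ m' * (v - 2 * k + 2 * i) :=
        Nat.mul_le_mul_right _ (by omega)
      omega
    · -- t = m' + 1
      omega
  · -- odd distance
    exfalso
    have hb := (walk_bound v k i h2k p).2 t (by omega)
    rw [hcastmul t] at hb
    have htm : t * (v - 2 * k + 2 * i) ≤ m' * (v - 2 * k + 2 * i) :=
      Nat.mul_le_mul_right _ (by omega)
    omega
end

section
/- Assume the girth of X = J(v,k,i) equals 4. Then every odd cycle in X has length at least 2⌈(k − i)/Δ⌉ + 1; that is, og(X) ≥ 2⌈(k − i)/Δ⌉ + 1. -/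
/-- Key step: if `C ~ D ~ B` is a path of length 2 in `J(v,k,i)`, then `|C \ B| ≤ Δ`. -/
lemma sdiff_card_le_delta {v k i : ℕ} (h2k : 2 * k ≤ v)
    {C D B : Finset (Fin v)} (hC : C.card = k) (hD : D.card = k) (hB : B.card = k)
    (hCD : (C ∩ D).card = i) (hDB : (D ∩ B).card = i) :
    (C \ B).card ≤ v - 2 * k + 2 * i := by
  have hsub : C \ B ⊆ (Finset.univ \ (B ∪ D)) ∪ (C ∩ D) := by
    intro x hx
    simp only [Finset.mem_sdiff, Finset.mem_union, Finset.mem_inter, Finset.mem_univ,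
      true_and] at hx ⊢
    by_cases hxD : x ∈ D
    · exact Or.inr ⟨hx.1, hxD⟩
    · exact Or.inl (by tauto)
  have h1 : (C \ B).card ≤ (Finset.univ \ (B ∪ D)).card + (C ∩ D).card :=
    le_trans (Finset.card_le_card hsub) (Finset.card_union_le _ _)
  have hBD : (B ∪ D).card + (B ∩ D).card = B.card + D.card :=
    Finset.card_union_add_card_inter B D
  have hBDi : (B ∩ D).card = i := by rwa [Finset.inter_comm]
  have h2 : (Finset.univ \ (B ∪ D)).card = v - (B ∪ D).card := by
    rw [Finset.card_sdiff_of_subset (Finset.subset_univ _), Finset.card_univ, Fintype.card_fin]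
  have hle : (B ∪ D).card ≤ v := by
    have := Finset.card_le_card (Finset.subset_univ (B ∪ D))
    simpa [Finset.card_univ] using this
  omega

/-- If `J(v,k,i)` has girth 4, then every odd cycle has length at least
`2⌈(k-i)/Δ⌉ + 1`, i.e. `og(X) ≥ 2⌈(k-i)/Δ⌉ + 1`. -/
theorem odd_girth_lower_bound (v k i : ℕ) (hik : i < k) (hkv : k < v)
    (h2k : 2 * k ≤ v) (hexc : ¬(v = 2 * k ∧ i = 0))
    (hg : (genJohnsonGraph v k i).girth = 4) :
    ∀ (A : {A : Finset (Fin v) // A.card = k})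
      (c : (genJohnsonGraph v k i).Walk A A),
      c.IsCycle → Odd c.length →
        2 * ((k - i) ⌈/⌉ (v - 2 * k + 2 * i)) + 1 ≤ c.length := by
  intro A c hc hodd
  obtain ⟨m, hm⟩ := hodd
  set Δ := v - 2 * k + 2 * i with hΔ
  have hΔpos : 0 < Δ := by omega
  -- along the even part of the cycle, the intersection with A shrinks by at most Δ per 2 steps
  have key : ∀ j, 2 * j ≤ c.length - 1 →
      k ≤ (A.1 ∩ (c.getVert (2 * j)).1).card + j * Δ := by
    intro j
    induction j with
    | zero =>
      intro _
      simp [c.getVert_zero, Finset.inter_self, A.2]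
    | succ j ih =>
      intro hj
      have hj' : 2 * j ≤ c.length - 1 := by omega
      have h1 : 2 * j < c.length := by omega
      have h2 : 2 * j + 1 < c.length := by omega
      have e1 := c.adj_getVert_succ h1
      have e2 := c.adj_getVert_succ h2
      set C := c.getVert (2 * j) with hCdef
      set D := c.getVert (2 * j + 1)
      set B := c.getVert (2 * (j + 1)) with hBdef
      have hBeq : c.getVert (2 * j + 1 + 1) = B := by
        rw [hBdef]; ring_nf
      rw [hBeq] at e2
      have hstep : (C.1 \ B.1).card ≤ Δ :=
        sdiff_card_le_delta h2k C.2 D.2 B.2 e1.2 e2.2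
      have hmono : (A.1 ∩ C.1).card ≤ (A.1 ∩ B.1).card + (C.1 \ B.1).card := by
        refine le_trans (Finset.card_le_card ?_) (Finset.card_union_le _ _)
        intro x hx
        simp only [Finset.mem_inter, Finset.mem_union, Finset.mem_sdiff] at hx ⊢
        by_cases hxB : x ∈ B.1
        · exact Or.inl ⟨hx.1, hxB⟩
        · exact Or.inr ⟨hx.2, hxB⟩
      have := ih hj'
      have : k ≤ (A.1 ∩ B.1).card + (C.1 \ B.1).card + j * Δ := by omega
      calc k ≤ (A.1 ∩ B.1).card + (C.1 \ B.1).card + j * Δ := this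
        _ ≤ (A.1 ∩ B.1).card + Δ + j * Δ := by omega
        _ = (A.1 ∩ B.1).card + (j + 1) * Δ := by ring
  -- apply at j = m; the last vertex is adjacent to A
  have hlen : c.length = 2 * m + 1 := by omega
  have hkey := key m (by omega)
  have hlast : 2 * m < c.length := by omega
  have elast := c.adj_getVert_succ hlast
  have hend : c.getVert (2 * m + 1) = A := by
    rw [← hlen, c.getVert_length]
  rw [hend] at elast
  have hint : ((c.getVert (2 * m)).1 ∩ A.1).card = i := elast.2
  rw [Finset.inter_comm] at hint
  rw [hint] at hkey
  have hceil : (k - i) ⌈/⌉ Δ ≤ m := by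
    rw [ceilDiv_le_iff_le_smul hΔpos, smul_eq_mul, mul_comm]
    have : k - i ≤ m * Δ := by omega
    omega
  omega
end
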